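/- arXiv:2212.02012 — 12 statements merged into one kernel-verified Lean document; each statement's English description precedes it below -/
import Mathlib

section
/- There exist bounded linear operators A and B on the complex Hilbert space ℓ²(ℕ, ℂ) such that A and B are both normal (A*A = AA* and B*B = BB*), the ranges R(A) and R(B) are closed, but the range R(AB) of the product AB is not closed. -/
noncomputable section

open scoped InnerProductSpace ENNReal

namespace Stmt0Aux

abbrev H : Type := lp (fun _ : ℕ => ℂ) 2

/-- Evaluation at coordinate `k`, as a continuous linear functional. -/
def ev (k : ℕ) : H →L[ℂ] ℂ :=
  LinearMap.mkContinuous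
    { toFun := fun x => x k
      map_add' := fun x y => by simp [lp.coeFn_add]
      map_smul' := fun c x => by simp [lp.coeFn_smul] }
    1 (fun x => by
      show ‖x k‖ ≤ 1 * ‖x‖; simpa using lp.norm_apply_le_norm (by norm_num : (2 : ℝ≥0∞) ≠ 0) x k)

@[simp] lemma ev_apply (k : ℕ) (x : H) : ev k x = x k := rfl

/-- The closed subspace of sequences vanishing on odd coordinates. -/
def KA : Submodule ℂ H where
  carrier := {x : H | ∀ n : ℕ, x (2 * n + 1) = 0}
  add_mem' := fun hx hy n => by simp [lp.coeFn_add, hx n, hy n]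
  zero_mem' := fun n => by simp
  smul_mem' := fun c x hx n => by simp [lp.coeFn_smul, hx n]

lemma mem_KA {x : H} : x ∈ KA ↔ ∀ n : ℕ, x (2 * n + 1) = 0 := Iff.rfl

lemma isClosed_KA : IsClosed (KA : Set H) := by
  have : (KA : Set H) = ⋂ n : ℕ, (ev (2 * n + 1)) ⁻¹' {0} := by
    ext x
    simp [Set.mem_iInter, mem_KA]
  rw [this]
  exact isClosed_iInter fun n => isClosed_singleton.preimage (ev _).continuous

instance : CompleteSpace KA := isClosed_KA.completeSpace_coe

/-- The vectors spanning the second subspace. -/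
def u (n : ℕ) : H := lp.single 2 (2 * n) 1 + lp.single 2 (2 * n + 1) (n : ℂ)

lemma u_apply (n k : ℕ) :
    u n k = (if k = 2 * n then (1 : ℂ) else 0) + (if k = 2 * n + 1 then (n : ℂ) else 0) := by
  simp [u, lp.coeFn_add, lp.single_apply, Pi.single_apply]

/-- The closed subspace spanned by the `u n`. -/
def KB : Submodule ℂ H := (Submodule.span ℂ (Set.range u)).topologicalClosure

lemma isClosed_KB : IsClosed (KB : Set H) := Submodule.isClosed_topologicalClosure _

instance : CompleteSpace KB := isClosed_KB.completeSpace_coe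

lemma u_mem_KB (n : ℕ) : u n ∈ KB :=
  Submodule.le_topologicalClosure _ (Submodule.subset_span ⟨n, rfl⟩)

lemma KB_rel {x : H} (hx : x ∈ KB) (n : ℕ) : x (2 * n + 1) = (n : ℂ) * x (2 * n) := by
  set f : H →L[ℂ] ℂ := ev (2 * n + 1) - (n : ℂ) • ev (2 * n) with hf
  have hker : KB ≤ LinearMap.ker (f : H →ₗ[ℂ] ℂ) := by
    apply Submodule.topologicalClosure_minimal
    · rw [Submodule.span_le]
      rintro _ ⟨m, rfl⟩
      simp only [SetLike.mem_coe, LinearMap.mem_ker, hf, ContinuousLinearMap.coe_coe, ContinuousLinearMap.coe_sub',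
        Pi.sub_apply, ContinuousLinearMap.coe_smul', Pi.smul_apply, ev_apply, smul_eq_mul]
      rw [u_apply, u_apply]
      rcases eq_or_ne m n with rfl | hmn
      · simp [(by omega : ¬ 2 * m + 1 = 2 * m)]
      · have h1 : ¬ 2 * n + 1 = 2 * m := by omega
        have h2 : ¬ n = m := fun h => hmn h.symm
        have h3 : ¬ 2 * n = 2 * m + 1 := by omega
        have h4 : ¬ 2 * n = 2 * m := by omega
        simp [h1, h2, h3, h4]
    · exact ContinuousLinearMap.isClosed_ker f
  have := hker hx
  simp only [LinearMap.mem_ker, hf, ContinuousLinearMap.coe_coe, ContinuousLinearMap.coe_sub', Pi.sub_apply,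
    ContinuousLinearMap.coe_smul', Pi.smul_apply, ev_apply, smul_eq_mul] at this
  linear_combination this

lemma memℓp_ite (x : H) : Memℓp (fun k => if Even k then x k else 0) 2 := by
  apply memℓp_gen
  have hx : Summable fun k => ‖x k‖ ^ (2 : ℝ≥0∞).toReal := (lp.memℓp x).summable (by norm_num)
  refine hx.of_nonneg_of_le (fun k => ?_) (fun k => ?_)
  · positivity
  · by_cases h : Even k
    · simp [h]
    · simp only [h, if_false, norm_zero]
      rw [Real.zero_rpow (by norm_num)]
      positivity

/-- Truncation to even coordinates, as an element of `lp`. -/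
def trunc (x : H) : H := ⟨fun k => if Even k then x k else 0, memℓp_ite x⟩

lemma trunc_apply (x : H) (k : ℕ) : trunc x k = if Even k then x k else 0 := rfl

lemma trunc_mem_KA (x : H) : trunc x ∈ KA := by
  intro n
  rw [trunc_apply]
  simp [Nat.even_add_one, Nat.even_mul]

lemma projKA_eq (x : H) : ((KA.orthogonalProjectionOnto x : KA) : H) = trunc x := by
  apply Submodule.eq_starProjection_of_mem_of_inner_eq_zero (trunc_mem_KA x)
  intro w hw
  rw [lp.inner_eq_tsum]
  have : ∀ k, ⟪(x - trunc x) k, w k⟫_ℂ = 0 := by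
    intro k
    rcases Nat.even_or_odd k with hk | hk
    · have hz : (x - trunc x) k = 0 := by
        rw [lp.coeFn_sub]; simp [trunc_apply, hk]
      rw [hz, inner_zero_left]
    · obtain ⟨n, rfl⟩ := hk
      have hz : w (2 * n + 1) = 0 := hw n
      rw [hz, inner_zero_right]
  simp only [this, tsum_zero]

/-- Projection onto the even-coordinate subspace, as an operator on `H`. -/
def Aop : H →L[ℂ] H := KA.subtypeL ∘L KA.orthogonalProjectionOnto

/-- Projection onto `KB`, as an operator on `H`. -/
def Bop : H →L[ℂ] H := KB.subtypeL ∘L KB.orthogonalProjectionOnto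

lemma Aop_apply (x : H) : Aop x = trunc x := projKA_eq x

lemma range_proj (K : Submodule ℂ H) [CompleteSpace K] :
    Set.range (K.subtypeL ∘L K.orthogonalProjectionOnto) = (K : Set H) := by
  ext x
  constructor
  · rintro ⟨y, rfl⟩
    exact (K.orthogonalProjectionOnto y).2
  · intro hx
    exact ⟨x, Submodule.starProjection_eq_self_iff.2 hx⟩

lemma Aop_u (n : ℕ) : Aop (u n) = lp.single 2 (2 * n) 1 := by
  rw [Aop_apply]
  apply lp.ext
  funext k
  rw [trunc_apply, u_apply, lp.single_apply]
  rcases eq_or_ne k (2 * n) with rfl | hk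
  · simp [even_two_mul, Nat.even_mul, (by omega : ¬ 2 * n = 2 * n + 1)]
  · rcases eq_or_ne k (2 * n + 1) with rfl | hk2
    · simp [hk, Nat.even_add_one, Nat.even_mul]
    · simp [hk, hk2]

/-- The target sequence `y`. -/
def yf : ℕ → ℂ := fun k => if Even k then 1 / ((k : ℂ) / 2 + 1) else 0

lemma yf_even (n : ℕ) : yf (2 * n) = 1 / ((n : ℂ) + 1) := by
  rw [yf]
  simp only [even_two_mul, if_true, Nat.cast_mul, Nat.cast_ofNat]
  congr 1
  push_cast
  ring

lemma norm_yf_le (k : ℕ) : ‖yf k‖ ≤ 2 / ((k : ℝ) + 1) := by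
  rw [yf]
  by_cases h : Even k
  · simp only [h, if_true]
    have : ((k : ℂ) / 2 + 1) = (((k : ℝ) / 2 + 1 : ℝ) : ℂ) := by push_cast; ring
    rw [this, norm_div, norm_one, Complex.norm_real, Real.norm_eq_abs,
      abs_of_pos (by positivity)]
    rw [div_le_div_iff₀ (by positivity) (by positivity)]
    nlinarith [Nat.cast_nonneg (α := ℝ) k]
  · simp only [h, if_false, norm_zero]
    positivity

lemma memℓp_yf : Memℓp yf 2 := by
  apply memℓp_gen
  have hbase : Summable (fun k : ℕ => 1 / ((k : ℝ) + 1) ^ 2) := by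
    have h1 : Summable (fun n : ℕ => 1 / (n : ℝ) ^ 2) :=
      Real.summable_one_div_nat_pow.mpr one_lt_two
    have := (summable_nat_add_iff 1).mpr h1
    refine this.congr fun k => ?_
    push_cast
    ring
  have hs : Summable (fun k : ℕ => 4 * (1 / ((k : ℝ) + 1) ^ 2)) := hbase.mul_left 4
  refine hs.of_nonneg_of_le (fun k => ?_) (fun k => ?_)
  · positivity
  · have h2 : (2 : ℝ≥0∞).toReal = ((2 : ℕ) : ℝ) := by norm_num
    rw [h2, Real.rpow_natCast]
    have hle := norm_yf_le k
    have h0 : (0 : ℝ) ≤ ‖yf k‖ := norm_nonneg _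
    calc ‖yf k‖ ^ (2 : ℕ) ≤ (2 / ((k : ℝ) + 1)) ^ (2 : ℕ) := by
          apply pow_le_pow_left₀ h0 hle
      _ = 4 * (1 / ((k : ℝ) + 1) ^ 2) := by
          field_simp
          ring
  
/-- The target element of `lp`. -/
def yH : H := ⟨yf, memℓp_yf⟩

lemma yH_apply (k : ℕ) : yH k = yf k := rfl

lemma single_mem_image (i : ℕ) : lp.single 2 i (yH i) ∈ Aop '' (KB : Set H) := by
  rcases Nat.even_or_odd i with hi | hi
  · obtain ⟨n, rfl⟩ := hi
    rw [← two_mul]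
    refine ⟨yf (2 * n) • u n, Submodule.smul_mem _ _ (u_mem_KB n), ?_⟩
    rw [map_smul, Aop_u, ← lp.single_smul]
    simp [yH_apply, smul_eq_mul]
  · obtain ⟨n, rfl⟩ := hi
    have hz : yH (2 * n + 1) = 0 := by
      rw [yH_apply, yf]
      simp [Nat.even_add_one, Nat.even_mul]
    rw [hz]
    refine ⟨0, Submodule.zero_mem _, ?_⟩
    rw [map_zero]
    apply lp.ext
    funext k
    simp [lp.single_apply]

lemma image_submodule :
    Aop '' (KB : Set H) = ((KB.map (Aop : H →ₗ[ℂ] H)) : Set H) := by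
  simp [Submodule.map_coe]

lemma yH_mem_closure : yH ∈ closure (Aop '' (KB : Set H)) := by
  have hsum : HasSum (fun i : ℕ => lp.single 2 i (yH i)) yH :=
    lp.hasSum_single (by norm_num) yH
  rw [image_submodule]
  refine mem_closure_of_tendsto hsum (Filter.Eventually.of_forall fun s => ?_)
  refine Submodule.sum_mem _ fun i _ => ?_
  have := single_mem_image i
  rw [image_submodule] at this
  exact this

lemma yH_not_mem : yH ∉ Aop '' (KB : Set H) := by
  rintro ⟨x, hxKB, hx⟩
  have hxeven : ∀ n : ℕ, x (2 * n) = 1 / ((n : ℂ) + 1) := by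
    intro n
    have h1 : Aop x (2 * n) = yH (2 * n) := by rw [hx]
    rw [Aop_apply, trunc_apply] at h1
    simp only [even_two_mul, if_true] at h1
    rw [h1, yH_apply, yf_even]
  have hxodd : ∀ n : ℕ, x (2 * n + 1) = (n : ℂ) / ((n : ℂ) + 1) := by
    intro n
    rw [KB_rel hxKB n, hxeven n]
    ring
  have hsumm : Summable fun k => ‖x k‖ ^ (2 : ℝ≥0∞).toReal := (lp.memℓp x).summable (by norm_num)
  have hinj : Function.Injective (fun n : ℕ => 2 * n + 1) := by
    intro a b hab
    simp only at hab
    omega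
  have hsub : Summable (fun n : ℕ => ‖x (2 * n + 1)‖ ^ (2 : ℝ≥0∞).toReal) :=
    hsumm.comp_injective hinj
  have hlow : ∀ n : ℕ, 1 ≤ n → (1 / 4 : ℝ) ≤ ‖x (2 * n + 1)‖ ^ (2 : ℝ≥0∞).toReal := by
    intro n hn
    have h2 : (2 : ℝ≥0∞).toReal = ((2 : ℕ) : ℝ) := by norm_num
    rw [h2, Real.rpow_natCast, hxodd n]
    have hnorm : ‖(n : ℂ) / ((n : ℂ) + 1)‖ = (n : ℝ) / ((n : ℝ) + 1) := by
      have h3 : ((n : ℂ) + 1) = (((n : ℝ) + 1 : ℝ) : ℂ) := by push_cast; ring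
      have h4 : ((n : ℂ)) = (((n : ℝ) : ℝ) : ℂ) := by push_cast; ring
      rw [h3, h4, ← Complex.ofReal_div, Complex.norm_real, Real.norm_eq_abs,
        abs_of_nonneg (by positivity)]
    rw [hnorm]
    have hn1 : (1 : ℝ) ≤ (n : ℝ) := by exact_mod_cast hn
    have hhalf : (1 / 2 : ℝ) ≤ (n : ℝ) / ((n : ℝ) + 1) := by
      rw [div_le_div_iff₀ (by norm_num) (by positivity)]
      linarith
    calc (1 / 4 : ℝ) = (1 / 2 : ℝ) ^ (2 : ℕ) := by norm_num
      _ ≤ ((n : ℝ) / ((n : ℝ) + 1)) ^ (2 : ℕ) := by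
          apply pow_le_pow_left₀ (by norm_num) hhalf
  have htend := hsub.tendsto_atTop_zero
  have hev : ∀ᶠ n : ℕ in Filter.atTop, ‖x (2 * n + 1)‖ ^ (2 : ℝ≥0∞).toReal < 1 / 4 :=
    htend.eventually (gt_mem_nhds (by norm_num : (0 : ℝ) < 1 / 4))
  obtain ⟨N, hN⟩ := hev.exists_forall_of_atTop
  have := hN (max N 1) (le_max_left _ _)
  have := hlow (max N 1) (le_max_right _ _)
  linarith

lemma adj_Aop : ContinuousLinearMap.adjoint Aop = Aop :=
  (isSelfAdjoint_starProjection KA).adjoint_eq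

lemma adj_Bop : ContinuousLinearMap.adjoint Bop = Bop :=
  (isSelfAdjoint_starProjection KB).adjoint_eq

lemma range_Aop : Set.range Aop = (KA : Set H) := range_proj KA

lemma range_Bop : Set.range Bop = (KB : Set H) := range_proj KB

end Stmt0Aux

open Stmt0Aux

/-- There exist bounded linear operators `A` and `B` on the complex Hilbert space
`ℓ²(ℕ, ℂ)` that are both normal and have closed range, but whose product `A ∘ B`
does not have closed range. -/
theorem stmt0 :
    ∃ A B : lp (fun _ : ℕ => ℂ) 2 →L[ℂ] lp (fun _ : ℕ => ℂ) 2,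
      ContinuousLinearMap.adjoint A ∘L A = A ∘L ContinuousLinearMap.adjoint A ∧
      ContinuousLinearMap.adjoint B ∘L B = B ∘L ContinuousLinearMap.adjoint B ∧
      IsClosed (Set.range A) ∧ IsClosed (Set.range B) ∧
      ¬ IsClosed (Set.range (A ∘L B)) := by
  refine ⟨Aop, Bop, ?_, ?_, ?_, ?_, ?_⟩
  · rw [adj_Aop]
  · rw [adj_Bop]
  · rw [range_Aop]; exact isClosed_KA
  · rw [range_Bop]; exact isClosed_KB
  · intro hclosed
    have hR : Set.range (Aop ∘L Bop) = Aop '' (KB : Set H) := by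
      rw [ContinuousLinearMap.coe_comp', Set.range_comp, range_Bop]
    rw [hR] at hclosed
    exact yH_not_mem (hclosed.closure_eq ▸ yH_mem_closure)
end
end

section
/- Let B be a bounded linear operator with closed range on a complex Hilbert space H, let H₂ be a closed subspace of H invariant under B, and let H₁ = H₂⊥. Let B' = P₁ ∘ B restricted to H₁ (an operator on H₁), Y = P₂ ∘ B restricted to H₁ (an operator from H₁ to H₂), and Z = B restricted to H₂ (an operator on H₂), where P₁ and P₂ are the orthogonal projections of H onto H₁ and H₂ respectively. Then the closure of R(B'*) is contained in R(B'*) + Y*(N(Z*)). Consequently, if Y*(N(Z*)) ⊆ R(B'*), then R(B'*) is closed, and hence R(B') is closed. -/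
open ContinuousLinearMap

local notation "⟪" x ", " y "⟫" => @inner ℂ _ _ x y

/-- Closed range theorem (one direction) for Hilbert spaces. -/
lemma closed_range_adjoint' {E F : Type*} [NormedAddCommGroup E] [InnerProductSpace ℂ E]
    [NormedAddCommGroup F] [InnerProductSpace ℂ F] [CompleteSpace E] [CompleteSpace F]
    (T : E →L[ℂ] F) (hT : IsClosed (Set.range T)) :
    IsClosed (Set.range (adjoint T)) := by
  set K := LinearMap.ker (T : E →ₗ[ℂ] F) with hKdef
  haveI : CompleteSpace K := T.isClosed_ker.completeSpace_coe
  have hRclosed : IsClosed ((LinearMap.range (T : E →ₗ[ℂ] F) : Submodule ℂ F) : Set F) := by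
    simpa [LinearMap.coe_range] using hT
  haveI : CompleteSpace (LinearMap.range (T : E →ₗ[ℂ] F)) := hRclosed.completeSpace_coe
  let S : Kᗮ →L[ℂ] (LinearMap.range (T : E →ₗ[ℂ] F)) :=
    (T.comp Kᗮ.subtypeL).codRestrict (LinearMap.range (T : E →ₗ[ℂ] F)) (fun x => ⟨x, rfl⟩)
  have hSapp : ∀ p : Kᗮ, ((S p : LinearMap.range (T : E →ₗ[ℂ] F)) : F) = T (p : E) := fun p => rfl
  have hinj : LinearMap.ker (S : Kᗮ →ₗ[ℂ] LinearMap.range (T : E →ₗ[ℂ] F)) = ⊥ := by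
    rw [Submodule.eq_bot_iff]
    intro p hp
    have h1 : T (p : E) = 0 := by
      have := congrArg (Subtype.val) (LinearMap.mem_ker.mp hp)
      simpa [hSapp] using this
    have h2 : (p : E) ∈ K := LinearMap.mem_ker.mpr h1
    have := (Submodule.disjoint_def.mp K.orthogonal_disjoint) (p : E) h2 p.2
    exact Subtype.ext this
  have hsurj : LinearMap.range (S : Kᗮ →ₗ[ℂ] LinearMap.range (T : E →ₗ[ℂ] F)) = ⊤ := by
    rw [Submodule.eq_top_iff']
    rintro ⟨r, e, rfl⟩
    obtain ⟨k, hk, p, hp, rfl⟩ := K.exists_add_mem_mem_orthogonal e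
    refine ⟨⟨p, hp⟩, ?_⟩
    apply Subtype.ext
    have hTk : T k = 0 := LinearMap.mem_ker.mp hk
    simp [hSapp, map_add, hTk]
  let eqv := ContinuousLinearEquiv.ofBijective S hinj hsurj
  let Sinv : (LinearMap.range (T : E →ₗ[ℂ] F)) →L[ℂ] Kᗮ := (eqv.symm : (LinearMap.range (T : E →ₗ[ℂ] F)) →L[ℂ] Kᗮ)
  have hsub : Set.range (adjoint T) = (Kᗮ : Set E) := by
    apply Set.Subset.antisymm
    · rintro _ ⟨y, rfl⟩
      rw [SetLike.mem_coe, Submodule.mem_orthogonal']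
      intro u hu
      rw [adjoint_inner_left]
      simp [show T u = 0 from LinearMap.mem_ker.mp hu]
    · intro x hx
      refine ⟨(LinearMap.range (T : E →ₗ[ℂ] F)).subtypeL (adjoint Sinv ⟨x, hx⟩), ?_⟩
      apply ext_inner_right ℂ
      intro v
      rw [adjoint_inner_left]
      obtain ⟨k, hk, p, hp, rfl⟩ := K.exists_add_mem_mem_orthogonal v
      have hTk : T k = 0 := LinearMap.mem_ker.mp hk
      have hTv : T (k + p) = ((S ⟨p, hp⟩ : LinearMap.range (T : E →ₗ[ℂ] F)) : F) := by
        simp [hSapp, map_add, hTk]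
      rw [hTv]
      have h1 : ⟪((LinearMap.range (T : E →ₗ[ℂ] F)).subtypeL (adjoint Sinv ⟨x, hx⟩) : F),
          ((S ⟨p, hp⟩ : LinearMap.range (T : E →ₗ[ℂ] F)) : F)⟫ = ⟪adjoint Sinv ⟨x, hx⟩, S ⟨p, hp⟩⟫ :=
        (Submodule.coe_inner _ _ _).symm
      rw [h1, adjoint_inner_left]
      have h2 : Sinv (S ⟨p, hp⟩) = ⟨p, hp⟩ :=
        ContinuousLinearEquiv.ofBijective_symm_apply_apply S hinj hsurj _
      rw [h2]
      have h3 : ⟪(⟨x, hx⟩ : Kᗮ), (⟨p, hp⟩ : Kᗮ)⟫ = ⟪x, p⟫ := Submodule.coe_inner _ _ _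
      rw [h3, inner_add_right]
      have h4 : ⟪x, k⟫ = 0 := Submodule.inner_left_of_mem_orthogonal hk hx
      rw [h4, zero_add]
  rw [hsub]
  exact K.isClosed_orthogonal

lemma adjB_coe_orth {H : Type*} [NormedAddCommGroup H] [InnerProductSpace ℂ H] [CompleteSpace H]
    (B : H →L[ℂ] H) (H₂ : Submodule ℂ H) [CompleteSpace H₂]
    (hinv : ∀ x ∈ H₂, B x ∈ H₂)
    (B' : H₂ᗮ →L[ℂ] H₂ᗮ) (Y : H₂ᗮ →L[ℂ] H₂)
    (hB'Y : ∀ x : H₂ᗮ, B x = (B' x : H) + (Y x : H)) (u : H₂ᗮ) : adjoint B (u : H) = ((adjoint B' u : H₂ᗮ) : H) := by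
  apply ext_inner_right ℂ
  intro w
  rw [adjoint_inner_left]
  obtain ⟨y, hy, z, hz, rfl⟩ := H₂.exists_add_mem_mem_orthogonal w
  rw [map_add, inner_add_right, inner_add_right]
  have h1 : ⟪(u : H), B y⟫ = 0 :=
    Submodule.inner_left_of_mem_orthogonal (hinv y hy) u.2
  have h2 : ⟪((adjoint B' u : H₂ᗮ) : H), y⟫ = 0 :=
    Submodule.inner_left_of_mem_orthogonal hy (adjoint B' u).2
  rw [h1, h2, zero_add, zero_add]
  have hzz : B z = ((B' ⟨z, hz⟩ : H₂ᗮ) : H) + ((Y ⟨z, hz⟩ : H₂) : H) := hB'Y ⟨z, hz⟩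
  rw [hzz, inner_add_right]
  have h3 : ⟪(u : H), ((Y ⟨z, hz⟩ : H₂) : H)⟫ = 0 :=
    Submodule.inner_left_of_mem_orthogonal (Y ⟨z, hz⟩).2 u.2
  rw [h3, add_zero]
  have h4 : ⟪((adjoint B' u : H₂ᗮ) : H), z⟫ = ⟪adjoint B' u, (⟨z, hz⟩ : H₂ᗮ)⟫ :=
    (Submodule.coe_inner _ (adjoint B' u) ⟨z, hz⟩).symm
  have h5 : ⟪(u : H), ((B' ⟨z, hz⟩ : H₂ᗮ) : H)⟫ = ⟪u, B' ⟨z, hz⟩⟫ :=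
    (Submodule.coe_inner _ _ _).symm
  rw [h4, h5, adjoint_inner_left]

lemma adjB_coe_sub {H : Type*} [NormedAddCommGroup H] [InnerProductSpace ℂ H] [CompleteSpace H]
    (B : H →L[ℂ] H) (H₂ : Submodule ℂ H) [CompleteSpace H₂]
    (B' : H₂ᗮ →L[ℂ] H₂ᗮ) (Y : H₂ᗮ →L[ℂ] H₂) (Z : H₂ →L[ℂ] H₂)
    (hB'Y : ∀ x : H₂ᗮ, B x = (B' x : H) + (Y x : H))
    (hZ : ∀ x : H₂, (Z x : H) = B x) (v : H₂) : adjoint B (v : H) = ((adjoint Y v : H₂ᗮ) : H) + ((adjoint Z v : H₂) : H) := by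
  apply ext_inner_right ℂ
  intro w
  rw [adjoint_inner_left]
  obtain ⟨y, hy, z, hz, rfl⟩ := H₂.exists_add_mem_mem_orthogonal w
  rw [map_add, inner_add_right, inner_add_left, inner_add_right, inner_add_right]
  have hBy : B y = ((Z ⟨y, hy⟩ : H₂) : H) := (hZ ⟨y, hy⟩).symm
  have hBz : B z = ((B' ⟨z, hz⟩ : H₂ᗮ) : H) + ((Y ⟨z, hz⟩ : H₂) : H) := hB'Y ⟨z, hz⟩
  rw [hBy, hBz, inner_add_right]
  have e1 : ⟪(v : H), ((Z ⟨y, hy⟩ : H₂) : H)⟫ = ⟪v, Z ⟨y, hy⟩⟫ := (Submodule.coe_inner _ _ _).symm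
  have e2 : ⟪(v : H), ((B' ⟨z, hz⟩ : H₂ᗮ) : H)⟫ = 0 :=
    Submodule.inner_right_of_mem_orthogonal v.2 (B' ⟨z, hz⟩).2
  have e3 : ⟪(v : H), ((Y ⟨z, hz⟩ : H₂) : H)⟫ = ⟪v, Y ⟨z, hz⟩⟫ := (Submodule.coe_inner _ _ _).symm
  have f1 : ⟪((adjoint Y v : H₂ᗮ) : H), y⟫ = 0 :=
    Submodule.inner_left_of_mem_orthogonal hy (adjoint Y v).2
  have f2 : ⟪((adjoint Y v : H₂ᗮ) : H), z⟫ = ⟪adjoint Y v, (⟨z, hz⟩ : H₂ᗮ)⟫ :=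
    (Submodule.coe_inner _ (adjoint Y v) ⟨z, hz⟩).symm
  have f3 : ⟪((adjoint Z v : H₂) : H), y⟫ = ⟪adjoint Z v, (⟨y, hy⟩ : H₂)⟫ :=
    (Submodule.coe_inner _ (adjoint Z v) ⟨y, hy⟩).symm
  have f4 : ⟪((adjoint Z v : H₂) : H), z⟫ = 0 :=
    Submodule.inner_right_of_mem_orthogonal (adjoint Z v).2 hz
  rw [e1, e2, e3, f1, f2, f3, f4, adjoint_inner_left, adjoint_inner_left]
  ring




set_option maxHeartbeats 1000000 in
/-- Lemma 2.2(a): Let `B` be a bounded operator with closed range on a complex Hilbert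
space `H`, let `H₂` be a closed subspace invariant under `B`, and with respect to
`H = H₂ᗮ ⊕ H₂` let `B'`, `Y`, `Z` be the block entries of `B` (so for `x ∈ H₂ᗮ`,
`B x = B' x + Y x` with `B' x ∈ H₂ᗮ`, `Y x ∈ H₂`, and `Z = B|_{H₂}`).  Then the
closure of `R(B'*)` is contained in `R(B'*) + Y*(N(Z*))`; consequently, if
`Y*(N(Z*)) ⊆ R(B'*)`, then `R(B'*)` is closed and hence `R(B')` is closed. -/
theorem stmt2 {H : Type*} [NormedAddCommGroup H] [InnerProductSpace ℂ H] [CompleteSpace H]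
    (B : H →L[ℂ] H) (hBran : IsClosed (Set.range B))
    (H₂ : Submodule ℂ H) (hH₂ : IsClosed (H₂ : Set H)) [CompleteSpace H₂]
    (hinv : ∀ x ∈ H₂, B x ∈ H₂)
    (B' : H₂ᗮ →L[ℂ] H₂ᗮ) (Y : H₂ᗮ →L[ℂ] H₂) (Z : H₂ →L[ℂ] H₂)
    (hB'Y : ∀ x : H₂ᗮ, B x = (B' x : H) + (Y x : H))
    (hZ : ∀ x : H₂, (Z x : H) = B x) :
    (∀ x ∈ closure (Set.range (ContinuousLinearMap.adjoint B')),
        ∃ u v, v ∈ LinearMap.ker (ContinuousLinearMap.adjoint Z : H₂ →ₗ[ℂ] H₂) ∧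
          x = ContinuousLinearMap.adjoint B' u + ContinuousLinearMap.adjoint Y v) ∧
    ((∀ v ∈ LinearMap.ker (ContinuousLinearMap.adjoint Z : H₂ →ₗ[ℂ] H₂),
        ContinuousLinearMap.adjoint Y v ∈ LinearMap.range (ContinuousLinearMap.adjoint B' : H₂ᗮ →ₗ[ℂ] H₂ᗮ)) →
      IsClosed (Set.range (ContinuousLinearMap.adjoint B')) ∧ IsClosed (Set.range B')) := by
  have fact1 : ∀ u : H₂ᗮ, adjoint B (u : H) = ((adjoint B' u : H₂ᗮ) : H) :=
    adjB_coe_orth B H₂ hinv B' Y hB'Y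
  have fact2 : ∀ v : H₂,
      adjoint B (v : H) = ((adjoint Y v : H₂ᗮ) : H) + ((adjoint Z v : H₂) : H) :=
    adjB_coe_sub B H₂ B' Y Z hB'Y hZ
  have hadjB : IsClosed (Set.range (adjoint B)) := closed_range_adjoint' B hBran
  have parta : ∀ x ∈ closure (Set.range (adjoint B')),
      ∃ u v, v ∈ LinearMap.ker (adjoint Z : H₂ →ₗ[ℂ] H₂) ∧ x = adjoint B' u + adjoint Y v := by
    intro x hx
    have hmem : (x : H) ∈ Set.range (adjoint B) := by
      have hmt : Set.MapsTo (Subtype.val : H₂ᗮ → H) (Set.range (adjoint B'))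
          (Set.range (adjoint B)) := by
        rintro _ ⟨u, rfl⟩
        exact ⟨(u : H), fact1 u⟩
      have := map_mem_closure continuous_subtype_val hx hmt
      rwa [hadjB.closure_eq] at this
    obtain ⟨w, hw⟩ := hmem
    obtain ⟨a, ha, b, hb, rfl⟩ := H₂.exists_add_mem_mem_orthogonal w
    set v₀ : H₂ := ⟨a, ha⟩
    set u₀ : H₂ᗮ := ⟨b, hb⟩
    have hdecomp : (x : H) = ((adjoint Y v₀ : H₂ᗮ) : H) + ((adjoint Z v₀ : H₂) : H)
        + ((adjoint B' u₀ : H₂ᗮ) : H) := by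
      rw [← hw, map_add]
      rw [show a = (v₀ : H) from rfl, show b = (u₀ : H) from rfl, fact1, fact2]
    have hkey : ((x - (adjoint B' u₀ + adjoint Y v₀) : H₂ᗮ) : H) = ((adjoint Z v₀ : H₂) : H) := by
      push_cast
      rw [hdecomp]; abel
    have hzero : ((adjoint Z v₀ : H₂) : H) = 0 := by
      refine (Submodule.disjoint_def.mp H₂.orthogonal_disjoint) _ (adjoint Z v₀).2 ?_
      rw [← hkey]
      exact (x - (adjoint B' u₀ + adjoint Y v₀)).2
    refine ⟨u₀, v₀, ?_, ?_⟩
    · exact LinearMap.mem_ker.mpr (Submodule.coe_eq_zero.mp hzero)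
    · have h0 : x - (adjoint B' u₀ + adjoint Y v₀) = 0 :=
        Submodule.coe_eq_zero.mp (by rw [hkey, hzero])
      exact sub_eq_zero.mp h0
  refine ⟨parta, fun hY => ?_⟩
  have hclosed : IsClosed (Set.range (adjoint B')) := by
    refine isClosed_of_closure_subset ?_
    intro x hx
    obtain ⟨u, v, hv, rfl⟩ := parta x hx
    obtain ⟨u', hu'⟩ := hY v hv
    exact ⟨u + u', by rw [map_add, show adjoint B' u' = adjoint Y v from hu']⟩
  refine ⟨hclosed, ?_⟩
  have := closed_range_adjoint' (adjoint B') hclosed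
  rwa [adjoint_adjoint] at this
end

section
/- Let B be a bounded linear operator with closed range on a complex Hilbert space H such that R(B) ⊆ R(B*), let H₂ be a closed subspace of H invariant under B, and let Z = B restricted to H₂ (an operator on H₂). Then the closure of R(Z) is contained in R(Z*). Consequently, if N(Z*) ⊆ N(Z), then R(Z*) equals the closure of R(Z), and in particular R(Z*) is closed. -/
open ContinuousLinearMap in
/-- For an operator `Z` on a Hilbert space, `(ker Z*)ᗮ = closure (range Z)`. -/
theorem aux_ker_adjoint_orth {E : Type*} [NormedAddCommGroup E] [InnerProductSpace ℂ E]
    [CompleteSpace E] (Z : E →L[ℂ] E) :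
    (LinearMap.ker (adjoint Z : E →ₗ[ℂ] E))ᗮ = (LinearMap.range (Z : E →ₗ[ℂ] E)).topologicalClosure := by
  have h : LinearMap.ker (adjoint Z : E →ₗ[ℂ] E) = (LinearMap.range (Z : E →ₗ[ℂ] E))ᗮ := by
    ext y
    simp only [LinearMap.mem_ker, Submodule.mem_orthogonal]
    constructor
    · rintro hy _ ⟨x, rfl⟩
      simp only [ContinuousLinearMap.coe_coe] at hy ⊢
      rw [← ContinuousLinearMap.adjoint_inner_right]
      simp [hy]
    · intro hy
      rw [← @inner_self_eq_zero ℂ]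
      rw [ContinuousLinearMap.coe_coe, ContinuousLinearMap.adjoint_inner_right]
      exact hy _ ⟨_, rfl⟩
  rw [h, Submodule.orthogonal_orthogonal_eq_closure]

/-- Lemma 2.2(b): Let `B` be a bounded operator with closed range on a complex Hilbert
space `H` such that `R(B) ⊆ R(B*)`, let `H₂` be a closed subspace invariant under `B`,
and let `Z = B|_{H₂}`.  Then the closure of `R(Z)` is contained in `R(Z*)`;
consequently, if `N(Z*) ⊆ N(Z)`, then `R(Z*)` equals the closure of `R(Z)` and in
particular `R(Z*)` is closed. -/
theorem stmt3 {H : Type*} [NormedAddCommGroup H] [InnerProductSpace ℂ H] [CompleteSpace H]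
    (B : H →L[ℂ] H) (hBran : IsClosed (Set.range B))
    (hpos : LinearMap.range (B : H →ₗ[ℂ] H) ≤
      LinearMap.range (ContinuousLinearMap.adjoint B : H →ₗ[ℂ] H))
    (H₂ : Submodule ℂ H) (hH₂ : IsClosed (H₂ : Set H)) [CompleteSpace H₂]
    (hinv : ∀ x ∈ H₂, B x ∈ H₂)
    (Z : H₂ →L[ℂ] H₂) (hZ : ∀ x : H₂, (Z x : H) = B x) :
    closure (Set.range Z) ⊆ Set.range (ContinuousLinearMap.adjoint Z) ∧
    (LinearMap.ker (ContinuousLinearMap.adjoint Z : H₂ →ₗ[ℂ] H₂) ≤ LinearMap.ker (Z : H₂ →ₗ[ℂ] H₂) →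
      Set.range (ContinuousLinearMap.adjoint Z) = closure (Set.range Z) ∧
      IsClosed (Set.range (ContinuousLinearMap.adjoint Z))) := by
  have part1 : closure (Set.range Z) ⊆ Set.range (ContinuousLinearMap.adjoint Z) := by
    intro z hz
    -- (z : H) belongs to the closure of range B, which is range B
    have hzH : (z : H) ∈ Set.range B := by
      have h1 : (z : H) ∈ closure ((fun a : H₂ => (a : H)) '' Set.range Z) :=
        image_closure_subset_closure_image continuous_subtype_val ⟨z, hz, rfl⟩
      have h2 : (fun a : H₂ => (a : H)) '' Set.range Z ⊆ Set.range B := by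
        rintro _ ⟨_, ⟨x, rfl⟩, rfl⟩
        exact ⟨x, (hZ x).symm⟩
      exact hBran.closure_subset_iff.mpr h2 h1
    obtain ⟨w, hw⟩ := hpos ⟨(hzH.choose : H), hzH.choose_spec⟩
    -- decompose w
    set u : H₂ := H₂.orthogonalProjectionOnto w with hu
    have hv : w - (u : H) ∈ H₂ᗮ := Submodule.sub_starProjection_mem_orthogonal (K := H₂) w
    refine ⟨u, ?_⟩
    have key : ∀ x : H₂, (inner ℂ x (ContinuousLinearMap.adjoint Z u - z) : ℂ) = 0 := by
      intro x
      rw [inner_sub_right, ContinuousLinearMap.adjoint_inner_right]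
      have e1 : (inner ℂ (Z x) u : ℂ) = inner ℂ ((Z x : H)) (u : H) := rfl
      have e2 : (inner ℂ x z : ℂ) = inner ℂ ((x : H)) ((z : H)) := rfl
      rw [e1, e2, hZ x]
      have hBx : B x ∈ H₂ := hinv x x.2
      have hortho : (inner ℂ (B (x : H)) (w - (u : H)) : ℂ) = 0 :=
        (Submodule.mem_orthogonal H₂ _).mp hv _ hBx
      have : (inner ℂ (B (x : H)) (u : H) : ℂ) = inner ℂ (B (x : H)) w := by
        rw [← sub_eq_zero, ← inner_sub_right, ← neg_eq_zero, ← inner_neg_right, neg_sub]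
        exact hortho
      rw [this, ← ContinuousLinearMap.adjoint_inner_right, show (ContinuousLinearMap.adjoint B) w = z from hw]
      exact sub_self _
    have := key (ContinuousLinearMap.adjoint Z u - z)
    rw [inner_self_eq_zero] at this
    exact (sub_eq_zero.mp this)
  refine ⟨part1, fun hker => ?_⟩
  have hsub : Set.range (ContinuousLinearMap.adjoint Z) ⊆ closure (Set.range Z) := by
    have h1 : LinearMap.range (ContinuousLinearMap.adjoint Z : H₂ →ₗ[ℂ] H₂) ≤ (LinearMap.ker (Z : H₂ →ₗ[ℂ] H₂))ᗮ := by
      rintro _ ⟨u, rfl⟩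
      rw [Submodule.mem_orthogonal]
      intro x hx
      rw [ContinuousLinearMap.coe_coe, ContinuousLinearMap.adjoint_inner_right, show Z x = 0 from LinearMap.mem_ker.mp hx, inner_zero_left]
    have h2 : (LinearMap.ker (Z : H₂ →ₗ[ℂ] H₂))ᗮ ≤ (LinearMap.ker (ContinuousLinearMap.adjoint Z : H₂ →ₗ[ℂ] H₂))ᗮ :=
      Submodule.orthogonal_le hker
    rw [aux_ker_adjoint_orth Z] at h2
    intro y hy
    exact h2 (h1 hy)
  have heq : Set.range (ContinuousLinearMap.adjoint Z) = closure (Set.range Z) :=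
    Set.Subset.antisymm hsub part1
  exact ⟨heq, heq ▸ isClosed_closure⟩
end

section
/- Let A and B be commuting bounded linear operators on a complex Hilbert space H such that N(A) ⊆ N(A*) and both R(A) and R(B) are closed. Since AB = BA and N(A) ⊆ N(A*), the subspace H₂ := N(A) is invariant under B; set H₁ = N(A)⊥ and let B' = P₁ ∘ B restricted to H₁, Y = P₂ ∘ B restricted to H₁, and Z = B restricted to H₂, where P₁, P₂ are the orthogonal projections onto H₁, H₂. If Y*(N(Z*)) ⊆ R(B'*), then R(AB) is closed. -/
open ContinuousLinearMap Submodule NNReal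
open scoped InnerProductSpace

private theorem aux_antilip {E F : Type*} [NormedAddCommGroup E] [NormedSpace ℂ E]
    [NormedAddCommGroup F] [NormedSpace ℂ F] [CompleteSpace E] [CompleteSpace F]
    (T : E →L[ℂ] F) (hinj : LinearMap.ker (T : E →ₗ[ℂ] F) = ⊥) (hcl : IsClosed (Set.range T)) :
    ∃ c : ℝ≥0, AntilipschitzWith c T := by
  have hRcoe : ((LinearMap.range (T : E →ₗ[ℂ] F) : Submodule ℂ F) : Set F) = Set.range T := by
    ext x; simp [LinearMap.mem_range]
  haveI : CompleteSpace (LinearMap.range (T : E →ₗ[ℂ] F)) := by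
    exact (show IsClosed ((LinearMap.range (T : E →ₗ[ℂ] F) : Submodule ℂ F):Set F) from hRcoe ▸ hcl).completeSpace_coe
  set T₀ : E →L[ℂ] LinearMap.range (T : E →ₗ[ℂ] F) :=
    T.codRestrict (LinearMap.range (T : E →ₗ[ℂ] F)) (fun x => LinearMap.mem_range_self _ x)
  have hker : LinearMap.ker (T₀ : E →ₗ[ℂ] LinearMap.range (T : E →ₗ[ℂ] F)) = ⊥ := by
    rw [ContinuousLinearMap.ker_codRestrict]; exact hinj
  have hsurj : LinearMap.range (T₀ : E →ₗ[ℂ] LinearMap.range (T : E →ₗ[ℂ] F)) = ⊤ := by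
    rw [LinearMap.range_eq_top]
    rintro ⟨y, x, rfl⟩
    exact ⟨x, rfl⟩
  let e := ContinuousLinearEquiv.ofBijective T₀ hker hsurj
  obtain ⟨c, hc⟩ : ∃ c : ℝ≥0, AntilipschitzWith c T₀ := ⟨_, e.antilipschitz⟩
  exact ⟨c, AntilipschitzWith.of_le_mul_dist fun x y => by
    exact hc.le_mul_dist x y⟩

private theorem aux_isClosedMap {E F : Type*} [NormedAddCommGroup E] [NormedSpace ℂ E]
    [NormedAddCommGroup F] [NormedSpace ℂ F] [CompleteSpace E] [CompleteSpace F]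
    (T : E →L[ℂ] F) (hinj : LinearMap.ker (T : E →ₗ[ℂ] F) = ⊥) (hcl : IsClosed (Set.range T)) :
    IsClosedMap T := by
  obtain ⟨c, hc⟩ := aux_antilip T hinj hcl
  exact (hc.isClosedEmbedding T.uniformContinuous).isClosedMap

private theorem aux_adj_closed {E F : Type*} [NormedAddCommGroup E] [InnerProductSpace ℂ E]
    [NormedAddCommGroup F] [InnerProductSpace ℂ F] [CompleteSpace E] [CompleteSpace F]
    (T : E →L[ℂ] F) (hcl : IsClosed (Set.range T)) :
    IsClosed (Set.range (adjoint T)) := by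
  have hRcoe : ((LinearMap.range (T : E →ₗ[ℂ] F) : Submodule ℂ F) : Set F) = Set.range T := by
    ext x; simp [LinearMap.mem_range]
  haveI hRc : CompleteSpace (LinearMap.range (T : E →ₗ[ℂ] F)) :=
    (show IsClosed ((LinearMap.range (T : E →ₗ[ℂ] F) : Submodule ℂ F) : Set F) from hRcoe ▸ hcl).completeSpace_coe
  haveI : CompleteSpace (LinearMap.ker (T : E →ₗ[ℂ] F)) := (ContinuousLinearMap.isClosed_ker T).completeSpace_coe
  haveI : CompleteSpace ((LinearMap.ker (T : E →ₗ[ℂ] F))ᗮ : Submodule ℂ E) :=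
    (Submodule.isClosed_orthogonal _).completeSpace_coe
  set R := LinearMap.range (T : E →ₗ[ℂ] F) with hR
  set K := (LinearMap.ker (T : E →ₗ[ℂ] F))ᗮ with hK
  have hmem : ∀ x : K, T x ∈ R := fun x => LinearMap.mem_range_self _ _
  set T₀ : K →L[ℂ] R := (T ∘L K.subtypeL).codRestrict R hmem with hT₀
  have hker₀ : LinearMap.ker (T₀ : K →ₗ[ℂ] R) = ⊥ := by
    rw [Submodule.eq_bot_iff]
    intro x hx
    have hx' : T (x : E) = 0 := by
      have := congrArg (Subtype.val) (hx : T₀ x = 0)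
      exact this
    have h2 : ⟪(x : E), (x : E)⟫_ℂ = 0 :=
      (Submodule.mem_orthogonal (LinearMap.ker (T : E →ₗ[ℂ] F)) (x : E)).mp x.2 (x : E)
        (LinearMap.mem_ker.mpr hx')
    ext
    exact inner_self_eq_zero.mp h2
  have hsurj₀ : LinearMap.range (T₀ : K →ₗ[ℂ] R) = ⊤ := by
    rw [LinearMap.range_eq_top]
    rintro ⟨y, x, rfl⟩
    obtain ⟨a, ha, b, hb, rfl⟩ := (LinearMap.ker (T : E →ₗ[ℂ] F)).exists_add_mem_mem_orthogonal x
    refine ⟨⟨b, hb⟩, ?_⟩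
    ext
    simp [hT₀, map_add, (LinearMap.mem_ker.mp ha : T a = 0), ContinuousLinearMap.coe_codRestrict_apply]; rfl
  let e := ContinuousLinearEquiv.ofBijective T₀ hker₀ hsurj₀
  set S : R →L[ℂ] E := (adjoint T) ∘L R.subtypeL with hS
  set c : ℝ := ‖(e.symm : R →L[ℂ] K)‖ with hc
  have key : ∀ v : R, ‖(v : F)‖ ^ 2 ≤ ‖S v‖ * (c * ‖(v : F)‖) := by
    intro v
    have h0 : ∀ x : K, ((e x : R) : F) = T (x : E) := fun x => rfl
    have h1 : (v : F) = T ((e.symm v : K) : E) := by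
      conv_lhs => rw [← e.apply_symm_apply v]
      exact h0 _
    calc ‖(v : F)‖ ^ 2 = RCLike.re ⟪(v : F), (v : F)⟫_ℂ := (inner_self_eq_norm_sq _).symm
      _ = RCLike.re ⟪(v : F), T ((e.symm v : K) : E)⟫_ℂ := by rw [← h1]
      _ = RCLike.re ⟪adjoint T (v : F), ((e.symm v : K) : E)⟫_ℂ := by
            rw [ContinuousLinearMap.adjoint_inner_left]
      _ ≤ ‖adjoint T (v : F)‖ * ‖((e.symm v : K) : E)‖ := re_inner_le_norm _ _
      _ ≤ ‖S v‖ * (c * ‖(v : F)‖) := by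
            apply mul_le_mul_of_nonneg_left _ (norm_nonneg _)
            calc ‖((e.symm v : K) : E)‖ = ‖((e.symm : R →L[ℂ] K) v)‖ := by rw [Submodule.norm_coe]; rfl
              _ ≤ c * ‖v‖ := (e.symm : R →L[ℂ] K).le_opNorm v
              _ = c * ‖(v : F)‖ := by rw [Submodule.norm_coe]
  have hbdd : ∀ v : R, ‖v‖ ≤ c * ‖S v‖ := by
    intro v
    rcases eq_or_ne v 0 with rfl | hv
    · simp
    · have hvpos : (0:ℝ) < ‖(v : F)‖ := by
        rw [Submodule.norm_coe]; exact norm_pos_iff.mpr hv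
      have := key v
      rw [pow_two] at this
      have h2 : ‖(v : F)‖ ≤ ‖S v‖ * c := by
        have := (mul_le_mul_iff_of_pos_right hvpos).mp (by linarith [this] : ‖(v : F)‖ * ‖(v : F)‖ ≤ ‖S v‖ * c * ‖(v : F)‖)
        exact this
      rw [Submodule.norm_coe] at *
      linarith
  have hanti : AntilipschitzWith c.toNNReal S := by
    apply AntilipschitzWith.of_le_mul_dist
    intro x y
    rw [dist_eq_norm, dist_eq_norm, ← map_sub]
    calc ‖x - y‖ ≤ c * ‖S (x - y)‖ := hbdd _
      _ ≤ (c.toNNReal : ℝ) * ‖S (x - y)‖ :=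
          mul_le_mul_of_nonneg_right (Real.le_coe_toNNReal c) (norm_nonneg _)
  have hScl : IsClosed (Set.range S) := hanti.isClosed_range S.uniformContinuous
  have hseq : Set.range (adjoint T) = Set.range S := by
    apply Set.Subset.antisymm
    · rintro _ ⟨x, rfl⟩
      obtain ⟨a, ha, b, hb, rfl⟩ := R.exists_add_mem_mem_orthogonal x
      have hb0 : adjoint T b = 0 := by
        apply ext_inner_right ℂ
        intro y
        rw [ContinuousLinearMap.adjoint_inner_left, inner_zero_left]
        rw [Submodule.mem_orthogonal] at hb
        rw [← inner_conj_symm, hb (T y) (LinearMap.mem_range_self _ y), map_zero]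
      refine ⟨⟨a, ha⟩, ?_⟩
      simp [hS, map_add, hb0]
    · rintro _ ⟨v, rfl⟩
      exact ⟨(v : F), rfl⟩
  rw [hseq]
  exact hScl

set_option maxHeartbeats 1000000 in
/-- Proposition 2.2(b): Let `A`, `B` be commuting bounded operators on a complex Hilbert
space `H` with `N(A) ⊆ N(A*)` and `R(A)`, `R(B)` closed.  Relative to
`H = N(A)ᗮ ⊕ N(A)`, write `B x = B' x + Y x` for `x ∈ N(A)ᗮ` (with `B' x ∈ N(A)ᗮ`,
`Y x ∈ N(A)`) and let `Z = B|_{N(A)}`.  If `Y*(N(Z*)) ⊆ R(B'*)`, then `R(AB)` is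
closed. -/
theorem stmt4 {H : Type*} [NormedAddCommGroup H] [InnerProductSpace ℂ H] [CompleteSpace H]
    (A B : H →L[ℂ] H) (hcomm : A ∘L B = B ∘L A)
    (hqp : LinearMap.ker (A : H →ₗ[ℂ] H) ≤ LinearMap.ker (ContinuousLinearMap.adjoint A).toLinearMap)
    (hAran : IsClosed (Set.range A)) (hBran : IsClosed (Set.range B))
    (B' : (LinearMap.ker (A : H →ₗ[ℂ] H))ᗮ →L[ℂ] (LinearMap.ker (A : H →ₗ[ℂ] H))ᗮ)
    (Y : (LinearMap.ker (A : H →ₗ[ℂ] H))ᗮ →L[ℂ] LinearMap.ker (A : H →ₗ[ℂ] H))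
    (Z : LinearMap.ker (A : H →ₗ[ℂ] H) →L[ℂ] LinearMap.ker (A : H →ₗ[ℂ] H))
    (hB'Y : ∀ x : (LinearMap.ker (A : H →ₗ[ℂ] H))ᗮ, B x = (B' x : H) + (Y x : H))
    (hZ : ∀ x : LinearMap.ker (A : H →ₗ[ℂ] H), (Z x : H) = B x)
    (hYZ : ∀ v ∈ LinearMap.ker (ContinuousLinearMap.adjoint Z).toLinearMap,
      ContinuousLinearMap.adjoint Y v ∈ LinearMap.range (ContinuousLinearMap.adjoint B').toLinearMap) :
    IsClosed (Set.range (A ∘L B)) := by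
  haveI : CompleteSpace (LinearMap.ker (A : H →ₗ[ℂ] H)) :=
    (ContinuousLinearMap.isClosed_ker A).completeSpace_coe
  haveI : CompleteSpace ((LinearMap.ker (A : H →ₗ[ℂ] H))ᗮ : Submodule ℂ H) :=
    (Submodule.isClosed_orthogonal _).completeSpace_coe
  -- orthogonality helpers
  have hzu : ∀ z ∈ LinearMap.ker (A : H →ₗ[ℂ] H), ∀ u ∈ (LinearMap.ker (A : H →ₗ[ℂ] H))ᗮ, ⟪z, u⟫_ℂ = 0 :=
    fun z hz u hu => (Submodule.mem_orthogonal _ u).mp hu z hz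
  have huz : ∀ u ∈ (LinearMap.ker (A : H →ₗ[ℂ] H))ᗮ, ∀ z ∈ LinearMap.ker (A : H →ₗ[ℂ] H), ⟪u, z⟫_ℂ = 0 := by
    intro u hu z hz
    rw [← inner_conj_symm, hzu z hz u hu, map_zero]
  -- the injective restriction of A
  set T : ((LinearMap.ker (A : H →ₗ[ℂ] H))ᗮ : Submodule ℂ H) →L[ℂ] H :=
    A ∘L ((LinearMap.ker (A : H →ₗ[ℂ] H))ᗮ : Submodule ℂ H).subtypeL with hT
  have hTker : LinearMap.ker (T : (LinearMap.ker (A : H →ₗ[ℂ] H))ᗮ →ₗ[ℂ] H) = ⊥ := by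
    rw [Submodule.eq_bot_iff]
    intro x hx
    have hx' : A (x : H) = 0 := hx
    have h2 : ⟪(x : H), (x : H)⟫_ℂ = 0 := hzu _ (LinearMap.mem_ker.mpr hx') _ x.2
    ext
    exact inner_self_eq_zero.mp h2
  have hTran : Set.range T = Set.range A := by
    apply Set.Subset.antisymm
    · rintro _ ⟨x, rfl⟩; exact ⟨(x : H), rfl⟩
    · rintro _ ⟨x, rfl⟩
      obtain ⟨a, ha, b, hb, rfl⟩ := (LinearMap.ker (A : H →ₗ[ℂ] H)).exists_add_mem_mem_orthogonal x
      exact ⟨⟨b, hb⟩, by simp [hT, map_add]; exact ha⟩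
  have hTclm : IsClosedMap T := aux_isClosedMap T hTker (hTran ▸ hAran)
  -- B maps ker A into ker A
  have hBN : ∀ a : LinearMap.ker (A : H →ₗ[ℂ] H), B (a : H) ∈ LinearMap.ker (A : H →ₗ[ℂ] H) := by
    intro a; rw [← hZ a]; exact (Z a).2
  -- range identity
  have hrange : Set.range (A ∘L B) = T '' (Set.range B') := by
    apply Set.Subset.antisymm
    · rintro _ ⟨x, rfl⟩
      obtain ⟨a, ha, b, hb, rfl⟩ := (LinearMap.ker (A : H →ₗ[ℂ] H)).exists_add_mem_mem_orthogonal x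
      refine ⟨B' ⟨b, hb⟩, ⟨_, rfl⟩, ?_⟩
      have h1 : B a = ((Z ⟨a, ha⟩ : LinearMap.ker (A : H →ₗ[ℂ] H)) : H) := (hZ ⟨a, ha⟩).symm
      have h2 : B b = ((B' ⟨b, hb⟩ : (LinearMap.ker (A : H →ₗ[ℂ] H))ᗮ) : H) + ((Y ⟨b, hb⟩ : LinearMap.ker (A : H →ₗ[ℂ] H)) : H) :=
        hB'Y ⟨b, hb⟩
      simp only [hT, ContinuousLinearMap.comp_apply, Submodule.subtypeL_apply]
      rw [map_add, h1, h2, map_add, map_add]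
      have hz1 : A ((Z ⟨a, ha⟩ : LinearMap.ker (A : H →ₗ[ℂ] H)) : H) = 0 := (Z ⟨a, ha⟩).2
      have hz2 : A ((Y ⟨b, hb⟩ : LinearMap.ker (A : H →ₗ[ℂ] H)) : H) = 0 := (Y ⟨b, hb⟩).2
      rw [hz1, hz2]
      abel
    · rintro _ ⟨_, ⟨u, rfl⟩, rfl⟩
      refine ⟨(u : H), ?_⟩
      have h2 := hB'Y u
      simp only [hT, ContinuousLinearMap.comp_apply, Submodule.subtypeL_apply]
      rw [h2, map_add]
      have hz2 : A ((Y u : LinearMap.ker (A : H →ₗ[ℂ] H)) : H) = 0 := (Y u).2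
      rw [hz2, add_zero]
  rw [hrange]
  apply hTclm
  -- Now: IsClosed (Set.range B') via adjoint arguments
  have hBadj : IsClosed (Set.range (ContinuousLinearMap.adjoint B)) := aux_adj_closed B hBran
  -- adjoint identities
  have adj1 : ∀ u : ((LinearMap.ker (A : H →ₗ[ℂ] H))ᗮ : Submodule ℂ H),
      ContinuousLinearMap.adjoint B (u : H) = ((ContinuousLinearMap.adjoint B' u : (LinearMap.ker (A : H →ₗ[ℂ] H))ᗮ) : H) := by
    intro u
    apply ext_inner_right ℂ
    intro x
    obtain ⟨a, ha, b, hb, rfl⟩ := (LinearMap.ker (A : H →ₗ[ℂ] H)).exists_add_mem_mem_orthogonal x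
    rw [ContinuousLinearMap.adjoint_inner_left]
    simp only [map_add, inner_add_right]
    have e1 : ⟪(u : H), B a⟫_ℂ = 0 := huz _ u.2 _ (hBN ⟨a, ha⟩)
    have e2 : ⟪(u : H), B b⟫_ℂ = ⟪((ContinuousLinearMap.adjoint B' u : (LinearMap.ker (A : H →ₗ[ℂ] H))ᗮ) : H), b⟫_ℂ := by
      rw [hB'Y ⟨b, hb⟩, inner_add_right]
      have e3 : ⟪(u : H), ((Y ⟨b, hb⟩ : LinearMap.ker (A : H →ₗ[ℂ] H)) : H)⟫_ℂ = 0 := huz _ u.2 _ (Y ⟨b, hb⟩).2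
      rw [e3, add_zero]
      have e4 : ⟪(u : H), ((B' ⟨b, hb⟩ : (LinearMap.ker (A : H →ₗ[ℂ] H))ᗮ) : H)⟫_ℂ = ⟪u, B' ⟨b, hb⟩⟫_ℂ :=
        (Submodule.coe_inner _ _ _).symm
      rw [e4, ← ContinuousLinearMap.adjoint_inner_left, Submodule.coe_inner]
    have e5 : ⟪((ContinuousLinearMap.adjoint B' u : (LinearMap.ker (A : H →ₗ[ℂ] H))ᗮ) : H), a⟫_ℂ = 0 :=
      huz _ (ContinuousLinearMap.adjoint B' u).2 _ ha
    rw [e1, e2, e5]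
  have adj2 : ∀ v : LinearMap.ker (A : H →ₗ[ℂ] H),
      ContinuousLinearMap.adjoint B (v : H) =
        ((ContinuousLinearMap.adjoint Y v : (LinearMap.ker (A : H →ₗ[ℂ] H))ᗮ) : H) +
          ((ContinuousLinearMap.adjoint Z v : LinearMap.ker (A : H →ₗ[ℂ] H)) : H) := by
    intro v
    apply ext_inner_right ℂ
    intro x
    obtain ⟨a, ha, b, hb, rfl⟩ := (LinearMap.ker (A : H →ₗ[ℂ] H)).exists_add_mem_mem_orthogonal x
    rw [ContinuousLinearMap.adjoint_inner_left]
    simp only [map_add, inner_add_right, inner_add_left]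
    have e1 : ⟪(v : H), B a⟫_ℂ = ⟪((ContinuousLinearMap.adjoint Z v : LinearMap.ker (A : H →ₗ[ℂ] H)) : H), a⟫_ℂ := by
      rw [← hZ ⟨a, ha⟩]
      rw [show ⟪(v : H), ((Z ⟨a, ha⟩ : LinearMap.ker (A : H →ₗ[ℂ] H)) : H)⟫_ℂ = ⟪v, Z ⟨a, ha⟩⟫_ℂ from
        (Submodule.coe_inner _ _ _).symm]
      rw [← ContinuousLinearMap.adjoint_inner_left, Submodule.coe_inner]
    have e2 : ⟪(v : H), B b⟫_ℂ = ⟪((ContinuousLinearMap.adjoint Y v : (LinearMap.ker (A : H →ₗ[ℂ] H))ᗮ) : H), b⟫_ℂ := by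
      rw [hB'Y ⟨b, hb⟩, inner_add_right]
      have e3 : ⟪(v : H), ((B' ⟨b, hb⟩ : (LinearMap.ker (A : H →ₗ[ℂ] H))ᗮ) : H)⟫_ℂ = 0 :=
        hzu _ v.2 _ (B' ⟨b, hb⟩).2
      rw [e3, zero_add]
      rw [show ⟪(v : H), ((Y ⟨b, hb⟩ : LinearMap.ker (A : H →ₗ[ℂ] H)) : H)⟫_ℂ = ⟪v, Y ⟨b, hb⟩⟫_ℂ from
        (Submodule.coe_inner _ _ _).symm]
      rw [← ContinuousLinearMap.adjoint_inner_left, Submodule.coe_inner]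
    have e4 : ⟪((ContinuousLinearMap.adjoint Y v : (LinearMap.ker (A : H →ₗ[ℂ] H))ᗮ) : H), a⟫_ℂ = 0 :=
      huz _ (ContinuousLinearMap.adjoint Y v).2 _ ha
    have e5 : ⟪((ContinuousLinearMap.adjoint Z v : LinearMap.ker (A : H →ₗ[ℂ] H)) : H), b⟫_ℂ = 0 :=
      hzu _ (ContinuousLinearMap.adjoint Z v).2 _ hb
    rw [e1, e2, e4, e5]
    ring
  -- set identity for range of adjoint B'
  have hset : Subtype.val '' Set.range (ContinuousLinearMap.adjoint B') =
      Set.range (ContinuousLinearMap.adjoint B) ∩ ((LinearMap.ker (A : H →ₗ[ℂ] H))ᗮ : Set H) := by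
    apply Set.Subset.antisymm
    · rintro _ ⟨_, ⟨u, rfl⟩, rfl⟩
      exact ⟨⟨(u : H), (adj1 u)⟩, (ContinuousLinearMap.adjoint B' u).2⟩
    · rintro w ⟨⟨x, rfl⟩, hw⟩
      obtain ⟨a, ha, b, hb, rfl⟩ := (LinearMap.ker (A : H →ₗ[ℂ] H)).exists_add_mem_mem_orthogonal x
      have hd : ContinuousLinearMap.adjoint B (a + b) =
          (((ContinuousLinearMap.adjoint B' ⟨b, hb⟩ + ContinuousLinearMap.adjoint Y ⟨a, ha⟩ :
            (LinearMap.ker (A : H →ₗ[ℂ] H))ᗮ) : H)) + ((ContinuousLinearMap.adjoint Z ⟨a, ha⟩ : LinearMap.ker (A : H →ₗ[ℂ] H)) : H) := by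
        rw [map_add, adj1 ⟨b, hb⟩, adj2 ⟨a, ha⟩, Submodule.coe_add]
        abel
      -- the ker A component must vanish
      have hZ0 : ((ContinuousLinearMap.adjoint Z ⟨a, ha⟩ : LinearMap.ker (A : H →ₗ[ℂ] H)) : H) = 0 := by
        have hmem : ((ContinuousLinearMap.adjoint Z ⟨a, ha⟩ : LinearMap.ker (A : H →ₗ[ℂ] H)) : H) ∈
            (LinearMap.ker (A : H →ₗ[ℂ] H))ᗮ := by
          have : ((ContinuousLinearMap.adjoint Z ⟨a, ha⟩ : LinearMap.ker (A : H →ₗ[ℂ] H)) : H) =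
              ContinuousLinearMap.adjoint B (a + b) -
              (((ContinuousLinearMap.adjoint B' ⟨b, hb⟩ + ContinuousLinearMap.adjoint Y ⟨a, ha⟩ :
                (LinearMap.ker (A : H →ₗ[ℂ] H))ᗮ) : H)) := by rw [hd]; abel
          rw [this]
          exact Submodule.sub_mem _ hw (ContinuousLinearMap.adjoint B' ⟨b, hb⟩ +
            ContinuousLinearMap.adjoint Y ⟨a, ha⟩).2
        have := hzu _ (ContinuousLinearMap.adjoint Z ⟨a, ha⟩).2 _ hmem
        exact inner_self_eq_zero.mp this
      have hkerZ : (⟨a, ha⟩ : LinearMap.ker (A : H →ₗ[ℂ] H)) ∈ LinearMap.ker (ContinuousLinearMap.adjoint Z).toLinearMap := by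
        rw [LinearMap.mem_ker]
        ext
        simpa using hZ0
      obtain ⟨u', hu'⟩ := hYZ _ hkerZ
      refine ⟨ContinuousLinearMap.adjoint B' (⟨b, hb⟩ + u'), ⟨_, rfl⟩, ?_⟩
      rw [hd, hZ0, add_zero, map_add, show ContinuousLinearMap.adjoint B' u' = _ from hu']
  -- conclude closedness of range of adjoint B'
  have hadjB'cl : IsClosed (Set.range (ContinuousLinearMap.adjoint B')) := by
    have h1 : Set.range (ContinuousLinearMap.adjoint B') =
        Subtype.val ⁻¹' (Subtype.val '' Set.range (ContinuousLinearMap.adjoint B')) :=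
      (Set.preimage_image_eq _ Subtype.val_injective).symm
    rw [h1, hset]
    exact (hBadj.inter (Submodule.isClosed_orthogonal _)).preimage continuous_subtype_val
  have := aux_adj_closed (ContinuousLinearMap.adjoint B') hadjB'cl
  rwa [ContinuousLinearMap.adjoint_adjoint] at this
end

section
/- Let T be a bounded linear operator on a complex Hilbert space H satisfying: (i) N(T) ⊆ N(T*) (so N(T) reduces T and T' := T restricted to N(T)⊥ is a bounded operator on the Hilbert space N(T)⊥); (ii) 0 is not in the residual spectrum of T'; and (iii) T' is isoloid. Then R(T) is closed if and only if 0 is not a limit point of the spectrum σ(T). -/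
/-- The residual spectrum of a bounded operator `S`: the set of `z ∈ ℂ` such that
`S - z I` is injective but does not have dense range. -/
def residualSpectrum {E : Type*} [NormedAddCommGroup E] [NormedSpace ℂ E]
    (S : E →L[ℂ] E) : Set ℂ :=
  {z | Function.Injective (S - z • (1 : E →L[ℂ] E)) ∧
        ¬ Dense (Set.range (S - z • (1 : E →L[ℂ] E)))}

/-- An operator `S` is isoloid if every isolated point of its spectrum is an
eigenvalue. -/
def Isoloid {E : Type*} [NormedAddCommGroup E] [NormedSpace ℂ E]
    (S : E →L[ℂ] E) : Prop :=
  ∀ z ∈ spectrum ℂ S, ¬ AccPt z (Filter.principal (spectrum ℂ S)) →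
    ∃ x : E, x ≠ 0 ∧ S x = z • x

/-- Auxiliary: the spectrum of a bounded operator on a Banach space is closed. -/
lemma spectrum_isClosed_aux {E : Type*} [NormedAddCommGroup E] [NormedSpace ℂ E]
    [CompleteSpace E] (S : E →L[ℂ] E) : IsClosed (spectrum ℂ S) :=
  spectrum.isClosed S

lemma orthogonalProjection_add_orthogonalProjection_orthogonal {H : Type*} [NormedAddCommGroup H]
    [InnerProductSpace ℂ H] (K : Submodule ℂ H) [K.HasOrthogonalProjection] (w : H) :
    (K.orthogonalProjectionOnto w : H) + (Kᗮ.orthogonalProjectionOnto w : H) = w := by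
  simpa only [Submodule.starProjection_apply] using
    Submodule.starProjection_add_starProjection_orthogonal (K := K) w

set_option maxHeartbeats 1000000 in
/-- Theorem 3.1: Let `T` be a bounded operator on a complex Hilbert space `H` such that
(i) `N(T) ⊆ N(T*)` (so `N(T)` reduces `T` and `T' = T|_{N(T)ᗮ}` is a bounded operator
on `N(T)ᗮ`), (ii) `0` is not in the residual spectrum of `T'`, and (iii) `T'` is
isoloid.  Then `R(T)` is closed if and only if `0` is not a limit point of `σ(T)`. -/
theorem stmt5 {H : Type*} [NormedAddCommGroup H] [InnerProductSpace ℂ H] [CompleteSpace H]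
    (T : H →L[ℂ] H)
    (hqp : LinearMap.ker (T : H →ₗ[ℂ] H) ≤ LinearMap.ker (ContinuousLinearMap.adjoint T : H →ₗ[ℂ] H))
    (T' : (LinearMap.ker (T : H →ₗ[ℂ] H))ᗮ →L[ℂ] (LinearMap.ker (T : H →ₗ[ℂ] H))ᗮ)
    (hT' : ∀ x : (LinearMap.ker (T : H →ₗ[ℂ] H))ᗮ, (T' x : H) = T x)
    (hres : (0 : ℂ) ∉ residualSpectrum T')
    (hiso : Isoloid T') :
    IsClosed (Set.range T) ↔ ¬ AccPt (0 : ℂ) (Filter.principal (spectrum ℂ T)) := by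
  classical
  haveI : CompleteSpace (LinearMap.ker (T : H →ₗ[ℂ] H)) := (ContinuousLinearMap.isClosed_ker T).completeSpace_coe
  haveI : CompleteSpace (LinearMap.ker (T : H →ₗ[ℂ] H))ᗮ := (LinearMap.ker (T : H →ₗ[ℂ] H)).isClosed_orthogonal.completeSpace_coe
  -- a vector in both (LinearMap.ker (T : H →ₗ[ℂ] H)) and (LinearMap.ker (T : H →ₗ[ℂ] H))ᗮ is zero
  have hzero : ∀ u : H, u ∈ (LinearMap.ker (T : H →ₗ[ℂ] H)) → u ∈ (LinearMap.ker (T : H →ₗ[ℂ] H))ᗮ → u = 0 := by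
    intro u hu hu'
    exact inner_self_eq_zero.1 (hu' u hu)
  -- T' is injective
  have hinj : Function.Injective T' := by
    intro x y hxy
    have h1 : T ((x : H) - y) = 0 := by
      rw [map_sub, ← hT', ← hT', hxy, sub_self]
    have h2 : (x : H) - y ∈ (LinearMap.ker (T : H →ₗ[ℂ] H)) := h1
    have h3 : (x : H) - y ∈ (LinearMap.ker (T : H →ₗ[ℂ] H))ᗮ := sub_mem x.2 y.2
    exact Subtype.ext (sub_eq_zero.1 (hzero _ h2 h3))
  -- T' has dense range
  have hdense : Dense (Set.range T') := by
    by_contra hd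
    exact hres ⟨by simpa using hinj, by simpa using hd⟩
  -- range T as image of range T'
  have hrange : Set.range T = Subtype.val '' Set.range T' := by
    ext y
    constructor
    · rintro ⟨x, rfl⟩
      refine ⟨T' (Submodule.orthogonalProjectionOnto (LinearMap.ker (T : H →ₗ[ℂ] H))ᗮ x), ⟨_, rfl⟩, ?_⟩
      rw [hT']
      conv_rhs => rw [← orthogonalProjection_add_orthogonalProjection_orthogonal (LinearMap.ker (T : H →ₗ[ℂ] H)) x]
      rw [map_add]
      have : T ((Submodule.orthogonalProjectionOnto (LinearMap.ker (T : H →ₗ[ℂ] H)) x : H)) = 0 := (Submodule.orthogonalProjectionOnto (LinearMap.ker (T : H →ₗ[ℂ] H)) x).2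
      rw [this, zero_add]
    · rintro ⟨v, ⟨x, rfl⟩, rfl⟩
      exact ⟨x, (hT' x).symm⟩
  -- closedness transfer
  have hKbotClosed : IsClosed ((LinearMap.ker (T : H →ₗ[ℂ] H))ᗮ : Set H) := (LinearMap.ker (T : H →ₗ[ℂ] H)).isClosed_orthogonal
  have hclosed_iff : IsClosed (Set.range T) ↔ IsClosed (Set.range T') := by
    rw [hrange]
    exact (hKbotClosed.isClosedEmbedding_subtypeVal.isClosed_iff_image_isClosed).symm
  -- closed range of T' iff T' bijective
  have hbij_iff : IsClosed (Set.range T') ↔ Function.Bijective T' := by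
    constructor
    · intro hc
      refine ⟨hinj, fun y => ?_⟩
      have : Set.range T' = Set.univ := by
        rw [← hc.closure_eq, hdense.closure_eq]
      exact Set.range_eq_univ.mp this y
    · intro hb
      have : Set.range T' = Set.univ := Set.range_eq_univ.mpr hb.2
      rw [this]; exact isClosed_univ
  -- algebraMap applied
  have halg : ∀ (z : ℂ) (S : H →L[ℂ] H) (x : H),
      (algebraMap ℂ (H →L[ℂ] H) z - S) x = z • x - S x := by
    intro z S x
    simp [Algebra.algebraMap_eq_smul_one]
  have halg' : ∀ (z : ℂ) (S : (LinearMap.ker (T : H →ₗ[ℂ] H))ᗮ →L[ℂ] (LinearMap.ker (T : H →ₗ[ℂ] H))ᗮ) (x : (LinearMap.ker (T : H →ₗ[ℂ] H))ᗮ),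
      (algebraMap ℂ ((LinearMap.ker (T : H →ₗ[ℂ] H))ᗮ →L[ℂ] (LinearMap.ker (T : H →ₗ[ℂ] H))ᗮ) z - S) x = z • x - S x := by
    intro z S x
    simp [Algebra.algebraMap_eq_smul_one]
  -- Lemma A : z ≠ 0, z ∉ σ(T') → z ∉ σ(T)
  have lemA : ∀ z : ℂ, z ≠ 0 → z ∉ spectrum ℂ T' → z ∉ spectrum ℂ T := by
    intro z hz hz'
    rw [spectrum.notMem_iff] at hz' ⊢
    rw [ContinuousLinearMap.isUnit_iff_bijective] at hz' ⊢
    constructor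
    · intro x y hxy
      have hxy' : z • (x - y) - T (x - y) = 0 := by
        have := (halg z T x).symm.trans (hxy.trans (halg z T y))
        rw [map_sub, smul_sub]
        rw [sub_eq_zero]
        linear_combination (norm := module) this
      set u : H := (Submodule.orthogonalProjectionOnto (LinearMap.ker (T : H →ₗ[ℂ] H)) (x - y) : H) with hu
      set v : H := (Submodule.orthogonalProjectionOnto (LinearMap.ker (T : H →ₗ[ℂ] H))ᗮ (x - y) : H) with hv
      have hsum : u + v = x - y := orthogonalProjection_add_orthogonalProjection_orthogonal (LinearMap.ker (T : H →ₗ[ℂ] H)) _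
      have hTu : T u = 0 := (Submodule.orthogonalProjectionOnto (LinearMap.ker (T : H →ₗ[ℂ] H)) (x - y)).2
      have hTv : T v = (T' (Submodule.orthogonalProjectionOnto (LinearMap.ker (T : H →ₗ[ℂ] H))ᗮ (x - y)) : H) := (hT' _).symm
      -- z•u + (z•v - T v) = 0, with z•u ∈ (LinearMap.ker (T : H →ₗ[ℂ] H)), z•v - T v ∈ (LinearMap.ker (T : H →ₗ[ℂ] H))ᗮ
      have hsplit : z • u + (z • v - T v) = 0 := by
        rw [← hxy']
        rw [← hsum, map_add, hTu, smul_add]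
        abel
      have hmemK : z • u ∈ (LinearMap.ker (T : H →ₗ[ℂ] H)) := by
        show T (z • u) = 0
        rw [map_smul, hTu, smul_zero]
      have hmemKbot : z • v - T v ∈ (LinearMap.ker (T : H →ₗ[ℂ] H))ᗮ := by
        rw [hTv]
        exact sub_mem ((LinearMap.ker (T : H →ₗ[ℂ] H))ᗮ.smul_mem z (Submodule.orthogonalProjectionOnto (LinearMap.ker (T : H →ₗ[ℂ] H))ᗮ (x - y)).2)
          (T' (Submodule.orthogonalProjectionOnto (LinearMap.ker (T : H →ₗ[ℂ] H))ᗮ (x - y))).2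
      have hmemKbot' : z • u ∈ (LinearMap.ker (T : H →ₗ[ℂ] H))ᗮ := by
        have : z • u = -(z • v - T v) := by linear_combination (norm := module) hsplit
        rw [this]; exact neg_mem hmemKbot
      have huz : z • u = 0 := hzero _ hmemK hmemKbot'
      have hu0 : u = 0 := by
        have := smul_eq_zero.1 huz
        tauto
      have hvrel : z • v - T v = 0 := by
        rw [hu0, smul_zero, zero_add] at hsplit
        exact hsplit
      have hv0 : v = 0 := by
        have : (algebraMap ℂ ((LinearMap.ker (T : H →ₗ[ℂ] H))ᗮ →L[ℂ] (LinearMap.ker (T : H →ₗ[ℂ] H))ᗮ) z - T') (Submodule.orthogonalProjectionOnto (LinearMap.ker (T : H →ₗ[ℂ] H))ᗮ (x - y)) = 0 := by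
          apply Subtype.ext
          rw [halg']
          push_cast
          rw [← hTv]
          exact hvrel
        have := hz'.1 (this.trans (map_zero _).symm)
        rw [hv, this]
        simp
      have : x - y = 0 := by rw [← hsum, hu0, hv0, add_zero]
      exact sub_eq_zero.1 this
    · intro y
      set a : H := (Submodule.orthogonalProjectionOnto (LinearMap.ker (T : H →ₗ[ℂ] H)) y : H) with ha
      set b : (LinearMap.ker (T : H →ₗ[ℂ] H))ᗮ := Submodule.orthogonalProjectionOnto (LinearMap.ker (T : H →ₗ[ℂ] H))ᗮ y with hb
      have hsum : a + (b : H) = y := orthogonalProjection_add_orthogonalProjection_orthogonal (LinearMap.ker (T : H →ₗ[ℂ] H)) y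
      obtain ⟨w, hw⟩ := hz'.2 b
      refine ⟨z⁻¹ • a + (w : H), ?_⟩
      rw [halg]
      have hTa : T (z⁻¹ • a) = 0 := by
        rw [map_smul]
        have : T a = 0 := (Submodule.orthogonalProjectionOnto (LinearMap.ker (T : H →ₗ[ℂ] H)) y).2
        rw [this, smul_zero]
      have hTw : T (w : H) = (T' w : H) := (hT' w).symm
      rw [map_add, hTa, hTw, smul_add, smul_smul, mul_inv_cancel₀ hz, one_smul]
      have hwb : z • (w : H) - (T' w : H) = (b : H) := by
        have := congrArg (Subtype.val) hw
        rw [halg'] at this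
        push_cast at this
        exact this
      rw [← hsum]
      linear_combination (norm := module) hwb
  -- Lemma B : z ∉ σ(T) → z ∉ σ(T')
  have lemB : ∀ z : ℂ, z ∉ spectrum ℂ T → z ∉ spectrum ℂ T' := by
    intro z hz
    rw [spectrum.notMem_iff] at hz ⊢
    rw [ContinuousLinearMap.isUnit_iff_bijective] at hz ⊢
    constructor
    · intro x y hxy
      have h1 : (algebraMap ℂ (H →L[ℂ] H) z - T) (x : H) =
          (algebraMap ℂ (H →L[ℂ] H) z - T) (y : H) := by
        rw [halg, halg, ← hT', ← hT']
        have := congrArg (Subtype.val) hxy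
        rw [halg', halg'] at this
        push_cast at this
        linear_combination (norm := module) this
      exact Subtype.ext (hz.1 h1)
    · intro y
      obtain ⟨x, hx⟩ := hz.2 (y : H)
      rw [halg] at hx
      set u : H := (Submodule.orthogonalProjectionOnto (LinearMap.ker (T : H →ₗ[ℂ] H)) x : H) with hu
      set v : (LinearMap.ker (T : H →ₗ[ℂ] H))ᗮ := Submodule.orthogonalProjectionOnto (LinearMap.ker (T : H →ₗ[ℂ] H))ᗮ x with hv
      have hsum : u + (v : H) = x := orthogonalProjection_add_orthogonalProjection_orthogonal (LinearMap.ker (T : H →ₗ[ℂ] H)) x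
      have hTu : T u = 0 := (Submodule.orthogonalProjectionOnto (LinearMap.ker (T : H →ₗ[ℂ] H)) x).2
      have hsplit : z • u + (z • (v : H) - (T' v : H)) = (y : H) := by
        rw [hT', ← hx, ← hsum, map_add, hTu, smul_add]
        abel
      have hmemKbot : z • (v : H) - (T' v : H) ∈ (LinearMap.ker (T : H →ₗ[ℂ] H))ᗮ :=
        sub_mem ((LinearMap.ker (T : H →ₗ[ℂ] H))ᗮ.smul_mem z v.2) (T' v).2
      have hmemK : z • u ∈ (LinearMap.ker (T : H →ₗ[ℂ] H)) := by
        show T (z • u) = 0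
        rw [map_smul, hTu, smul_zero]
      have hmemKbot' : z • u ∈ (LinearMap.ker (T : H →ₗ[ℂ] H))ᗮ := by
        have : z • u = (y : H) - (z • (v : H) - (T' v : H)) := by
          linear_combination (norm := module) hsplit
        rw [this]; exact sub_mem y.2 hmemKbot
      have huz : z • u = 0 := hzero _ hmemK hmemKbot'
      refine ⟨v, ?_⟩
      apply Subtype.ext
      rw [halg']
      push_cast
      rw [huz, zero_add] at hsplit
      exact hsplit
  -- main equivalence
  have hspec0 : IsClosed (Set.range T') ↔ (0 : ℂ) ∉ spectrum ℂ T' := by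
    rw [hbij_iff, spectrum.notMem_iff, ContinuousLinearMap.isUnit_iff_bijective]
    have h0 : ∀ w : (LinearMap.ker (T : H →ₗ[ℂ] H))ᗮ,
        (algebraMap ℂ ((LinearMap.ker (T : H →ₗ[ℂ] H))ᗮ →L[ℂ] (LinearMap.ker (T : H →ₗ[ℂ] H))ᗮ) 0 - T') w = -(T' w) := by
      intro w; rw [halg']; simp
    constructor
    · intro hb
      constructor
      · intro x y hxy
        rw [h0, h0] at hxy
        exact hb.1 (neg_injective hxy)
      · intro y
        obtain ⟨x, hx⟩ := hb.2 (-y)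
        refine ⟨x, ?_⟩
        rw [h0, hx, neg_neg]
    · intro hb
      constructor
      · intro x y hxy
        apply hb.1
        rw [h0, h0, hxy]
      · intro y
        obtain ⟨x, hx⟩ := hb.2 (-y)
        rw [h0] at hx
        exact ⟨x, by rw [← neg_neg (T' x), hx, neg_neg]⟩
  rw [hclosed_iff, hspec0]
  constructor
  · -- 0 ∉ σ(T') → ¬ AccPt
    intro h0 hacc
    have hcl : IsClosed (spectrum ℂ T') := spectrum_isClosed_aux T'
    have : (spectrum ℂ T')ᶜ ∈ nhds (0 : ℂ) := hcl.isOpen_compl.mem_nhds h0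
    rw [accPt_iff_nhds] at hacc
    obtain ⟨y, ⟨hy1, hy2⟩, hy3⟩ := hacc _ this
    exact absurd hy2 (lemA y hy3 hy1)
  · -- ¬ AccPt → 0 ∉ σ(T')
    intro hacc h0
    have hsub : spectrum ℂ T' ⊆ spectrum ℂ T := fun z hz => by
      by_contra h; exact lemB z h hz
    have hacc' : ¬ AccPt (0 : ℂ) (Filter.principal (spectrum ℂ T')) := by
      intro h
      exact hacc (h.mono (Filter.principal_mono.2 hsub))
    obtain ⟨x, hx0, hx⟩ := hiso 0 h0 hacc'
    rw [zero_smul] at hx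
    exact hx0 (hinj (hx.trans (map_zero T').symm))
end

section
/- Let T be a bounded linear operator on a complex Hilbert space H with R(T) ⊆ R(T*), and suppose that the restriction T' := T restricted to N(T)⊥ (a bounded operator on the Hilbert space N(T)⊥) is isoloid and that 0 is not in the residual spectrum of T'. Then R(T) is closed if and only if 0 is not a limit point of the spectrum σ(T). -/
set_option maxHeartbeats 1000000 in
/-- Corollary 3.2: Let `T` be a posinormal bounded operator (`R(T) ⊆ R(T*)`) on a
complex Hilbert space `H` such that `T' = T|_{N(T)ᗮ}` is isoloid and `0` is not in the
residual spectrum of `T'`.  Then `R(T)` is closed if and only if `0` is not a limit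
point of `σ(T)`. -/
theorem stmt6 {H : Type*} [NormedAddCommGroup H] [InnerProductSpace ℂ H] [CompleteSpace H]
    (T : H →L[ℂ] H)
    (hpos : LinearMap.range (T : H →ₗ[ℂ] H) ≤
      LinearMap.range (ContinuousLinearMap.adjoint T : H →ₗ[ℂ] H))
    (T' : (LinearMap.ker (T : H →ₗ[ℂ] H))ᗮ →L[ℂ] (LinearMap.ker (T : H →ₗ[ℂ] H))ᗮ)
    (hT' : ∀ x : (LinearMap.ker (T : H →ₗ[ℂ] H))ᗮ, (T' x : H) = T x)
    (hiso : Isoloid T')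
    (hres : (0 : ℂ) ∉ residualSpectrum T') :
    IsClosed (Set.range T) ↔ ¬ AccPt (0 : ℂ) (Filter.principal (spectrum ℂ T)) := by
  classical
  haveI : CompleteSpace (LinearMap.ker (T : H →ₗ[ℂ] H)) := (ContinuousLinearMap.isClosed_ker T).completeSpace_coe
  haveI : CompleteSpace ((LinearMap.ker (T : H →ₗ[ℂ] H))ᗮ : Submodule ℂ H) :=
    (LinearMap.ker (T : H →ₗ[ℂ] H)).isClosed_orthogonal.completeSpace_coe
  -- K ∩ Kᗮ = 0
  have hKO : ∀ w : H, w ∈ LinearMap.ker (T : H →ₗ[ℂ] H) → w ∈ (LinearMap.ker (T : H →ₗ[ℂ] H))ᗮ → w = 0 := by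
    intro w h1 h2
    simpa [inner_self_eq_zero] using h2 w h1
  -- kernel of T' is trivial
  have hker0 : ∀ x : (LinearMap.ker (T : H →ₗ[ℂ] H))ᗮ, T' x = 0 → x = 0 := by
    intro x hx
    have hxK : (x : H) ∈ LinearMap.ker (T : H →ₗ[ℂ] H) := by
      have h1 := hT' x
      rw [hx] at h1
      simpa [LinearMap.mem_ker] using h1.symm
    exact Subtype.ext (hKO _ hxK x.2)
  have hinj : Function.Injective T' := by
    intro a b hab
    have h1 : T' (a - b) = 0 := by rw [map_sub, hab, sub_self]
    exact sub_eq_zero.mp (hker0 _ h1)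
  -- decomposition
  have hdecomp : ∀ x : H, ∃ (m : LinearMap.ker (T : H →ₗ[ℂ] H)) (p : (LinearMap.ker (T : H →ₗ[ℂ] H))ᗮ), x = ↑m + ↑p :=
    fun x => ⟨Submodule.orthogonalProjection (LinearMap.ker (T : H →ₗ[ℂ] H)) x,
      Submodule.orthogonalProjection (LinearMap.ker (T : H →ₗ[ℂ] H))ᗮ x,
      (Submodule.starProjection_add_starProjection_orthogonal (K := LinearMap.ker (T : H →ₗ[ℂ] H)) x).symm⟩
  have hTm : ∀ m : LinearMap.ker (T : H →ₗ[ℂ] H), T ↑m = 0 := fun m => m.2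
  -- key 1: closed range iff T' is a unit
  have key1 : IsClosed (Set.range T) ↔ IsUnit T' := by
    constructor
    · intro hc
      rw [ContinuousLinearMap.isUnit_iff_bijective]
      refine ⟨hinj, ?_⟩
      have hrange : (Set.range T') = Subtype.val ⁻¹' Set.range T := by
        ext z
        constructor
        · rintro ⟨x, rfl⟩
          exact ⟨x, (hT' x).symm⟩
        · rintro ⟨x, hx⟩
          obtain ⟨m, p, rfl⟩ := hdecomp x
          refine ⟨p, ?_⟩
          apply Subtype.val_injective
          rw [hT' p, ← hx, map_add, hTm m, zero_add]
      have hclosed : IsClosed (Set.range T') := by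
        rw [hrange]; exact hc.preimage continuous_subtype_val
      have hdense : Dense (Set.range T') := by
        by_contra hd
        exact hres ⟨by simpa using hinj, by simpa using hd⟩
      have huniv : (Set.range T') = Set.univ := by
        rw [← hclosed.closure_eq]; exact hdense.closure_eq
      intro y
      exact (huniv ▸ Set.mem_univ y : y ∈ Set.range T')
    · intro hu
      have hbij := ContinuousLinearMap.isUnit_iff_bijective.mp hu
      have hrange : Set.range T = ((LinearMap.ker (T : H →ₗ[ℂ] H))ᗮ : Set H) := by
        ext y
        constructor
        · rintro ⟨x, rfl⟩
          obtain ⟨m, p, rfl⟩ := hdecomp x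
          rw [map_add, hTm m, zero_add, ← hT' p]
          exact (T' p).2
        · intro hy
          obtain ⟨u, hu'⟩ := hbij.2 ⟨y, hy⟩
          refine ⟨u, ?_⟩
          rw [← hT', hu']
      rw [hrange]
      exact (LinearMap.ker (T : H →ₗ[ℂ] H)).isClosed_orthogonal
  -- algebraMap facts
  have halg : ∀ (l : ℂ) (x : H), (algebraMap ℂ (H →L[ℂ] H) l - T) x = l • x - T x := by
    intro l x
    simp [Algebra.algebraMap_eq_smul_one]
  have halg' : ∀ (l : ℂ) (x : (LinearMap.ker (T : H →ₗ[ℂ] H))ᗮ),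
      (algebraMap ℂ ((LinearMap.ker (T : H →ₗ[ℂ] H))ᗮ →L[ℂ] (LinearMap.ker (T : H →ₗ[ℂ] H))ᗮ) l - T') x = l • x - T' x := by
    intro l x
    simp [Algebra.algebraMap_eq_smul_one]
  -- key 2 : spectrum of T' ⊆ spectrum of T
  have key2 : spectrum ℂ T' ⊆ spectrum ℂ T := by
    intro l hl
    by_contra hlT
    have hA := ContinuousLinearMap.isUnit_iff_bijective.mp (spectrum.notMem_iff.mp hlT)
    apply spectrum.notMem_iff.mpr ?_ hl
    rw [ContinuousLinearMap.isUnit_iff_bijective]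
    constructor
    · intro a b hab
      apply Subtype.val_injective
      apply hA.1
      rw [halg, halg, ← hT', ← hT']
      have h2 := congrArg Subtype.val hab
      rw [halg', halg'] at h2
      simpa using h2
    · intro y
      obtain ⟨x, hx⟩ := hA.2 (y : H)
      rw [halg] at hx
      obtain ⟨m, p, rfl⟩ := hdecomp x
      refine ⟨p, ?_⟩
      apply Subtype.val_injective
      rw [halg']
      have hTx : T (↑m + ↑p) = ↑(T' p) := by rw [map_add, hTm m, zero_add, hT' p]
      rw [hTx, smul_add] at hx
      -- hx : l•↑m + l•↑p - ↑(T' p) = ↑y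
      have hsm : (l • (m:H)) ∈ LinearMap.ker (T : H →ₗ[ℂ] H) := (LinearMap.ker (T : H →ₗ[ℂ] H)).smul_mem _ m.2
      have hsm0 : l • (m : H) = 0 := by
        apply hKO _ hsm
        have : l • (m:H) = ↑y - (l • (p:H) - ↑(T' p)) := by
          rw [← hx]; abel
        rw [this]
        exact Submodule.sub_mem _ y.2
          (Submodule.sub_mem _ (Submodule.smul_mem _ _ p.2) (T' p).2)
      push_cast
      rw [← hx, hsm0]
      abel
  -- key 3 : nonzero spectrum of T is in spectrum of T'
  have key3 : ∀ l : ℂ, l ≠ 0 → l ∈ spectrum ℂ T → l ∈ spectrum ℂ T' := by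
    intro l hl0 hl
    by_contra hlT'
    have hA := ContinuousLinearMap.isUnit_iff_bijective.mp (spectrum.notMem_iff.mp hlT')
    apply spectrum.notMem_iff.mpr ?_ hl
    rw [ContinuousLinearMap.isUnit_iff_bijective]
    constructor
    · -- injectivity
      intro a b hab
      rw [← sub_eq_zero]
      have hsub : (algebraMap ℂ (H →L[ℂ] H) l - T) (a - b) = 0 := by
        rw [map_sub, hab, sub_self]
      rw [halg] at hsub
      obtain ⟨m, p, hmp⟩ := hdecomp (a - b)
      rw [hmp]
      have hTx : T (a - b) = ↑(T' p) := by rw [hmp, map_add, hTm m, zero_add, hT' p]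
      rw [hTx, hmp, smul_add] at hsub
      -- hsub : l•↑m + l•↑p - ↑(T' p) = 0
      have hsm : (l • (m:H)) ∈ LinearMap.ker (T : H →ₗ[ℂ] H) := (LinearMap.ker (T : H →ₗ[ℂ] H)).smul_mem _ m.2
      have hsm0 : l • (m : H) = 0 := by
        apply hKO _ hsm
        have : l • (m:H) = -(l • (p:H) - ↑(T' p)) := by
          rw [← sub_eq_zero]
          rw [← hsub]; abel
        rw [this]
        exact Submodule.neg_mem _
          (Submodule.sub_mem _ (Submodule.smul_mem _ _ p.2) (T' p).2)
      have hm0 : (m : H) = 0 := by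
        rcases smul_eq_zero.mp hsm0 with h | h
        · exact absurd h hl0
        · exact h
      have hp' : l • (p:H) - ↑(T' p) = 0 := by
        rw [← hsub, hm0]
        simp
      have hpz : p = 0 := by
        have : (algebraMap ℂ ((LinearMap.ker (T : H →ₗ[ℂ] H))ᗮ →L[ℂ] (LinearMap.ker (T : H →ₗ[ℂ] H))ᗮ) l - T') p = 0 := by
          apply Subtype.val_injective
          rw [halg']
          push_cast
          simpa using hp'
        exact hA.1 (by rw [this, map_zero])
      rw [hm0, hpz]
      simp
    · -- surjectivity
      intro y
      obtain ⟨m, p, hy⟩ := hdecomp y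
      obtain ⟨u, hu⟩ := hA.2 p
      refine ⟨l⁻¹ • ↑m + ↑u, ?_⟩
      rw [halg]
      have hTu : T ↑u = ↑(T' u) := (hT' u).symm
      have hTn : T (l⁻¹ • (m:H)) = 0 := by rw [map_smul, hTm m, smul_zero]
      rw [map_add, hTn, zero_add, hTu, smul_add, smul_smul, mul_inv_cancel₀ hl0, one_smul]
      have hu2 : l • (u : H) - ↑(T' u) = (p : H) := by
        have h2 := congrArg Subtype.val hu
        rw [halg'] at h2
        push_cast at h2
        exact h2
      rw [hy, ← hu2]
      abel
  -- main equivalence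
  rw [key1, ← spectrum.zero_notMem_iff ℂ]
  constructor
  · intro h0 hacc
    have hmem : ∀ᶠ z in nhds (0:ℂ), z ∉ spectrum ℂ T' :=
      (spectrum.isClosed (𝕜 := ℂ) T').isOpen_compl.eventually_mem h0
    rw [accPt_iff_nhds] at hacc
    obtain ⟨U, hU, hU0⟩ := Filter.eventually_iff_exists_mem.mp hmem
    obtain ⟨z, ⟨hzU, hzT⟩, hz0⟩ := hacc U hU
    exact hU0 z hzU (key3 z hz0 hzT)
  · intro hnacc h0mem
    have hnacc' : ¬ AccPt (0:ℂ) (Filter.principal (spectrum ℂ T')) := by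
      intro hacc'
      exact hnacc (hacc'.mono (Filter.principal_mono.mpr key2))
    obtain ⟨x, hx0, hx⟩ := hiso 0 h0mem hnacc'
    apply hx0
    apply hker0
    simpa using hx
end

section
/- Let T be a bounded linear operator on a complex Hilbert space H with R(T) ⊆ R(T*) and R(T) closed, and let T' := T restricted to N(T)⊥ (a bounded operator on the Hilbert space N(T)⊥). The following are equivalent: (a) 0 is not in the residual spectrum of T'; (b) T' is invertible (bijective with bounded inverse); (c) R(T*) ⊆ R(T) (i.e., T is coposinormal); (d) 0 is not a limit point of the spectrum σ(T). -/
private lemma auxNontrivialCLM {E : Type*} [NormedAddCommGroup E] [NormedSpace ℂ E]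
    [Nontrivial E] : Nontrivial (E →L[ℂ] E) := by
  obtain ⟨v, hv⟩ := exists_ne (0 : E)
  exact ⟨1, 0, fun h => hv (by simpa using ContinuousLinearMap.ext_iff.mp h v)⟩

private lemma auxUnitOfSubsingleton {E : Type*} [NormedAddCommGroup E] [NormedSpace ℂ E]
    (hss : Subsingleton E) (S : E →L[ℂ] E) : IsUnit S := by
  have h1 : S = 1 := by ext x; exact Subsingleton.elim _ _
  rw [h1]; exact isUnit_one

private lemma auxSmulOneNorm {E : Type*} [NormedAddCommGroup E] [NormedSpace ℂ E]
    [CompleteSpace E] (z : ℂ) : ‖z • (1 : E →L[ℂ] E)‖ ≤ ‖z‖ :=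
  ContinuousLinearMap.opNorm_le_bound _ (norm_nonneg z) (fun x => by
    rw [ContinuousLinearMap.smul_apply, ContinuousLinearMap.one_apply, norm_smul])

private lemma auxUnitNearby {E : Type*} [NormedAddCommGroup E] [NormedSpace ℂ E]
    [CompleteSpace E] (S : E →L[ℂ] E) (hu : IsUnit S) :
    ∃ ε > (0:ℝ), ∀ z : ℂ, ‖z‖ < ε → IsUnit (S - z • 1) := by
  by_cases hss : Subsingleton E
  · exact ⟨1, one_pos, fun z _ => auxUnitOfSubsingleton hss _⟩
  haveI : Nontrivial E := not_subsingleton_iff_nontrivial.mp hss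
  haveI : Nontrivial (E →L[ℂ] E) := auxNontrivialCLM
  obtain ⟨u, hu_eq⟩ := hu
  refine ⟨‖(↑(u⁻¹) : E →L[ℂ] E)‖⁻¹, inv_pos.mpr (Units.norm_pos u⁻¹), fun z hz => ?_⟩
  have hnear : ‖(S - z • 1) - ↑u‖ < ‖(↑(u⁻¹) : E →L[ℂ] E)‖⁻¹ := by
    have h5 : S - z • 1 - S = (-z) • 1 := by rw [neg_smul]; abel
    rw [hu_eq, h5]
    calc ‖(-z) • (1 : E →L[ℂ] E)‖ ≤ ‖-z‖ := auxSmulOneNorm _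
      _ = ‖z‖ := norm_neg z
      _ < _ := hz
  exact ⟨u.ofNearby _ hnear, rfl⟩

private lemma auxUnitOfLowerBound {E : Type*} [NormedAddCommGroup E] [NormedSpace ℂ E]
    [CompleteSpace E] (S : E →L[ℂ] E) (c : ℝ) (hc0 : 0 < c)
    (hlow : ∀ x, ‖x‖ ≤ c * ‖S x‖) (z : ℂ) (hz : ‖z‖ ≤ 1/(3*c))
    (hzu : IsUnit (S - z • 1)) : IsUnit S := by
  by_cases hss : Subsingleton E
  · exact auxUnitOfSubsingleton hss _
  haveI : Nontrivial E := not_subsingleton_iff_nontrivial.mp hss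
  haveI : Nontrivial (E →L[ℂ] E) := auxNontrivialCLM
  obtain ⟨u, hu_eq⟩ := hzu
  have hbound : ∀ x : E, ‖x‖ ≤ (3*c/2) * ‖(S - z • 1) x‖ := by
    intro x
    have h2 : (S - z • 1) x + z • x = S x := by
      simp [ContinuousLinearMap.sub_apply, ContinuousLinearMap.smul_apply,
        ContinuousLinearMap.one_apply]
    have h5 : ‖S x‖ ≤ ‖(S - z • 1) x‖ + ‖z • x‖ := by
      rw [← h2]; exact norm_add_le _ _
    have h4 : ‖z • x‖ = ‖z‖ * ‖x‖ := norm_smul _ _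
    have h6 : c * ‖z‖ ≤ 1/3 := by
      have := mul_le_mul_of_nonneg_left hz (le_of_lt hc0)
      calc c * ‖z‖ ≤ c * (1/(3*c)) := this
        _ = 1/3 := by field_simp
    have h7 := hlow x
    nlinarith [norm_nonneg x, norm_nonneg ((S - z • 1) x), norm_nonneg z]
  have hxy : ∀ y, (S - z • 1) ((↑(u⁻¹) : E →L[ℂ] E) y) = y := by
    intro y
    rw [← hu_eq, ← ContinuousLinearMap.mul_apply, u.mul_inv, ContinuousLinearMap.one_apply]
  have hinvnorm : ‖(↑(u⁻¹) : E →L[ℂ] E)‖ ≤ 3*c/2 := by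
    apply ContinuousLinearMap.opNorm_le_bound _ (by positivity)
    intro y
    calc ‖(↑(u⁻¹) : E →L[ℂ] E) y‖ ≤ (3*c/2) * ‖(S - z • 1) ((↑(u⁻¹) : E →L[ℂ] E) y)‖ :=
          hbound _
      _ = (3*c/2) * ‖y‖ := by rw [hxy]
  have hinvpos : 0 < ‖(↑(u⁻¹) : E →L[ℂ] E)‖ := Units.norm_pos _
  have hnear : ‖S - ↑u‖ < ‖(↑(u⁻¹) : E →L[ℂ] E)‖⁻¹ := by
    have he : S - ↑u = z • 1 := by rw [hu_eq]; abel
    have h8 : ‖z • (1 : E →L[ℂ] E)‖ ≤ ‖z‖ := auxSmulOneNorm _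
    have h9 : (3*c/2)⁻¹ ≤ ‖(↑(u⁻¹) : E →L[ℂ] E)‖⁻¹ := inv_anti₀ hinvpos hinvnorm
    have h10 : ‖z‖ < (3*c/2)⁻¹ := by
      have heq2 : (3*c/2)⁻¹ = 2/(3*c) := by field_simp
      rw [heq2]
      have h12 : (1:ℝ)/(3*c) < 2/(3*c) := by gcongr <;> norm_num
      linarith
    rw [he]; linarith
  exact ⟨u.ofNearby S hnear, rfl⟩

private lemma auxAntilip {E F : Type*} [NormedAddCommGroup E] [NormedSpace ℂ E]
    [CompleteSpace E] [NormedAddCommGroup F] [NormedSpace ℂ F] [CompleteSpace F]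
    (S : E →L[ℂ] F) (hinj : Function.Injective S) (hcl : IsClosed (Set.range S)) :
    ∃ c : ℝ, 0 < c ∧ ∀ x, ‖x‖ ≤ c * ‖S x‖ := by
  haveI : CompleteSpace ↥(LinearMap.range (S : E →ₗ[ℂ] F)) := by
    exact (show IsClosed ((LinearMap.range (S : E →ₗ[ℂ] F) : Set F)) by
      rw [LinearMap.coe_range]; exact hcl).completeSpace_coe
  let f := S.codRestrict (LinearMap.range (S : E →ₗ[ℂ] F)) (fun x => LinearMap.mem_range_self _ x)
  have hfker : LinearMap.ker (f : E →ₗ[ℂ] ↥(LinearMap.range (S : E →ₗ[ℂ] F))) = ⊥ := by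
    rw [ContinuousLinearMap.ker_codRestrict]
    exact LinearMap.ker_eq_bot.mpr hinj
  have hfrange : LinearMap.range (f : E →ₗ[ℂ] ↥(LinearMap.range (S : E →ₗ[ℂ] F))) = ⊤ := by
    rw [LinearMap.range_eq_top]
    rintro ⟨y, hy⟩
    obtain ⟨x, hx⟩ := hy
    exact ⟨x, Subtype.ext hx⟩
  let e := ContinuousLinearEquiv.ofBijective f hfker hfrange
  have hnorm : ∀ x, ‖e x‖ = ‖S x‖ := fun x => rfl
  refine ⟨max (↑‖(e.symm : ↥(LinearMap.range (S : E →ₗ[ℂ] F)) →L[ℂ] E)‖₊) 1, lt_of_lt_of_le one_pos (le_max_right _ _), fun x => ?_⟩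
  have ha := e.antilipschitz
  have h1 : ‖x‖ ≤ ↑‖(e.symm : ↥(LinearMap.range (S : E →ₗ[ℂ] F)) →L[ℂ] E)‖₊ * ‖e x‖ := by
    have := ha.le_mul_dist x 0
    simpa [dist_zero_right, map_zero] using this
  calc ‖x‖ ≤ ↑‖(e.symm : ↥(LinearMap.range (S : E →ₗ[ℂ] F)) →L[ℂ] E)‖₊ * ‖e x‖ := h1
    _ = ↑‖(e.symm : ↥(LinearMap.range (S : E →ₗ[ℂ] F)) →L[ℂ] E)‖₊ * ‖S x‖ := by rw [hnorm]
    _ ≤ max (↑‖(e.symm : ↥(LinearMap.range (S : E →ₗ[ℂ] F)) →L[ℂ] E)‖₊) 1 * ‖S x‖ :=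
        mul_le_mul_of_nonneg_right (le_max_left _ _) (norm_nonneg _)


set_option maxHeartbeats 1000000 in
/-- Proposition 3.5: Let `T` be a posinormal bounded operator (`R(T) ⊆ R(T*)`) with
closed range on a complex Hilbert space `H`, and let `T' = T|_{N(T)ᗮ}`.  The following
are equivalent: (a) `0` is not in the residual spectrum of `T'`; (b) `T'` is invertible;
(c) `R(T*) ⊆ R(T)` (`T` is coposinormal); (d) `0` is not a limit point of `σ(T)`. -/
theorem stmt9 {H : Type*} [NormedAddCommGroup H] [InnerProductSpace ℂ H] [CompleteSpace H]
    (T : H →L[ℂ] H)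
    (hpos : LinearMap.range (T : H →ₗ[ℂ] H) ≤ LinearMap.range (ContinuousLinearMap.adjoint T : H →ₗ[ℂ] H))
    (hclosed : IsClosed (Set.range T))
    (T' : (LinearMap.ker (T : H →ₗ[ℂ] H))ᗮ →L[ℂ] (LinearMap.ker (T : H →ₗ[ℂ] H))ᗮ)
    (hT' : ∀ x : (LinearMap.ker (T : H →ₗ[ℂ] H))ᗮ, (T' x : H) = T x) :
    List.TFAE
      [(0 : ℂ) ∉ residualSpectrum T',
       IsUnit T',
       LinearMap.range (ContinuousLinearMap.adjoint T : H →ₗ[ℂ] H) ≤ LinearMap.range (T : H →ₗ[ℂ] H),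
       ¬ AccPt (0 : ℂ) (Filter.principal (spectrum ℂ T))] := by
  classical
  haveI : CompleteSpace (LinearMap.ker (T : H →ₗ[ℂ] H)) := (ContinuousLinearMap.isClosed_ker T).completeSpace_coe
  haveI : CompleteSpace ↥(LinearMap.ker (T : H →ₗ[ℂ] H))ᗮ := (LinearMap.ker (T : H →ₗ[ℂ] H)).isClosed_orthogonal.completeSpace_coe
  have hmem : ∀ x : ↥(LinearMap.ker (T : H →ₗ[ℂ] H))ᗮ, T (x : H) ∈ (LinearMap.ker (T : H →ₗ[ℂ] H))ᗮ := fun x => (hT' x) ▸ (T' x).2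
  have hker0 : ∀ x : ↥(LinearMap.ker (T : H →ₗ[ℂ] H))ᗮ, T' x = 0 → x = 0 := by
    intro x hx
    have h1 : T (x : H) = 0 := by rw [← hT' x, hx]; rfl
    have h2 : (x : H) ∈ LinearMap.ker (T : H →ₗ[ℂ] H) := h1
    have h3 := (Submodule.mem_orthogonal (LinearMap.ker (T : H →ₗ[ℂ] H)) (x : H)).mp x.2 _ h2
    have : (x : H) = 0 := inner_self_eq_zero.mp h3
    exact Subtype.ext this
  have hinj : Function.Injective T' := by
    intro a b hab
    have h : T' (a - b) = 0 := by rw [map_sub, hab, sub_self]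
    have := hker0 _ h
    rwa [sub_eq_zero] at this
  have hrange : Set.range T' = (Subtype.val : ↥(LinearMap.ker (T : H →ₗ[ℂ] H))ᗮ → H) ⁻¹' (Set.range T) := by
    ext y
    constructor
    · rintro ⟨x, rfl⟩
      exact ⟨(x : H), (hT' x).symm⟩
    · rintro ⟨x, hx⟩
      obtain ⟨x₀, hx₀, x₁, hx₁, rfl⟩ := (LinearMap.ker (T : H →ₗ[ℂ] H)).exists_add_mem_mem_orthogonal x
      refine ⟨⟨x₁, hx₁⟩, ?_⟩
      apply Subtype.val_injective
      rw [hT']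
      have hTx₀ : T x₀ = 0 := hx₀
      simpa [map_add, hTx₀] using hx
  have hclosed' : IsClosed (Set.range T') := by
    rw [hrange]; exact hclosed.preimage continuous_subtype_val
  have hsurj_iff_unit : IsUnit T' ↔ Function.Surjective T' :=
    ContinuousLinearMap.isUnit_iff_bijective.trans ⟨fun h => h.2, fun h => ⟨hinj, h⟩⟩
  have h12 : ((0 : ℂ) ∉ residualSpectrum T') ↔ IsUnit T' := by
    rw [hsurj_iff_unit]
    have h0 : T' - (0 : ℂ) • (1 : ↥(LinearMap.ker (T : H →ₗ[ℂ] H))ᗮ →L[ℂ] ↥(LinearMap.ker (T : H →ₗ[ℂ] H))ᗮ) = T' := by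
      ext x; simp
    unfold residualSpectrum
    simp only [Set.mem_setOf_eq, h0]
    constructor
    · intro h
      have hdense : Dense (Set.range T') := by
        by_contra hd
        exact h ⟨hinj, hd⟩
      rw [dense_iff_closure_eq, hclosed'.closure_eq] at hdense
      exact Set.range_eq_univ.mp hdense
    · intro hs h
      exact h.2 (by rw [dense_iff_closure_eq, hclosed'.closure_eq]; exact hs.range_eq)
  have hadj_mem : LinearMap.range (ContinuousLinearMap.adjoint T : H →ₗ[ℂ] H) ≤ (LinearMap.ker (T : H →ₗ[ℂ] H))ᗮ := by
    rintro _ ⟨v, rfl⟩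
    rw [Submodule.mem_orthogonal]
    intro u hu
    rw [ContinuousLinearMap.coe_coe, ContinuousLinearMap.adjoint_inner_right]
    rw [show T u = 0 from hu, inner_zero_left]
  have h23 : IsUnit T' ↔
      LinearMap.range (ContinuousLinearMap.adjoint T : H →ₗ[ℂ] H) ≤ LinearMap.range (T : H →ₗ[ℂ] H) := by
    rw [hsurj_iff_unit]
    constructor
    · intro hs y hy
      obtain ⟨x, hx⟩ := hs ⟨y, hadj_mem hy⟩
      exact ⟨(x : H), by rw [ContinuousLinearMap.coe_coe, ← hT' x, hx]⟩
    · intro hle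
      have hKer : LinearMap.ker (T : H →ₗ[ℂ] H) = (LinearMap.range (ContinuousLinearMap.adjoint T : H →ₗ[ℂ] H))ᗮ := by
        ext x
        constructor
        · intro hx
          rw [Submodule.mem_orthogonal]
          rintro _ ⟨v, rfl⟩
          rw [ContinuousLinearMap.coe_coe, ContinuousLinearMap.adjoint_inner_left]
          rw [show T x = 0 from hx, inner_zero_right]
        · intro hx
          have h1 : (inner ℂ ((ContinuousLinearMap.adjoint T) (T x)) x : ℂ) = 0 :=
            (Submodule.mem_orthogonal _ x).mp hx _ ⟨T x, rfl⟩
          have h2 : (inner ℂ (T x) (T x) : ℂ) = 0 := by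
            rw [← ContinuousLinearMap.adjoint_inner_left]
            exact h1
          exact inner_self_eq_zero.mp h2
      have hle2 : (LinearMap.ker (T : H →ₗ[ℂ] H))ᗮ ≤ LinearMap.range (T : H →ₗ[ℂ] H) := by
        rw [hKer, Submodule.orthogonal_orthogonal_eq_closure]
        have hcl : IsClosed ((LinearMap.range (T : H →ₗ[ℂ] H) : Submodule ℂ H) : Set H) := by
          convert hclosed using 1
          exact LinearMap.coe_range _
        exact Submodule.topologicalClosure_minimal _ hle hcl
      intro y
      obtain ⟨x, hx⟩ := hle2 y.2
      have : y ∈ Set.range T' := by rw [hrange]; exact ⟨x, hx⟩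
      exact this
  have hdisj : ∀ a ∈ (LinearMap.ker (T : H →ₗ[ℂ] H))ᗮ, ∀ b ∈ LinearMap.ker (T : H →ₗ[ℂ] H), a + b = 0 → a = 0 ∧ b = 0 := by
    intro a ha b hb hab
    have ha' : a ∈ LinearMap.ker (T : H →ₗ[ℂ] H) := by
      rw [show a = -b from eq_neg_of_add_eq_zero_left hab]
      exact neg_mem hb
    have h0 : (inner ℂ a a : ℂ) = 0 := (Submodule.mem_orthogonal _ a).mp ha a ha'
    have ha0 : a = 0 := inner_self_eq_zero.mp h0
    exact ⟨ha0, by rwa [ha0, zero_add] at hab⟩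
  have happ : ∀ (z : ℂ) (x : ↥(LinearMap.ker (T : H →ₗ[ℂ] H))ᗮ),
      (((T' - z • (1 : ↥(LinearMap.ker (T : H →ₗ[ℂ] H))ᗮ →L[ℂ] ↥(LinearMap.ker (T : H →ₗ[ℂ] H))ᗮ)) x :
        ↥(LinearMap.ker (T : H →ₗ[ℂ] H))ᗮ) : H) = T (x : H) - z • (x : H) := by
    intro z x
    simp [ContinuousLinearMap.sub_apply, ContinuousLinearMap.smul_apply,
      ContinuousLinearMap.one_apply, hT']
  have happH : ∀ (z : ℂ) (x : H), (T - z • 1) x = T x - z • x := by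
    intro z x
    simp [ContinuousLinearMap.sub_apply, ContinuousLinearMap.smul_apply,
      ContinuousLinearMap.one_apply]
  have htransfer' : ∀ z : ℂ, Function.Bijective (T - z • (1 : H →L[ℂ] H)) →
      Function.Bijective (T' - z • (1 : ↥(LinearMap.ker (T : H →ₗ[ℂ] H))ᗮ →L[ℂ] ↥(LinearMap.ker (T : H →ₗ[ℂ] H))ᗮ)) := by
    intro z hb
    constructor
    · intro a b hab
      have h1 : (T - z • 1) (a : H) = (T - z • 1) (b : H) := by
        rw [happH, happH, ← happ, ← happ, hab]
      exact Subtype.ext (hb.1 h1)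
    · intro y
      obtain ⟨x, hx⟩ := hb.2 (y : H)
      obtain ⟨x₀, hx₀, x₁, hx₁, rfl⟩ := (LinearMap.ker (T : H →ₗ[ℂ] H)).exists_add_mem_mem_orthogonal x
      have hTx₀ : T x₀ = 0 := hx₀
      have hx' : T x₁ - (z • x₀ + z • x₁) = (y : H) := by
        rw [happH] at hx
        rwa [map_add, hTx₀, zero_add, smul_add] at hx
      have heq : ((T x₁ - z • x₁) - (y : H)) + (-(z • x₀)) = 0 := by
        rw [← hx']; abel
      have hA : (T x₁ - z • x₁) - (y : H) = 0 ∧ -(z • x₀) = 0 := by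
        refine hdisj _ ?_ _ ?_ heq
        · exact sub_mem (sub_mem (hmem ⟨x₁, hx₁⟩) (Submodule.smul_mem _ _ hx₁)) y.2
        · exact neg_mem (Submodule.smul_mem _ _ hx₀)
      refine ⟨⟨x₁, hx₁⟩, Subtype.ext ?_⟩
      rw [happ]
      exact sub_eq_zero.mp hA.1
  have htransfer : ∀ z : ℂ, z ≠ 0 → Function.Bijective (T' - z • (1 : ↥(LinearMap.ker (T : H →ₗ[ℂ] H))ᗮ →L[ℂ] ↥(LinearMap.ker (T : H →ₗ[ℂ] H))ᗮ)) →
      Function.Bijective (T - z • (1 : H →L[ℂ] H)) := by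
    intro z hz hb
    constructor
    · have key : ∀ x : H, (T - z • 1) x = 0 → x = 0 := by
        intro x hx
        obtain ⟨x₀, hx₀, x₁, hx₁, rfl⟩ := (LinearMap.ker (T : H →ₗ[ℂ] H)).exists_add_mem_mem_orthogonal x
        have hTx₀ : T x₀ = 0 := hx₀
        rw [happH, map_add, hTx₀, zero_add, smul_add] at hx
        have heq : (T x₁ - z • x₁) + (-(z • x₀)) = 0 := by rw [← hx]; abel
        have hA : (T x₁ - z • x₁) = 0 ∧ -(z • x₀) = 0 := by
          refine hdisj _ ?_ _ ?_ heq
          · exact sub_mem (hmem ⟨x₁, hx₁⟩) (Submodule.smul_mem _ _ hx₁)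
          · exact neg_mem (Submodule.smul_mem _ _ hx₀)
        have hx₁0 : x₁ = 0 := by
          have h2 : (T' - z • (1 : ↥(LinearMap.ker (T : H →ₗ[ℂ] H))ᗮ →L[ℂ] ↥(LinearMap.ker (T : H →ₗ[ℂ] H))ᗮ)) (⟨x₁, hx₁⟩ : ↥(LinearMap.ker (T : H →ₗ[ℂ] H))ᗮ) = 0 := by
            apply Subtype.ext
            rw [happ]
            exact hA.1
          have h3 : (⟨x₁, hx₁⟩ : ↥(LinearMap.ker (T : H →ₗ[ℂ] H))ᗮ) = 0 := by
            apply hb.1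
            rw [h2, map_zero]
          simpa using congrArg Subtype.val h3
        have hx₀0 : x₀ = 0 := by
          have := hA.2
          rw [neg_eq_zero, smul_eq_zero] at this
          exact this.resolve_left hz
        rw [hx₀0, hx₁0, add_zero]
      intro a b hab
      have : a - b = 0 := key _ (by rw [map_sub, hab, sub_self])
      exact sub_eq_zero.mp this
    · intro y
      obtain ⟨y₀, hy₀, y₁, hy₁, rfl⟩ := (LinearMap.ker (T : H →ₗ[ℂ] H)).exists_add_mem_mem_orthogonal y
      obtain ⟨x₁, hx₁⟩ := hb.2 ⟨y₁, hy₁⟩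
      have h1 : T (x₁ : H) - z • (x₁ : H) = y₁ := by
        rw [← happ]
        exact congrArg Subtype.val hx₁
      have hTy₀ : T y₀ = 0 := hy₀
      refine ⟨(x₁ : H) + (-(z⁻¹)) • y₀, ?_⟩
      rw [happH, map_add, map_smul, hTy₀, smul_zero, add_zero, smul_add, smul_smul]
      rw [mul_neg, mul_inv_cancel₀ hz, neg_one_smul, ← h1]
      abel
  have hTsub_unit : ∀ z : ℂ, z ∉ spectrum ℂ T ↔ IsUnit (T - z • (1 : H →L[ℂ] H)) := by
    intro z
    rw [spectrum.notMem_iff, Algebra.algebraMap_eq_smul_one, ← neg_sub]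
    exact IsUnit.neg_iff _
  have h2to4 : IsUnit T' → ¬ AccPt (0 : ℂ) (Filter.principal (spectrum ℂ T)) := by
    intro hu hacc
    rw [accPt_iff_nhds] at hacc
    obtain ⟨ε, hε, hunit⟩ := auxUnitNearby T' hu
    obtain ⟨z, ⟨hzball, hzspec⟩, hzne⟩ := hacc (Metric.ball 0 ε) (Metric.ball_mem_nhds 0 hε)
    have hznorm : ‖z‖ < ε := by simpa [Metric.mem_ball, dist_zero_right] using hzball
    have hbij := htransfer z hzne (ContinuousLinearMap.isUnit_iff_bijective.mp (hunit z hznorm))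
    exact absurd hzspec ((hTsub_unit z).mpr (ContinuousLinearMap.isUnit_iff_bijective.mpr hbij))
  have h4to2 : ¬ AccPt (0 : ℂ) (Filter.principal (spectrum ℂ T)) → IsUnit T' := by
    intro hacc
    obtain ⟨c, hc0, hc⟩ := auxAntilip T' hinj hclosed'
    rw [accPt_iff_nhds] at hacc
    push_neg at hacc
    obtain ⟨U, hU, hU0⟩ := hacc
    obtain ⟨ε, hε0, hball⟩ := Metric.mem_nhds_iff.mp hU
    set δ : ℝ := min (ε/2) (1/(3*c)) with hδdef
    have hδ0 : 0 < δ := lt_min (by positivity) (by positivity)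
    have hδε : δ < ε := lt_of_le_of_lt (min_le_left _ _) (by linarith)
    have hδc : δ ≤ 1/(3*c) := min_le_right _ _
    have hzne : ((δ : ℝ) : ℂ) ≠ 0 := by
      simpa using ne_of_gt hδ0
    have hznorm : ‖((δ : ℝ) : ℂ)‖ = δ := by
      rw [Complex.norm_real, Real.norm_eq_abs, abs_of_pos hδ0]
    have hz_not : ((δ : ℝ) : ℂ) ∉ spectrum ℂ T := by
      intro hmem2
      apply hzne
      apply hU0
      refine ⟨hball ?_, hmem2⟩
      rw [Metric.mem_ball, dist_zero_right, hznorm]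
      exact hδε
    have hbijH : Function.Bijective (T - ((δ : ℝ) : ℂ) • (1 : H →L[ℂ] H)) :=
      ContinuousLinearMap.isUnit_iff_bijective.mp ((hTsub_unit _).mp hz_not)
    have hu' : IsUnit (T' - ((δ : ℝ) : ℂ) •
        (1 : ↥(LinearMap.ker (T : H →ₗ[ℂ] H))ᗮ →L[ℂ] ↥(LinearMap.ker (T : H →ₗ[ℂ] H))ᗮ)) :=
      ContinuousLinearMap.isUnit_iff_bijective.mpr (htransfer' _ hbijH)
    exact auxUnitOfLowerBound T' c hc0 hc _ (by rw [hznorm]; exact hδc) hu'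
  tfae_have 1 ↔ 2 := h12
  tfae_have 2 ↔ 3 := h23
  tfae_have 2 → 4 := h2to4
  tfae_have 4 → 2 := h4to2
  tfae_finish
end

section
/- Let A and B be commuting bounded linear operators on a complex Hilbert space H with N(A) ⊆ N(A*) and N(B) ⊆ N(B*). Let B' denote the compression of B to N(A)⊥, i.e., B' = P ∘ B restricted to N(A)⊥ where P is the orthogonal projection of H onto N(A)⊥, regarded as a bounded operator on the Hilbert space N(A)⊥. If N(B') ⊆ N(B'*), then N(AB) ⊆ N((AB)*). -/
open ContinuousLinearMap

/-- Theorem 4.2(a): Let `A`, `B` be commuting bounded operators on a complex Hilbert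
space `H` with `N(A) ⊆ N(A*)` and `N(B) ⊆ N(B*)`, and let `B'` be the compression of
`B` to `N(A)ᗮ` (i.e. `B' x = P (B x)` for `x ∈ N(A)ᗮ`, where `P` is the orthogonal
projection onto `N(A)ᗮ`; equivalently `B x - B' x ∈ N(A)`, since `N(A)` is closed).
If `N(B') ⊆ N(B'*)`, then `N(AB) ⊆ N((AB)*)`. -/
theorem stmt10 {H : Type*} [NormedAddCommGroup H] [InnerProductSpace ℂ H] [CompleteSpace H]
    (A B : H →L[ℂ] H) (hcomm : A ∘L B = B ∘L A)
    (hA : LinearMap.ker (A : H →ₗ[ℂ] H) ≤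
      LinearMap.ker (ContinuousLinearMap.adjoint A : H →ₗ[ℂ] H))
    (hB : LinearMap.ker (B : H →ₗ[ℂ] H) ≤
      LinearMap.ker (ContinuousLinearMap.adjoint B : H →ₗ[ℂ] H))
    (B' : (LinearMap.ker (A : H →ₗ[ℂ] H))ᗮ →L[ℂ] (LinearMap.ker (A : H →ₗ[ℂ] H))ᗮ)
    (hB' : ∀ x : (LinearMap.ker (A : H →ₗ[ℂ] H))ᗮ, B x - (B' x : H) ∈ LinearMap.ker (A : H →ₗ[ℂ] H))
    (hqp : LinearMap.ker (B' :
      (LinearMap.ker (A : H →ₗ[ℂ] H))ᗮ →ₗ[ℂ] (LinearMap.ker (A : H →ₗ[ℂ] H))ᗮ) ≤ LinearMap.ker (ContinuousLinearMap.adjoint B' :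
      (LinearMap.ker (A : H →ₗ[ℂ] H))ᗮ →ₗ[ℂ] (LinearMap.ker (A : H →ₗ[ℂ] H))ᗮ)) :
    LinearMap.ker (A ∘L B : H →ₗ[ℂ] H) ≤ LinearMap.ker (ContinuousLinearMap.adjoint (A ∘L B) : H →ₗ[ℂ] H) := by
  -- ker A is invariant under B
  have hBinv : ∀ w ∈ LinearMap.ker (A : H →ₗ[ℂ] H), B w ∈ LinearMap.ker (A : H →ₗ[ℂ] H) := by
    intro w hw
    have : A (B w) = B (A w) := congrFun (congrArg DFunLike.coe hcomm) w
    simp only [LinearMap.mem_ker, ContinuousLinearMap.coe_coe] at hw ⊢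
    rw [this, hw, map_zero]
  -- adjoints commute
  have hadj : adjoint A ∘L adjoint B = adjoint B ∘L adjoint A := by
    have := congrArg ContinuousLinearMap.adjoint hcomm
    rw [adjoint_comp, adjoint_comp] at this
    exact this.symm
  intro x hx
  rw [LinearMap.mem_ker] at hx ⊢
  obtain ⟨u, hu, v, hv, rfl⟩ := (LinearMap.ker (A : H →ₗ[ℂ] H)).exists_add_mem_mem_orthogonal x
  set v' : ((LinearMap.ker (A : H →ₗ[ℂ] H))ᗮ : Submodule ℂ H) := ⟨v, hv⟩ with hv'
  -- B v ∈ ker A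
  have hABv : A (B v) = 0 := by
    have h1 : A (B u) = 0 := (hBinv u hu)
    have : A (B (u + v)) = 0 := hx
    simpa [map_add, h1] using this
  have hBvker : B v ∈ LinearMap.ker (A : H →ₗ[ℂ] H) := hABv
  -- B' v' = 0
  have hB'v : B' v' = 0 := by
    have hmem1 : (B' v' : H) ∈ LinearMap.ker (A : H →ₗ[ℂ] H) := by
      have := hB' v'
      have : (B' v' : H) = B v - (B v - (B' v' : H)) := (sub_sub_cancel _ _).symm
      rw [this]
      exact Submodule.sub_mem _ hBvker (hB' v')
    have hmem2 : (B' v' : H) ∈ (LinearMap.ker (A : H →ₗ[ℂ] H))ᗮ := (B' v').2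
    have : (B' v' : H) = 0 := by
      have := Submodule.inner_right_of_mem_orthogonal hmem1 hmem2
      simpa [inner_self_eq_zero] using this
    exact Subtype.ext this
  have hadjB'v : ContinuousLinearMap.adjoint B' v' = 0 := hqp hB'v
  -- B* v = 0
  have hBstarv : adjoint B v = 0 := by
    apply ext_inner_right ℂ
    intro z
    rw [adjoint_inner_left, inner_zero_left]
    obtain ⟨z₀, hz₀, z₁, hz₁, rfl⟩ := (LinearMap.ker (A : H →ₗ[ℂ] H)).exists_add_mem_mem_orthogonal z
    set z' : ((LinearMap.ker (A : H →ₗ[ℂ] H))ᗮ : Submodule ℂ H) := ⟨z₁, hz₁⟩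
    have h0 : (inner ℂ v (B z₀) : ℂ) = 0 :=
      Submodule.inner_left_of_mem_orthogonal (hBinv z₀ hz₀) hv
    have h1 : (inner ℂ v (B z₁) : ℂ) = 0 := by
      have hsplit : B z₁ = (B z₁ - (B' z' : H)) + (B' z' : H) := (sub_add_cancel _ _).symm
      rw [hsplit, inner_add_right]
      have ha : (inner ℂ v (B z₁ - (B' z' : H)) : ℂ) = 0 :=
        Submodule.inner_left_of_mem_orthogonal (hB' z') hv
      have hb : (inner ℂ v ((B' z' : H)) : ℂ) = 0 := by
        have : (inner ℂ v' (B' z') : ℂ) = inner ℂ (ContinuousLinearMap.adjoint B' v') z' := by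
          rw [adjoint_inner_left]
        have h2 : (inner ℂ v' (B' z') : ℂ) = 0 := by rw [this, hadjB'v, inner_zero_left]
        simpa [Submodule.coe_inner] using h2
      rw [ha, hb, add_zero]
    rw [map_add, inner_add_right, h0, h1, add_zero]
  -- finish
  rw [adjoint_comp, ContinuousLinearMap.coe_coe, ContinuousLinearMap.comp_apply, map_add]
  have hu' : adjoint A u = 0 := hA hu
  have hAv : adjoint B (adjoint A v) = adjoint A (adjoint B v) :=
    (congrFun (congrArg DFunLike.coe hadj.symm) v)
  rw [hu', zero_add, hAv, hBstarv, map_zero]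
end

section
/- Let A and B be commuting bounded linear operators on a complex Hilbert space H with N(A) ⊆ N(A*), N(B) ⊆ N(B*), and both R(A) and R(B) closed. Since N(A) is invariant under B, let Z = B restricted to N(A), a bounded operator on the Hilbert space N(A). If N(Z*) ⊆ N(Z), then R(AB) is closed. -/
set_option maxHeartbeats 1000000

open ContinuousLinearMap

/-- Orthogonal sum of closed subspaces is closed. -/
private theorem aux_sup_closed {H : Type*} [NormedAddCommGroup H] [InnerProductSpace ℂ H]
    [CompleteSpace H] (U V : Submodule ℂ H) (hU : IsClosed (U : Set H))
    (hV : IsClosed (V : Set H)) (hperp : V ≤ Uᗮ) :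
    IsClosed ((U ⊔ V : Submodule ℂ H) : Set H) := by
  haveI : CompleteSpace U := hU.completeSpace_coe
  apply IsSeqClosed.isClosed
  intro x p hx hxp
  have hmem : ∀ n, ∃ u ∈ U, ∃ v ∈ V, u + v = x n := fun n => Submodule.mem_sup.mp (hx n)
  choose u hu v hv huv using hmem
  set f : H → H := fun w => (U.orthogonalProjectionOnto w : H) with hf
  have hfc : Continuous f := (U.subtypeL.comp (U.orthogonalProjectionOnto)).continuous
  have hfu : ∀ n, f (x n) = u n := by
    intro n
    rw [← huv n, hf]
    simp only [map_add,
      Submodule.orthogonalProjectionOnto_apply_of_mem_orthogonal (hperp (hv n)), add_zero]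
    exact Submodule.starProjection_eq_self_iff.mpr (hu n)
  have hul : Filter.Tendsto u Filter.atTop (nhds (f p)) := by
    have h := hfc.continuousAt.tendsto.comp hxp
    have heq : f ∘ x = u := funext hfu
    rwa [heq] at h
  have hvl : Filter.Tendsto v Filter.atTop (nhds (p - f p)) := by
    have hveq : v = fun n => x n - u n := funext fun n => by rw [← huv n]; abel
    rw [hveq]
    simpa using hxp.sub hul
  have hvp : p - f p ∈ V := hV.mem_of_tendsto hvl (Filter.Eventually.of_forall hv)
  have hfp : f p ∈ U := (U.orthogonalProjectionOnto p).2
  exact Submodule.mem_sup.mpr ⟨f p, hfp, p - f p, hvp, by abel⟩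

/-- Image of a closed subspace containing the kernel, under a closed-range operator,
is closed. -/
private theorem aux_image_closed {H : Type*} [NormedAddCommGroup H] [InnerProductSpace ℂ H]
    [CompleteSpace H] (A : H →L[ℂ] H) (hAran : IsClosed (Set.range A))
    (S : Submodule ℂ H) (hS : IsClosed (S : Set H)) (hker : LinearMap.ker (A : H →ₗ[ℂ] H) ≤ S) :
    IsClosed (A '' (S : Set H)) := by
  set RA : Submodule ℂ H := LinearMap.range (A : H →ₗ[ℂ] H) with hRA
  have hRAc : IsClosed (RA : Set H) := by
    have : (RA : Set H) = Set.range A := by ext y; simp [hRA, LinearMap.mem_range]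
    rwa [this]
  haveI : CompleteSpace RA := hRAc.completeSpace_coe
  set A₁ : H →L[ℂ] RA := A.codRestrict RA (fun x => LinearMap.mem_range_self _ x) with hA₁
  have hsurj : Function.Surjective A₁ := by
    rintro ⟨y, hy⟩
    obtain ⟨x, hx⟩ := hy
    exact ⟨x, Subtype.ext hx⟩
  obtain ⟨C, hC0, hC⟩ := ContinuousLinearMap.exists_preimage_norm_le A₁ hsurj
  apply IsSeqClosed.isClosed
  intro z p hz hzp
  choose s hsS hsz using hz
  have hpR : p ∈ RA := by
    have : ∀ n, z n ∈ (RA : Set H) := fun n => by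
      rw [← hsz n]; exact LinearMap.mem_range_self _ _
    exact hRAc.mem_of_tendsto hzp (Filter.Eventually.of_forall this)
  obtain ⟨x, hx⟩ := hpR
  have hzmem : ∀ n, z n - p ∈ RA := fun n => by
    rw [← hsz n, ← hx]; exact ⟨s n - x, by simp⟩
  have hun : ∀ n, ∃ w, A₁ w = (⟨z n - p, hzmem n⟩ : RA) ∧ ‖w‖ ≤ C * ‖(⟨z n - p, hzmem n⟩ : RA)‖ :=
    fun n => hC _
  choose w hw hwn using hun
  have hwA : ∀ n, A (w n) = z n - p := by
    intro n
    have := congrArg (Subtype.val) (hw n)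
    exact this
  have hw0 : Filter.Tendsto w Filter.atTop (nhds 0) := by
    apply squeeze_zero_norm (fun n => by simpa using hwn n)
    have hz0 : Filter.Tendsto (fun n => z n - p) Filter.atTop (nhds (p - p)) :=
      hzp.sub tendsto_const_nhds
    rw [sub_self] at hz0
    simpa using (hz0.norm.const_mul C)
  have hkn : ∀ n, s n - w n - x ∈ LinearMap.ker (A : H →ₗ[ℂ] H) := by
    intro n
    rw [ContinuousLinearMap.coe_coe] at hx
    simp only [LinearMap.mem_ker, map_sub, ContinuousLinearMap.coe_coe, hwA n, hsz n, hx]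
    abel
  have htS : ∀ n, w n + x ∈ S := by
    intro n
    have h1 : s n - (s n - w n - x) ∈ S := Submodule.sub_mem S (hsS n) (hker (hkn n))
    have : s n - (s n - w n - x) = w n + x := by abel
    rwa [this] at h1
  have hxl : Filter.Tendsto (fun n => w n + x) Filter.atTop (nhds x) := by
    simpa using hw0.add (tendsto_const_nhds (x := x))
  have hxS : x ∈ S := hS.mem_of_tendsto hxl (Filter.Eventually.of_forall htS)
  exact ⟨x, hxS, hx⟩

/-- Theorem 4.2(b): Let `A`, `B` be commuting bounded operators on a complex Hilbert
space `H` with `N(A) ⊆ N(A*)`, `N(B) ⊆ N(B*)`, and `R(A)`, `R(B)` closed.  Let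
`Z = B|_{N(A)}` (well defined since `N(A)` is invariant under `B`).  If
`N(Z*) ⊆ N(Z)`, then `R(AB)` is closed. -/
theorem stmt11 {H : Type*} [NormedAddCommGroup H] [InnerProductSpace ℂ H] [CompleteSpace H]
    (A B : H →L[ℂ] H) (hcomm : A ∘L B = B ∘L A)
    (hA : LinearMap.ker (A : H →ₗ[ℂ] H) ≤ LinearMap.ker (ContinuousLinearMap.adjoint A : H →ₗ[ℂ] H))
    (hB : LinearMap.ker (B : H →ₗ[ℂ] H) ≤ LinearMap.ker (ContinuousLinearMap.adjoint B : H →ₗ[ℂ] H))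
    (hAran : IsClosed (Set.range A)) (hBran : IsClosed (Set.range B))
    (Z : LinearMap.ker (A : H →ₗ[ℂ] H) →L[ℂ] LinearMap.ker (A : H →ₗ[ℂ] H))
    (hZ : ∀ x : LinearMap.ker (A : H →ₗ[ℂ] H), (Z x : H) = B x)
    (hcoqp : LinearMap.ker (ContinuousLinearMap.adjoint Z).toLinearMap ≤ LinearMap.ker Z.toLinearMap) :
    IsClosed (Set.range (A ∘L B)) := by
  classical
  have hRBc : IsClosed ((LinearMap.range (B : H →ₗ[ℂ] H) : Submodule ℂ H) : Set H) := by
    have : ((LinearMap.range (B : H →ₗ[ℂ] H) : Submodule ℂ H) : Set H) = Set.range B := by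
      ext y; simp [LinearMap.mem_range]
    rwa [this]
  -- K : image in H of ker (adjoint Z)
  have hKc : IsClosed (((LinearMap.ker (ContinuousLinearMap.adjoint Z).toLinearMap).map
      (LinearMap.ker (A : H →ₗ[ℂ] H)).subtype : Submodule ℂ H) : Set H) := by
    have h1 : IsClosed ((LinearMap.ker (ContinuousLinearMap.adjoint Z).toLinearMap :
        Submodule ℂ (LinearMap.ker (A : H →ₗ[ℂ] H))) : Set (LinearMap.ker (A : H →ₗ[ℂ] H))) :=
      ContinuousLinearMap.isClosed_ker _
    have h3 : IsComplete (Subtype.val '' ((LinearMap.ker (ContinuousLinearMap.adjoint Z).toLinearMap :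
        Submodule ℂ (LinearMap.ker (A : H →ₗ[ℂ] H))) : Set (LinearMap.ker (A : H →ₗ[ℂ] H)))) :=
      (isComplete_image_iff isometry_subtype_coe.isUniformInducing).mpr h1.isComplete
    have heq : (((LinearMap.ker (ContinuousLinearMap.adjoint Z).toLinearMap).map
        (LinearMap.ker (A : H →ₗ[ℂ] H)).subtype : Submodule ℂ H) : Set H) =
        Subtype.val '' ((LinearMap.ker (ContinuousLinearMap.adjoint Z).toLinearMap :
        Submodule ℂ (LinearMap.ker (A : H →ₗ[ℂ] H))) : Set (LinearMap.ker (A : H →ₗ[ℂ] H))) := by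
      ext y; simp [Submodule.mem_map, Set.mem_image]
    rw [heq]
    exact h3.isClosed
  have hKB : ∀ y : LinearMap.ker (A : H →ₗ[ℂ] H), y ∈ LinearMap.ker (ContinuousLinearMap.adjoint Z).toLinearMap →
      B (y : H) = 0 := by
    intro y hy
    have hz : Z y = 0 := hcoqp hy
    rw [← hZ y, hz]; simp
  have hperp : (LinearMap.ker (ContinuousLinearMap.adjoint Z).toLinearMap).map (LinearMap.ker (A : H →ₗ[ℂ] H)).subtype ≤
      (LinearMap.range (B : H →ₗ[ℂ] H) : Submodule ℂ H)ᗮ := by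
    rintro x ⟨y, hy, rfl⟩
    rw [Submodule.mem_orthogonal]
    rintro v ⟨w, rfl⟩
    have hxB : ((LinearMap.ker (A : H →ₗ[ℂ] H)).subtype y : H) ∈
        LinearMap.ker (ContinuousLinearMap.adjoint B : H →ₗ[ℂ] H) :=
      hB (by simpa [LinearMap.mem_ker] using hKB y hy)
    show (inner ℂ (B w) (((LinearMap.ker (A : H →ₗ[ℂ] H)).subtype y : H)) : ℂ) = 0
    rw [← ContinuousLinearMap.adjoint_inner_right, (show (ContinuousLinearMap.adjoint B) _ = 0 from LinearMap.mem_ker.mp hxB), inner_zero_right]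
  -- ker Z* = (range Z)ᗮ
  have hVo : (LinearMap.range Z.toLinearMap)ᗮ = LinearMap.ker (ContinuousLinearMap.adjoint Z).toLinearMap := by
    ext x
    simp only [Submodule.mem_orthogonal, LinearMap.mem_ker]
    constructor
    · intro h
      have h2 : ∀ y : LinearMap.ker (A : H →ₗ[ℂ] H),
          inner ℂ y ((ContinuousLinearMap.adjoint Z) x) = (0 : ℂ) := by
        intro y
        rw [ContinuousLinearMap.adjoint_inner_right]
        exact h (Z y) ⟨y, rfl⟩
      have h3 := h2 ((ContinuousLinearMap.adjoint Z) x)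
      rwa [inner_self_eq_zero] at h3
    · rintro h v ⟨y, rfl⟩
      rw [ContinuousLinearMap.coe_coe, ← ContinuousLinearMap.adjoint_inner_right, (show (ContinuousLinearMap.adjoint Z) x = 0 from h), inner_zero_right]
  -- ker A ≤ range B ⊔ K
  have hMle : LinearMap.ker (A : H →ₗ[ℂ] H) ≤ LinearMap.range (B : H →ₗ[ℂ] H) ⊔
      (LinearMap.ker (ContinuousLinearMap.adjoint Z).toLinearMap).map (LinearMap.ker (A : H →ₗ[ℂ] H)).subtype := by
    intro m hm
    have hVc : IsClosed ((LinearMap.ker (ContinuousLinearMap.adjoint Z).toLinearMap :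
        Submodule ℂ (LinearMap.ker (A : H →ₗ[ℂ] H))) : Set (LinearMap.ker (A : H →ₗ[ℂ] H))) :=
      ContinuousLinearMap.isClosed_ker _
    haveI : CompleteSpace (LinearMap.ker (ContinuousLinearMap.adjoint Z).toLinearMap :
        Submodule ℂ (LinearMap.ker (A : H →ₗ[ℂ] H))) := hVc.completeSpace_coe
    have htop : LinearMap.ker (ContinuousLinearMap.adjoint Z).toLinearMap ⊔
        (LinearMap.ker (ContinuousLinearMap.adjoint Z).toLinearMap)ᗮ = ⊤ :=
      Submodule.isCompl_orthogonal_of_hasOrthogonalProjection.sup_eq_top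
    have hm'' : (⟨m, hm⟩ : LinearMap.ker (A : H →ₗ[ℂ] H)) ∈ LinearMap.ker (ContinuousLinearMap.adjoint Z).toLinearMap ⊔
        (LinearMap.ker (ContinuousLinearMap.adjoint Z).toLinearMap)ᗮ := by rw [htop]; trivial
    obtain ⟨q, hq, r, hr, hqr⟩ := Submodule.mem_sup.mp hm''
    have hrB : (r : H) ∈ LinearMap.range (B : H →ₗ[ℂ] H) := by
      have h1 : (LinearMap.ker (ContinuousLinearMap.adjoint Z).toLinearMap)ᗮ =
          (LinearMap.range Z.toLinearMap).topologicalClosure := by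
        rw [← hVo, Submodule.orthogonal_orthogonal_eq_closure]
      have hr' : r ∈ closure ((LinearMap.range Z.toLinearMap :
          Submodule ℂ (LinearMap.ker (A : H →ₗ[ℂ] H))) : Set (LinearMap.ker (A : H →ₗ[ℂ] H))) := by
        rw [h1] at hr; exact hr
      have h2 : (r : H) ∈ closure (Subtype.val '' ((LinearMap.range Z.toLinearMap :
          Submodule ℂ (LinearMap.ker (A : H →ₗ[ℂ] H))) : Set (LinearMap.ker (A : H →ₗ[ℂ] H)))) :=
        map_mem_closure continuous_subtype_val hr' (fun a ha => Set.mem_image_of_mem _ ha)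
      have h3 : Subtype.val '' ((LinearMap.range Z.toLinearMap :
          Submodule ℂ (LinearMap.ker (A : H →ₗ[ℂ] H))) : Set (LinearMap.ker (A : H →ₗ[ℂ] H))) ⊆
          ((LinearMap.range (B : H →ₗ[ℂ] H) : Submodule ℂ H) : Set H) := by
        rintro _ ⟨a, ⟨y, rfl⟩, rfl⟩
        rw [ContinuousLinearMap.coe_coe, hZ y]
        exact LinearMap.mem_range_self _ _
      exact hRBc.closure_subset_iff.mpr h3 h2
    have hqK : (q : H) ∈ (LinearMap.ker (ContinuousLinearMap.adjoint Z).toLinearMap).map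
        (LinearMap.ker (A : H →ₗ[ℂ] H)).subtype := ⟨q, hq, rfl⟩
    have hmrq : m = (r : H) + (q : H) := by
      have h4 := congrArg (Subtype.val) hqr
      simp only [Submodule.coe_add] at h4
      rw [← h4]; abel
    rw [hmrq]
    exact Submodule.add_mem _ (Submodule.mem_sup_left hrB) (Submodule.mem_sup_right hqK)
  -- S := range B ⊔ ker A is closed
  have hSeq : LinearMap.range (B : H →ₗ[ℂ] H) ⊔ LinearMap.ker (A : H →ₗ[ℂ] H) = LinearMap.range (B : H →ₗ[ℂ] H) ⊔
      (LinearMap.ker (ContinuousLinearMap.adjoint Z).toLinearMap).map (LinearMap.ker (A : H →ₗ[ℂ] H)).subtype := by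
    apply le_antisymm
    · exact sup_le le_sup_left hMle
    · refine sup_le le_sup_left ?_
      rintro x ⟨y, _, rfl⟩
      exact Submodule.mem_sup_right y.2
  have hSc : IsClosed ((LinearMap.range (B : H →ₗ[ℂ] H) ⊔ LinearMap.ker (A : H →ₗ[ℂ] H) : Submodule ℂ H) : Set H) := by
    rw [hSeq]
    exact aux_sup_closed _ _ hRBc hKc hperp
  have hranAB : Set.range (A ∘L B) =
      A '' ((LinearMap.range (B : H →ₗ[ℂ] H) ⊔ LinearMap.ker (A : H →ₗ[ℂ] H) : Submodule ℂ H) : Set H) := by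
    ext y
    constructor
    · rintro ⟨x, rfl⟩
      exact ⟨B x, Submodule.mem_sup_left (LinearMap.mem_range_self _ x), rfl⟩
    · rintro ⟨x, hx, rfl⟩
      obtain ⟨b, hb, k, hk, rfl⟩ := Submodule.mem_sup.mp hx
      obtain ⟨w, rfl⟩ := hb
      refine ⟨w, ?_⟩
      have hk0 : A k = 0 := hk
      simp [ContinuousLinearMap.comp_apply, map_add, hk0]
  rw [hranAB]
  exact aux_image_closed A hAran _ hSc le_sup_right
end

section
/- Let A and B be commuting bounded linear operators on a complex Hilbert space H with N(A) ⊆ N(A*), N(B) ⊆ N(B*), and both R(A) and R(B) closed. Let B' = P ∘ B restricted to N(A)⊥ (the compression of B to N(A)⊥, where P is the orthogonal projection onto N(A)⊥) and let Z = B restricted to N(A). If N(Z*) ⊆ N(Z), then both R(B') and R(Z) are closed. -/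
open Submodule ContinuousLinearMap

local notation "⟪" x ", " y "⟫" => @inner ℂ _ _ x y

/-- If `T` has closed range and the orthogonal projection of the kernel of `T`
onto `M` stays in the kernel, then `T '' M` is closed. -/
lemma aux_image_isClosed {H : Type*} [NormedAddCommGroup H] [InnerProductSpace ℂ H]
    [CompleteSpace H] (T : H →L[ℂ] H) (hT : IsClosed (Set.range T)) (M : Submodule ℂ H)
    (hMc : IsClosed (M : Set H))
    (hM : ∀ u ∈ M, (orthogonalProjection (LinearMap.ker (T : H →ₗ[ℂ] H)) u : H) ∈ M) :
    IsClosed (⇑T '' (M : Set H)) := by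
  set N := LinearMap.ker (T : H →ₗ[ℂ] H) with hN
  haveI : CompleteSpace (LinearMap.range (T : H →ₗ[ℂ] H)) :=
    IsClosed.completeSpace_coe (s := (LinearMap.range (T : H →ₗ[ℂ] H) : Set H))
      (hs := by rwa [LinearMap.coe_range, ContinuousLinearMap.coe_coe])
  -- the induced bijection from `Nᗮ` onto the range
  set T' : Nᗮ →L[ℂ] LinearMap.range (T : H →ₗ[ℂ] H) :=
    ContinuousLinearMap.codRestrict (T.comp (Nᗮ).subtypeL) (LinearMap.range (T : H →ₗ[ℂ] H))
      (fun x => LinearMap.mem_range_self _ _) with hT'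
  have hT'app : ∀ x : Nᗮ, (T' x : H) = T x := fun x => rfl
  have hinj : LinearMap.ker (T' : Nᗮ →ₗ[ℂ] LinearMap.range (T : H →ₗ[ℂ] H)) = ⊥ := by
    rw [LinearMap.ker_eq_bot']
    intro x hx
    have hx' : (x : H) ∈ N := by
      have : (T' x : H) = 0 := by rw [show T' x = 0 from hx]; rfl
      rwa [hT'app, ← ContinuousLinearMap.coe_coe, ← LinearMap.mem_ker] at this
    have : ⟪(x : H), (x : H)⟫ = 0 := inner_right_of_mem_orthogonal hx' x.2
    exact Subtype.ext (inner_self_eq_zero.mp this)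
  have hsurj : LinearMap.range (T' : Nᗮ →ₗ[ℂ] LinearMap.range (T : H →ₗ[ℂ] H)) = ⊤ := by
    rw [LinearMap.range_eq_top]
    rintro ⟨y, x, rfl⟩
    refine ⟨⟨x - (orthogonalProjection N x : H), sub_starProjection_mem_orthogonal x⟩, ?_⟩
    apply Subtype.ext
    show T (x - (orthogonalProjection N x : H)) = T x
    have : T ((orthogonalProjection N x : H)) = 0 := (orthogonalProjection N x).2
    simpa [map_sub] using this
  set e := ContinuousLinearEquiv.ofBijective T' hinj hsurj with he
  have hecoe : ∀ x : Nᗮ, e x = T' x := fun x => rfl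
  have himg : ⇑T '' (M : Set H) =
      Subtype.val '' (⇑e '' (Subtype.val ⁻¹' (M : Set H))) := by
    ext y
    constructor
    · rintro ⟨u, hu, rfl⟩
      refine ⟨e ⟨u - (orthogonalProjection N u : H),
        sub_starProjection_mem_orthogonal u⟩,
        ⟨⟨u - (orthogonalProjection N u : H),
          sub_starProjection_mem_orthogonal u⟩, ?_, rfl⟩, ?_⟩
      · exact M.sub_mem hu (hM u hu)
      · rw [hecoe, hT'app]
        have : T ((orthogonalProjection N u : H)) = 0 := (orthogonalProjection N u).2
        simpa [map_sub] using this
    · rintro ⟨_, ⟨x, hx, rfl⟩, rfl⟩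
      exact ⟨(x : H), hx, by rw [hecoe, hT'app]⟩
  rw [himg]
  have h1 : IsClosed (Subtype.val ⁻¹' (M : Set H) : Set Nᗮ) :=
    hMc.preimage continuous_subtype_val
  have h2 : IsClosed (⇑e '' (Subtype.val ⁻¹' (M : Set H))) :=
    e.toHomeomorph.isClosedMap _ h1
  have h3 : IsClosed ((LinearMap.range (T : H →ₗ[ℂ] H) : Set H)) := by rwa [LinearMap.coe_range, ContinuousLinearMap.coe_coe]
  exact h3.isClosedEmbedding_subtypeVal.isClosedMap _ h2

set_option maxHeartbeats 1000000 in
/-- Theorem 4.2(c): Let `A`, `B` be commuting bounded operators on a complex Hilbert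
space `H` with `N(A) ⊆ N(A*)`, `N(B) ⊆ N(B*)`, and `R(A)`, `R(B)` closed.  Let `B'`
be the compression of `B` to `N(A)ᗮ` (so `B x - B' x ∈ N(A)` for `x ∈ N(A)ᗮ`) and let
`Z = B|_{N(A)}`.  If `N(Z*) ⊆ N(Z)`, then both `R(B')` and `R(Z)` are closed. -/
theorem stmt12 {H : Type*} [NormedAddCommGroup H] [InnerProductSpace ℂ H] [CompleteSpace H]
    (A B : H →L[ℂ] H) (hcomm : A ∘L B = B ∘L A)
    (hA : LinearMap.ker (A : H →ₗ[ℂ] H) ≤ LinearMap.ker (ContinuousLinearMap.adjoint A : H →ₗ[ℂ] H))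
    (hB : LinearMap.ker (B : H →ₗ[ℂ] H) ≤ LinearMap.ker (ContinuousLinearMap.adjoint B : H →ₗ[ℂ] H))
    (hAran : IsClosed (Set.range A)) (hBran : IsClosed (Set.range B))
    (B' : (LinearMap.ker (A : H →ₗ[ℂ] H))ᗮ →L[ℂ] (LinearMap.ker (A : H →ₗ[ℂ] H))ᗮ)
    (hB' : ∀ x : (LinearMap.ker (A : H →ₗ[ℂ] H))ᗮ, B x - (B' x : H) ∈ LinearMap.ker (A : H →ₗ[ℂ] H))
    (Z : LinearMap.ker (A : H →ₗ[ℂ] H) →L[ℂ] LinearMap.ker (A : H →ₗ[ℂ] H))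
    (hZ : ∀ x : LinearMap.ker (A : H →ₗ[ℂ] H), (Z x : H) = B x)
    (hcoqp : LinearMap.ker (ContinuousLinearMap.adjoint Z : LinearMap.ker (A : H →ₗ[ℂ] H) →ₗ[ℂ] LinearMap.ker (A : H →ₗ[ℂ] H)) ≤ LinearMap.ker (Z : LinearMap.ker (A : H →ₗ[ℂ] H) →ₗ[ℂ] LinearMap.ker (A : H →ₗ[ℂ] H))) :
    IsClosed (Set.range B') ∧ IsClosed (Set.range Z) := by
  -- F1 : N(A) is invariant under B
  have hF1 : ∀ x ∈ LinearMap.ker (A : H →ₗ[ℂ] H), B x ∈ LinearMap.ker (A : H →ₗ[ℂ] H) := by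
    intro x hx
    have h := DFunLike.congr_fun hcomm x
    simp only [ContinuousLinearMap.comp_apply] at h
    have hx0 : A x = 0 := hx
    rw [LinearMap.mem_ker, ContinuousLinearMap.coe_coe, h, hx0, map_zero]
  -- F2 : N(A)ᗮ is invariant under B*
  have hF2 : ∀ x ∈ (LinearMap.ker (A : H →ₗ[ℂ] H))ᗮ, ContinuousLinearMap.adjoint B x ∈ (LinearMap.ker (A : H →ₗ[ℂ] H))ᗮ := by
    intro x hx
    rw [Submodule.mem_orthogonal]
    intro m hm
    rw [ContinuousLinearMap.adjoint_inner_right]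
    exact inner_right_of_mem_orthogonal (hF1 m hm) hx
  -- F3 : if B* n = 0 then the projection p of n onto N(A) satisfies B p = 0 and B* p = 0
  have hF3 : ∀ n : H, ContinuousLinearMap.adjoint B n = 0 →
      B ((orthogonalProjection (LinearMap.ker (A : H →ₗ[ℂ] H)) n : H)) = 0 ∧
        ContinuousLinearMap.adjoint B ((orthogonalProjection (LinearMap.ker (A : H →ₗ[ℂ] H)) n : H)) = 0 := by
    intro n hn
    have hq : n - ((orthogonalProjection (LinearMap.ker (A : H →ₗ[ℂ] H)) n : H)) ∈ (LinearMap.ker (A : H →ₗ[ℂ] H))ᗮ :=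
      sub_starProjection_mem_orthogonal n
    have hBp : ContinuousLinearMap.adjoint B ((orthogonalProjection (LinearMap.ker (A : H →ₗ[ℂ] H)) n : H))
        ∈ (LinearMap.ker (A : H →ₗ[ℂ] H))ᗮ := by
      have h1 : ContinuousLinearMap.adjoint B ((orthogonalProjection (LinearMap.ker (A : H →ₗ[ℂ] H)) n : H)) =
          -(ContinuousLinearMap.adjoint B (n - (orthogonalProjection (LinearMap.ker (A : H →ₗ[ℂ] H)) n : H))) := by
        rw [map_sub, hn, zero_sub, neg_neg]
      rw [h1]
      exact Submodule.neg_mem _ (hF2 _ hq)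
    have hZadj : ContinuousLinearMap.adjoint Z (orthogonalProjection (LinearMap.ker (A : H →ₗ[ℂ] H)) n) = 0 := by
      have key : ∀ m : LinearMap.ker (A : H →ₗ[ℂ] H),
          ⟪m, ContinuousLinearMap.adjoint Z (orthogonalProjection (LinearMap.ker (A : H →ₗ[ℂ] H)) n)⟫ = 0 := by
        intro m
        rw [ContinuousLinearMap.adjoint_inner_right, Submodule.coe_inner, hZ m,
          ← ContinuousLinearMap.adjoint_inner_right]
        exact inner_right_of_mem_orthogonal m.2 hBp
      have := key (ContinuousLinearMap.adjoint Z (orthogonalProjection (LinearMap.ker (A : H →ₗ[ℂ] H)) n))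
      rwa [inner_self_eq_zero] at this
    have hZpp : Z (orthogonalProjection (LinearMap.ker (A : H →ₗ[ℂ] H)) n) = 0 := hcoqp hZadj
    have hBpp : B ((orthogonalProjection (LinearMap.ker (A : H →ₗ[ℂ] H)) n : H)) = 0 := by
      rw [← hZ (orthogonalProjection (LinearMap.ker (A : H →ₗ[ℂ] H)) n), hZpp, Submodule.coe_zero]
    exact ⟨hBpp, hB (LinearMap.mem_ker.mpr hBpp)⟩
  -- projections of N(B) vectors onto N(A) land in N(A)
  have hMZ : ∀ u ∈ LinearMap.ker (A : H →ₗ[ℂ] H),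
      ((orthogonalProjection (LinearMap.ker (B : H →ₗ[ℂ] H)) u : H)) ∈ LinearMap.ker (A : H →ₗ[ℂ] H) := by
    intro u hu
    set k : H := (orthogonalProjection (LinearMap.ker (B : H →ₗ[ℂ] H)) u : H) with hk
    have hkB : B k = 0 := (orthogonalProjection (LinearMap.ker (B : H →ₗ[ℂ] H)) u).2
    have hkB' : ContinuousLinearMap.adjoint B k = 0 := hB (LinearMap.mem_ker.mpr hkB)
    set p : H := (orthogonalProjection (LinearMap.ker (A : H →ₗ[ℂ] H)) k : H) with hp
    have hpNA : p ∈ LinearMap.ker (A : H →ₗ[ℂ] H) := (orthogonalProjection (LinearMap.ker (A : H →ₗ[ℂ] H)) k).2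
    have hBp : B p = 0 := (hF3 k hkB').1
    have hqo : k - p ∈ (LinearMap.ker (A : H →ₗ[ℂ] H))ᗮ := sub_starProjection_mem_orthogonal k
    have hqB : k - p ∈ LinearMap.ker (B : H →ₗ[ℂ] H) := by
      rw [LinearMap.mem_ker, ContinuousLinearMap.coe_coe, map_sub, hkB, hBp, sub_zero]
    have huk : u - k ∈ (LinearMap.ker (B : H →ₗ[ℂ] H))ᗮ := sub_starProjection_mem_orthogonal u
    have hq0 : ⟪k - p, k - p⟫ = 0 := by
      have e1 : ⟪u - k, k - p⟫ = 0 := inner_left_of_mem_orthogonal hqB huk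
      have e2 : ⟪u, k - p⟫ = 0 := inner_right_of_mem_orthogonal hu hqo
      have e3 : ⟪p, k - p⟫ = 0 := inner_right_of_mem_orthogonal hpNA hqo
      have e4 : ⟪k, k - p⟫ = 0 := by
        have h5 : ⟪u - k, k - p⟫ = ⟪u, k - p⟫ - ⟪k, k - p⟫ := inner_sub_left _ _ _
        rw [e1, e2] at h5
        linear_combination h5
      have h6 : ⟪k - p, k - p⟫ = ⟪k, k - p⟫ - ⟪p, k - p⟫ := inner_sub_left _ _ _
      rw [h6, e3, e4, sub_zero]
    have hqz : k = p := by
      have := inner_self_eq_zero.mp hq0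
      rwa [sub_eq_zero] at this
    rw [hqz]
    exact hpNA
  -- Closedness of R(Z)
  have hZclosed : IsClosed (Set.range Z) := by
    have h1 : IsClosed (⇑B '' ((LinearMap.ker (A : H →ₗ[ℂ] H) : Submodule ℂ H) : Set H)) :=
      aux_image_isClosed B hBran (LinearMap.ker (A : H →ₗ[ℂ] H)) (ContinuousLinearMap.isClosed_ker A) hMZ
    have h2 : Subtype.val '' (Set.range ⇑Z) = ⇑B '' ((LinearMap.ker (A : H →ₗ[ℂ] H) : Submodule ℂ H) : Set H) := by
      ext y
      constructor
      · rintro ⟨_, ⟨x, rfl⟩, rfl⟩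
        exact ⟨(x : H), x.2, (hZ x).symm⟩
      · rintro ⟨u, hu, rfl⟩
        exact ⟨Z ⟨u, hu⟩, ⟨⟨u, hu⟩, rfl⟩, hZ ⟨u, hu⟩⟩
    refine ((ContinuousLinearMap.isClosed_ker
      A).isClosedEmbedding_subtypeVal.isClosed_iff_image_isClosed).mpr ?_
    show IsClosed (Subtype.val '' Set.range ⇑Z)
    rw [h2]
    exact h1
  refine ⟨?_, hZclosed⟩
  -- R(B) = N(B*)ᗮ
  have hrangeB : (LinearMap.range (B : H →ₗ[ℂ] H) : Submodule ℂ H) =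
      (LinearMap.ker (ContinuousLinearMap.adjoint B : H →ₗ[ℂ] H))ᗮ := by
    have h1 : LinearMap.ker (ContinuousLinearMap.adjoint B : H →ₗ[ℂ] H) = (LinearMap.range (B : H →ₗ[ℂ] H))ᗮ := by
      ext x
      constructor
      · intro hx
        rw [Submodule.mem_orthogonal]
        rintro u ⟨v, rfl⟩
        rw [ContinuousLinearMap.coe_coe, ← ContinuousLinearMap.adjoint_inner_right,
          (show ContinuousLinearMap.adjoint B x = 0 from LinearMap.mem_ker.mp hx),
          inner_zero_right]
      · intro hx
        rw [LinearMap.mem_ker, ContinuousLinearMap.coe_coe, ← inner_self_eq_zero (𝕜 := ℂ),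
          ContinuousLinearMap.adjoint_inner_left]
        exact (Submodule.mem_orthogonal' _ _).mp hx _ (LinearMap.mem_range_self _ _)
    rw [h1, Submodule.orthogonal_orthogonal_eq_closure]
    refine le_antisymm (Submodule.le_topologicalClosure _) ?_
    exact Submodule.topologicalClosure_minimal _ le_rfl (by rwa [LinearMap.coe_range, ContinuousLinearMap.coe_coe])
  -- the projection onto N(A) preserves R(B)
  have hPy : ∀ y ∈ LinearMap.range (B : H →ₗ[ℂ] H),
      ((orthogonalProjection (LinearMap.ker (A : H →ₗ[ℂ] H)) y : H)) ∈ LinearMap.range (B : H →ₗ[ℂ] H) := by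
    intro y hy
    rw [hrangeB] at hy ⊢
    rw [Submodule.mem_orthogonal]
    intro n hn
    rw [show ⟪n, ((orthogonalProjection (LinearMap.ker (A : H →ₗ[ℂ] H)) y : H))⟫ =
      ⟪((orthogonalProjection (LinearMap.ker (A : H →ₗ[ℂ] H)) n : H)), y⟫ from
      (Submodule.inner_starProjection_left_eq_right (K := LinearMap.ker (A : H →ₗ[ℂ] H)) n y).symm]
    have hn' : ContinuousLinearMap.adjoint B n = 0 := hn
    have : ((orthogonalProjection (LinearMap.ker (A : H →ₗ[ℂ] H)) n : H)) ∈
        LinearMap.ker (ContinuousLinearMap.adjoint B : H →ₗ[ℂ] H) := LinearMap.mem_ker.mpr (hF3 n hn').2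
    exact inner_right_of_mem_orthogonal this hy
  -- identification of the range of B'
  have hset : Subtype.val '' (Set.range ⇑B') =
      (LinearMap.range (B : H →ₗ[ℂ] H) : Set H) ∩ ((LinearMap.ker (A : H →ₗ[ℂ] H))ᗮ : Set H) := by
    ext y
    constructor
    · rintro ⟨_, ⟨v, rfl⟩, rfl⟩
      refine ⟨?_, (B' v).2⟩
      have hc : B (v : H) - (B' v : H) ∈ LinearMap.ker (A : H →ₗ[ℂ] H) := hB' v
      have hproj : ((orthogonalProjection (LinearMap.ker (A : H →ₗ[ℂ] H)) (B (v : H)) : H)) =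
          B (v : H) - (B' v : H) :=
        eq_starProjection_of_mem_orthogonal' (K := LinearMap.ker (A : H →ₗ[ℂ] H)) hc (B' v).2 (by abel)
      have h1 : (B' v : H) = B (v : H) -
          ((orthogonalProjection (LinearMap.ker (A : H →ₗ[ℂ] H)) (B (v : H)) : H)) := by
        rw [hproj]; abel
      rw [h1]
      exact Submodule.sub_mem _ (LinearMap.mem_range_self _ _)
        (hPy _ (LinearMap.mem_range_self _ _))
    · rintro ⟨⟨x, rfl⟩, hyo⟩
      have hv : x - ((orthogonalProjection (LinearMap.ker (A : H →ₗ[ℂ] H)) x : H)) ∈ (LinearMap.ker (A : H →ₗ[ℂ] H))ᗮ :=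
        sub_starProjection_mem_orthogonal x
      set v : (LinearMap.ker (A : H →ₗ[ℂ] H))ᗮ := ⟨x - ((orthogonalProjection (LinearMap.ker (A : H →ₗ[ℂ] H)) x : H)), hv⟩
        with hvdef
      have hc1 : B x - (B' v : H) ∈ LinearMap.ker (A : H →ₗ[ℂ] H) := by
        have hsplit : B x = B ((orthogonalProjection (LinearMap.ker (A : H →ₗ[ℂ] H)) x : H)) + B (v : H) := by
          rw [hvdef, map_sub]; abel
        have hm1 : B ((orthogonalProjection (LinearMap.ker (A : H →ₗ[ℂ] H)) x : H)) ∈ LinearMap.ker (A : H →ₗ[ℂ] H) :=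
          hF1 _ (orthogonalProjection (LinearMap.ker (A : H →ₗ[ℂ] H)) x).2
        have hm2 : B (v : H) - (B' v : H) ∈ LinearMap.ker (A : H →ₗ[ℂ] H) := hB' v
        have : B x - (B' v : H) = B ((orthogonalProjection (LinearMap.ker (A : H →ₗ[ℂ] H)) x : H)) +
            (B (v : H) - (B' v : H)) := by rw [hsplit]; abel
        rw [this]
        exact Submodule.add_mem _ hm1 hm2
      have hc2 : B x - (B' v : H) ∈ (LinearMap.ker (A : H →ₗ[ℂ] H))ᗮ :=
        Submodule.sub_mem _ hyo (B' v).2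
      have hc0 : B x - (B' v : H) = 0 := by
        have := (Submodule.orthogonal_disjoint (LinearMap.ker (A : H →ₗ[ℂ] H))).le_bot
          (Submodule.mem_inf.mpr ⟨hc1, hc2⟩)
        simpa using this
      have : (B' v : H) = B x := by
        have := sub_eq_zero.mp hc0
        exact this.symm
      exact ⟨B' v, ⟨v, rfl⟩, this⟩
  have hclosed2 : IsClosed ((LinearMap.range (B : H →ₗ[ℂ] H) : Set H) ∩ ((LinearMap.ker (A : H →ₗ[ℂ] H))ᗮ : Set H)) := by
    refine IsClosed.inter (by rwa [LinearMap.coe_range, ContinuousLinearMap.coe_coe]) (Submodule.isClosed_orthogonal _)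
  refine ((Submodule.isClosed_orthogonal
    (LinearMap.ker (A : H →ₗ[ℂ] H))).isClosedEmbedding_subtypeVal.isClosed_iff_image_isClosed).mpr ?_
  show IsClosed (Subtype.val '' Set.range ⇑B')
  rw [hset]
  exact hclosed2
end

section
/- Let A and B be commuting bounded linear operators on a complex Hilbert space H, both with closed range, satisfying R(A) ⊆ R(A*) and R(B) ⊆ R(B*). Let B' = P ∘ B restricted to N(A)⊥ (the compression of B to N(A)⊥, where P is the orthogonal projection onto N(A)⊥) and let Z = B restricted to N(A). If R(B') ⊆ R(B'*) and R(Z*) ⊆ R(Z), then AB has closed range and R(AB) ⊆ R((AB)*). -/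
set_option maxHeartbeats 1000000

open ContinuousLinearMap Submodule

local notation "⟪" x ", " y "⟫_ℂ" => @inner ℂ _ _ x y

section Helpers

variable {E : Type*} [NormedAddCommGroup E] [InnerProductSpace ℂ E] [CompleteSpace E]

/-- A posinormal operator kills the kernel with its adjoint. -/
lemma ker_le_ker_adj (T : E →L[ℂ] E)
    (h : LinearMap.range T.toLinearMap ≤ LinearMap.range (ContinuousLinearMap.adjoint T).toLinearMap) :
    ∀ x : E, T x = 0 → ContinuousLinearMap.adjoint T x = 0 := by
  intro x hx
  obtain ⟨u, hu⟩ := h ⟨ContinuousLinearMap.adjoint T x, rfl⟩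
  have h0 : ⟪ContinuousLinearMap.adjoint T x, ContinuousLinearMap.adjoint T x⟫_ℂ = 0 := by
    rw [adjoint_inner_left, ← ContinuousLinearMap.coe_coe T, ← hu, ContinuousLinearMap.coe_coe, adjoint_inner_right, hx, inner_zero_left]
  exact inner_self_eq_zero.mp h0

lemma range_set (T : E →L[ℂ] E) :
    ((LinearMap.range T.toLinearMap : Submodule ℂ E) : Set E) = Set.range T := by
  ext x; simp [LinearMap.mem_range]

lemma mem_ker_inter_orthogonal_eq_zero {W : Submodule ℂ E} {v : E}
    (h1 : v ∈ W) (h2 : v ∈ Wᗮ) : v = 0 := by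
  have h0 : ⟪v, v⟫_ℂ = 0 := (Submodule.mem_orthogonal W v).mp h2 v h1
  exact inner_self_eq_zero.mp h0

/-- An operator with closed range is bounded below on the orthocomplement of its kernel. -/
lemma bdd_below_of_isClosed_range (T : E →L[ℂ] E) (h : IsClosed (Set.range T)) :
    ∃ c : NNReal, ∀ x ∈ (LinearMap.ker T.toLinearMap)ᗮ, ‖x‖ ≤ c * ‖T x‖ := by
  haveI : CompleteSpace (LinearMap.range T.toLinearMap) := by
    have h' : IsClosed ((LinearMap.range T.toLinearMap : Submodule ℂ E) : Set E) := by
      rwa [range_set T]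
    exact h'.completeSpace_coe
  haveI : CompleteSpace (LinearMap.ker T.toLinearMap) := (ContinuousLinearMap.isClosed_ker T).completeSpace_coe
  set N := (LinearMap.ker T.toLinearMap)ᗮ with hN
  set f : N →L[ℂ] LinearMap.range T.toLinearMap :=
    (T ∘L N.subtypeL).codRestrict (LinearMap.range T.toLinearMap)
      (fun x => LinearMap.mem_range_self _ _) with hf
  have hfapp : ∀ x : N, (f x : E) = T x := fun x => rfl
  have hker : LinearMap.ker f.toLinearMap = ⊥ := by
    rw [LinearMap.ker_eq_bot']
    intro x hx
    have hTx : T (x : E) = 0 := by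
      have := congrArg Subtype.val hx
      simpa [hfapp] using this
    have hmem : (x : E) ∈ LinearMap.ker T.toLinearMap := LinearMap.mem_ker.mpr hTx
    have hmem2 : (x : E) ∈ (LinearMap.ker T.toLinearMap)ᗮᗮ := by
      rw [Submodule.orthogonal_orthogonal]; exact hmem
    exact Subtype.ext (mem_ker_inter_orthogonal_eq_zero x.2 hmem2)
  have hsurj : LinearMap.range f.toLinearMap = ⊤ := by
    rw [LinearMap.range_eq_top]
    rintro ⟨y, w, rfl⟩
    refine ⟨orthogonalProjection N w, ?_⟩
    apply Subtype.ext
    rw [ContinuousLinearMap.coe_coe, hfapp]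
    have hNperp : Nᗮ = LinearMap.ker T.toLinearMap := Submodule.orthogonal_orthogonal _
    have hw : w - ↑(orthogonalProjection N w) ∈ LinearMap.ker T.toLinearMap := by
      have := sub_starProjection_mem_orthogonal (K := N) w
      rwa [hNperp] at this
    have : T (w - ↑(orthogonalProjection N w)) = 0 := LinearMap.mem_ker.mp hw
    rw [map_sub, sub_eq_zero] at this
    exact this.symm
  set e := ContinuousLinearEquiv.ofBijective f hker hsurj with he
  refine ⟨‖(e.symm : LinearMap.range T.toLinearMap →L[ℂ] N)‖₊, ?_⟩
  intro x hx
  have hx' : (⟨x, hx⟩ : N) = e.symm (e ⟨x, hx⟩) := (e.symm_apply_apply _).symm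
  calc ‖x‖ = ‖(⟨x, hx⟩ : N)‖ := rfl
    _ = ‖e.symm (e ⟨x, hx⟩)‖ := by rw [← hx']
    _ ≤ ‖(e.symm : LinearMap.range T.toLinearMap →L[ℂ] N)‖ * ‖e ⟨x, hx⟩‖ :=
        (e.symm : LinearMap.range T.toLinearMap →L[ℂ] N).le_opNorm _
    _ = ‖(e.symm : LinearMap.range T.toLinearMap →L[ℂ] N)‖₊ * ‖T x‖ := by
        have h1 : ‖e ⟨x, hx⟩‖ = ‖T ↑(⟨x, hx⟩ : N)‖ := rfl
        rw [coe_nnnorm, h1]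

/-- Half of the closed range theorem. -/
lemma range_adjoint_eq_of_isClosed (T : E →L[ℂ] E) (h : IsClosed (Set.range T)) :
    LinearMap.range (ContinuousLinearMap.adjoint T).toLinearMap = (LinearMap.ker T.toLinearMap)ᗮ := by
  haveI : CompleteSpace (LinearMap.range T.toLinearMap) := by
    have h' : IsClosed ((LinearMap.range T.toLinearMap : Submodule ℂ E) : Set E) := by
      rwa [range_set T]
    exact h'.completeSpace_coe
  haveI : CompleteSpace (LinearMap.ker T.toLinearMap) := (ContinuousLinearMap.isClosed_ker T).completeSpace_coe
  set N := (LinearMap.ker T.toLinearMap)ᗮ with hN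
  set f : N →L[ℂ] LinearMap.range T.toLinearMap :=
    (T ∘L N.subtypeL).codRestrict (LinearMap.range T.toLinearMap)
      (fun x => LinearMap.mem_range_self _ _) with hf
  have hfapp : ∀ x : N, (f x : E) = T x := fun x => rfl
  have hker : LinearMap.ker f.toLinearMap = ⊥ := by
    rw [LinearMap.ker_eq_bot']
    intro x hx
    have hTx : T (x : E) = 0 := by
      have := congrArg Subtype.val hx
      simpa [hfapp] using this
    have hmem : (x : E) ∈ LinearMap.ker T.toLinearMap := LinearMap.mem_ker.mpr hTx
    have hmem2 : (x : E) ∈ (LinearMap.ker T.toLinearMap)ᗮᗮ := by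
      rw [Submodule.orthogonal_orthogonal]; exact hmem
    exact Subtype.ext (mem_ker_inter_orthogonal_eq_zero x.2 hmem2)
  have hsurj : LinearMap.range f.toLinearMap = ⊤ := by
    rw [LinearMap.range_eq_top]
    rintro ⟨y, w, rfl⟩
    refine ⟨orthogonalProjection N w, ?_⟩
    apply Subtype.ext
    rw [ContinuousLinearMap.coe_coe, hfapp]
    have hNperp : Nᗮ = LinearMap.ker T.toLinearMap := Submodule.orthogonal_orthogonal _
    have hw : w - ↑(orthogonalProjection N w) ∈ LinearMap.ker T.toLinearMap := by
      have := sub_starProjection_mem_orthogonal (K := N) w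
      rwa [hNperp] at this
    have : T (w - ↑(orthogonalProjection N w)) = 0 := LinearMap.mem_ker.mp hw
    rw [map_sub, sub_eq_zero] at this
    exact this.symm
  set e := ContinuousLinearEquiv.ofBijective f hker hsurj with he
  apply le_antisymm
  · rintro _ ⟨y, rfl⟩
    rw [Submodule.mem_orthogonal]
    intro u hu
    rw [ContinuousLinearMap.coe_coe, adjoint_inner_right, (show T u = 0 from LinearMap.mem_ker.mp hu), inner_zero_left]
  · intro m hm
    -- construct a preimage via Riesz
    set ψ : LinearMap.range T.toLinearMap →L[ℂ] ℂ :=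
      (innerSL ℂ m).comp (N.subtypeL.comp (e.symm : LinearMap.range T.toLinearMap →L[ℂ] N)) with hψ
    set z := (InnerProductSpace.toDual ℂ (LinearMap.range T.toLinearMap)).symm ψ with hz
    have hzy : ∀ y : LinearMap.range T.toLinearMap, ⟪z, y⟫_ℂ = ψ y := fun y =>
      InnerProductSpace.toDual_symm_apply
    refine ⟨(z : E), ?_⟩
    apply ext_inner_right ℂ
    intro v
    set p := orthogonalProjection N v with hp
    have hNperp : Nᗮ = LinearMap.ker T.toLinearMap := Submodule.orthogonal_orthogonal _
    have hvp : v - ↑p ∈ LinearMap.ker T.toLinearMap := by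
      have := sub_starProjection_mem_orthogonal (K := N) v
      rwa [hNperp] at this
    have hTv : T v = (f p : E) := by
      rw [hfapp]
      have : T (v - ↑p) = 0 := LinearMap.mem_ker.mp hvp
      rw [map_sub, sub_eq_zero] at this
      exact this
    rw [ContinuousLinearMap.coe_coe, adjoint_inner_left, hTv]
    have step1 : ⟪(z : E), ((f p : E))⟫_ℂ = ⟪z, f p⟫_ℂ := (Submodule.coe_inner _ _ _).symm
    rw [step1, hzy]
    have step2 : ψ (f p) = ⟪m, (p : E)⟫_ℂ := by
      have hef : f p = e p := rfl
      rw [hψ]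
      simp only [ContinuousLinearMap.comp_apply, hef, ContinuousLinearEquiv.coe_coe,
        ContinuousLinearEquiv.symm_apply_apply, Submodule.subtypeL_apply, innerSL_apply_apply]
    rw [step2]
    have hm' : m ∈ (LinearMap.ker T.toLinearMap)ᗮ := hm
    have : ⟪m, v - ↑p⟫_ℂ = 0 := (Submodule.mem_orthogonal' _ m).mp hm' _ hvp
    have hsplit : ⟪m, v⟫_ℂ = ⟪m, (p : E)⟫_ℂ + ⟪m, v - ↑p⟫_ℂ := by
      rw [← inner_add_right]; congr 1; abel
    rw [hsplit, this, add_zero]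

/-- The image of a closed submodule on which `T` is bounded below is closed. -/
lemma isClosed_image_of_bdd_below (T : E →L[ℂ] E) (V : Submodule ℂ E)
    (hV : IsClosed (V : Set E)) (c : NNReal) (hc : ∀ x ∈ V, ‖x‖ ≤ c * ‖T x‖) :
    IsClosed (T '' (V : Set E)) := by
  haveI : CompleteSpace V := hV.completeSpace_coe
  set f : V →L[ℂ] E := T ∘L V.subtypeL with hfdef
  have hb : ∀ x : V, ‖x‖ ≤ c * ‖f x‖ := fun x => hc x x.2
  have ha : AntilipschitzWith c f := f.antilipschitz_of_bound hb
  have hcl := (ha.isClosedEmbedding f.uniformContinuous).isClosed_range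
  have : Set.range f = T '' (V : Set E) := by
    ext y
    constructor
    · rintro ⟨x, rfl⟩; exact ⟨x, x.2, rfl⟩
    · rintro ⟨x, hx, rfl⟩; exact ⟨⟨x, hx⟩, rfl⟩
  rwa [this] at hcl

end Helpers

/-- Corollary 4.3: Let `A`, `B` be commuting posinormal bounded operators with closed
range on a complex Hilbert space `H` (`R(A) ⊆ R(A*)`, `R(B) ⊆ R(B*)`).  Let `B'` be
the compression of `B` to `N(A)ᗮ` (so `B x - B' x ∈ N(A)` for `x ∈ N(A)ᗮ`) and let
`Z = B|_{N(A)}`.  If `B'` is posinormal (`R(B') ⊆ R(B'*)`) and `Z` is coposinormal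
(`R(Z*) ⊆ R(Z)`), then `AB` has closed range and is posinormal. -/
theorem stmt13 {H : Type*} [NormedAddCommGroup H] [InnerProductSpace ℂ H] [CompleteSpace H]
    (A B : H →L[ℂ] H) (hcomm : A ∘L B = B ∘L A)
    (hAran : IsClosed (Set.range A)) (hBran : IsClosed (Set.range B))
    (hA : LinearMap.range (A : H →ₗ[ℂ] H) ≤ LinearMap.range (ContinuousLinearMap.adjoint A : H →ₗ[ℂ] H))
    (hB : LinearMap.range (B : H →ₗ[ℂ] H) ≤ LinearMap.range (ContinuousLinearMap.adjoint B : H →ₗ[ℂ] H))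
    (B' : (LinearMap.ker (A : H →ₗ[ℂ] H))ᗮ →L[ℂ] (LinearMap.ker (A : H →ₗ[ℂ] H))ᗮ)
    (hB' : ∀ x : (LinearMap.ker (A : H →ₗ[ℂ] H))ᗮ, B x - (B' x : H) ∈ LinearMap.ker (A : H →ₗ[ℂ] H))
    (Z : LinearMap.ker (A : H →ₗ[ℂ] H) →L[ℂ] LinearMap.ker (A : H →ₗ[ℂ] H))
    (hZ : ∀ x : LinearMap.ker (A : H →ₗ[ℂ] H), (Z x : H) = B x)
    (hB'pos : LinearMap.range (B' : (LinearMap.ker (A : H →ₗ[ℂ] H))ᗮ →ₗ[ℂ] (LinearMap.ker (A : H →ₗ[ℂ] H))ᗮ) ≤ LinearMap.range (ContinuousLinearMap.adjoint B' : (LinearMap.ker (A : H →ₗ[ℂ] H))ᗮ →ₗ[ℂ] (LinearMap.ker (A : H →ₗ[ℂ] H))ᗮ))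
    (hZco : LinearMap.range (ContinuousLinearMap.adjoint Z : LinearMap.ker (A : H →ₗ[ℂ] H) →ₗ[ℂ] LinearMap.ker (A : H →ₗ[ℂ] H)) ≤ LinearMap.range (Z : LinearMap.ker (A : H →ₗ[ℂ] H) →ₗ[ℂ] LinearMap.ker (A : H →ₗ[ℂ] H))) :
    IsClosed (Set.range (A ∘L B)) ∧
      LinearMap.range (A ∘L B : H →ₗ[ℂ] H) ≤ LinearMap.range (ContinuousLinearMap.adjoint (A ∘L B) : H →ₗ[ℂ] H) := by
  classical
  haveI : CompleteSpace (LinearMap.ker A.toLinearMap) := (ContinuousLinearMap.isClosed_ker A).completeSpace_coe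
  set Q := orthogonalProjection (LinearMap.ker A.toLinearMap)ᗮ with hQdef
  have hQK : ∀ x : H, x - ↑(Q x) ∈ LinearMap.ker A.toLinearMap := by
    intro x
    have := sub_starProjection_mem_orthogonal (K := (LinearMap.ker A.toLinearMap)ᗮ) x
    rwa [Submodule.orthogonal_orthogonal] at this
  have hBK : ∀ v ∈ LinearMap.ker A.toLinearMap, B v ∈ LinearMap.ker A.toLinearMap := by
    intro v hv
    rw [LinearMap.mem_ker]
    have h1 : (A ∘L B) v = (B ∘L A) v := by rw [hcomm]
    rw [ContinuousLinearMap.comp_apply, ContinuousLinearMap.comp_apply,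
      (show A v = 0 from LinearMap.mem_ker.mp hv), map_zero] at h1
    exact h1
  have hAadjK : ∀ v ∈ LinearMap.ker A.toLinearMap, ContinuousLinearMap.adjoint A v = 0 := fun v hv =>
    ker_le_ker_adj A hA v (LinearMap.mem_ker.mp hv)
  have hBx : ∀ x : H,
      B x = B (x - ↑(Q x)) + ((B ↑(Q x) - ↑(B' (Q x))) + ↑(B' (Q x))) := by
    intro x
    rw [map_sub]; abel
  have hABx : ∀ x : H, (A ∘L B) x = A ↑(B' (Q x)) := by
    intro x
    have e1 : A (B (x - ↑(Q x))) = 0 := LinearMap.mem_ker.mp (hBK _ (hQK x))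
    have e2 : A (B ↑(Q x) - ↑(B' (Q x))) = 0 := LinearMap.mem_ker.mp (hB' (Q x))
    rw [ContinuousLinearMap.comp_apply, hBx x, map_add, map_add, e1, e2, zero_add, zero_add]
  -- range formula
  set V₁ := Submodule.map ((LinearMap.ker A.toLinearMap)ᗮ).subtype (LinearMap.range B'.toLinearMap) with hV₁def
  have hrange : Set.range (A ∘L B) = A '' (V₁ : Set H) := by
    ext y
    constructor
    · rintro ⟨x, rfl⟩
      exact ⟨↑(B' (Q x)), ⟨B' (Q x), LinearMap.mem_range_self _ _, rfl⟩, (hABx x).symm⟩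
    · rintro ⟨v, hv, rfl⟩
      obtain ⟨u, hu, rfl⟩ := hv
      obtain ⟨w, rfl⟩ := hu
      refine ⟨↑w, ?_⟩
      rw [hABx ↑w, orthogonalProjection_mem_subspace_eq_self w]
      rfl
  -- adjoint of B on the orthocomplement
  have hBadjM : ∀ m : (LinearMap.ker A.toLinearMap)ᗮ,
      ContinuousLinearMap.adjoint B ↑m = ↑(ContinuousLinearMap.adjoint B' m) := by
    intro m
    apply ext_inner_right ℂ
    intro v
    rw [adjoint_inner_left, hBx v, inner_add_right, inner_add_right]
    have z1 : ⟪(m : H), B (v - ↑(Q v))⟫_ℂ = 0 :=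
      (Submodule.mem_orthogonal' _ _).mp m.2 _ (hBK _ (hQK v))
    have z2 : ⟪(m : H), B ↑(Q v) - ↑(B' (Q v))⟫_ℂ = 0 :=
      (Submodule.mem_orthogonal' _ _).mp m.2 _ (hB' (Q v))
    rw [z1, z2, zero_add, zero_add]
    have r3 : ⟪(m : H), (↑(B' (Q v)) : H)⟫_ℂ =
        ⟪(↑(ContinuousLinearMap.adjoint B' m) : H), (↑(Q v) : H)⟫_ℂ := by
      rw [← Submodule.coe_inner, ← Submodule.coe_inner, adjoint_inner_left]
    rw [r3]
    have r1 : ⟪(↑(ContinuousLinearMap.adjoint B' m) : H), v⟫_ℂ =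
        ⟪(↑(ContinuousLinearMap.adjoint B' m) : H), (↑(Q v) : H)⟫_ℂ +
          ⟪(↑(ContinuousLinearMap.adjoint B' m) : H), v - ↑(Q v)⟫_ℂ := by
      rw [← inner_add_right]; congr 1; abel
    have r2 : ⟪(↑(ContinuousLinearMap.adjoint B' m) : H), v - ↑(Q v)⟫_ℂ = 0 :=
      (Submodule.mem_orthogonal' _ _).mp (SetLike.coe_mem _) _ (hQK v)
    rw [r1, r2, add_zero]
  -- closed range of adjoint B and bounded below constant
  have hadjBrange := range_adjoint_eq_of_isClosed B hBran
  have hadjBclosed : IsClosed (Set.range (ContinuousLinearMap.adjoint B)) := by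
    rw [← range_set, hadjBrange]
    exact Submodule.isClosed_orthogonal _
  obtain ⟨c, hc⟩ := bdd_below_of_isClosed_range (ContinuousLinearMap.adjoint B) hadjBclosed
  -- Z facts
  have hZk : ∀ k : LinearMap.ker A.toLinearMap, ContinuousLinearMap.adjoint Z k = 0 → Z k = 0 := by
    intro k hk
    have hco : LinearMap.range (ContinuousLinearMap.adjoint Z).toLinearMap ≤
        LinearMap.range (ContinuousLinearMap.adjoint (ContinuousLinearMap.adjoint Z)).toLinearMap := by
      rwa [adjoint_adjoint]
    have := ker_le_ker_adj (ContinuousLinearMap.adjoint Z) hco k hk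
    rwa [adjoint_adjoint] at this
  set S := Submodule.map (LinearMap.ker A.toLinearMap).subtype
    (LinearMap.ker (ContinuousLinearMap.adjoint Z).toLinearMap) with hSdef
  have hSK : S ≤ LinearMap.ker A.toLinearMap := by
    rintro _ ⟨k, _, rfl⟩; exact SetLike.coe_mem k
  have hSclosed : IsClosed (S : Set H) := by
    rw [hSdef, Submodule.map_coe]
    exact ((ContinuousLinearMap.isClosed_ker A).isClosedEmbedding_subtypeVal.isClosedMap) _
      (ContinuousLinearMap.isClosed_ker _)
  have hBS : ∀ s ∈ S, ContinuousLinearMap.adjoint B s = 0 := by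
    rintro _ ⟨k, hk, rfl⟩
    have hZk0 : Z k = 0 := hZk k (LinearMap.mem_ker.mp hk)
    have hBk : B ↑k = 0 := by rw [← hZ k, hZk0, Submodule.coe_zero]
    exact ker_le_ker_adj B hB _ hBk
  set V := (LinearMap.ker A.toLinearMap)ᗮ ⊔ S with hVdef
  have hVmem : ∀ x : H, x ∈ V ↔ x - ↑(Q x) ∈ S := by
    intro x
    constructor
    · intro hx
      obtain ⟨y, hy, z, hz, rfl⟩ := Submodule.mem_sup.mp hx
      have hQy : Q y = ⟨y, hy⟩ := orthogonalProjection_mem_subspace_eq_self (⟨y, hy⟩ : (LinearMap.ker A.toLinearMap)ᗮ)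
      have hQz : Q z = 0 := by
        apply Submodule.orthogonalProjectionOnto_apply_of_mem_orthogonal
        rw [Submodule.orthogonal_orthogonal]
        exact hSK hz
      rw [map_add, hQy, hQz, add_zero]
      have : y + z - ↑(⟨y, hy⟩ : (LinearMap.ker A.toLinearMap)ᗮ) = z := by simp
      rw [this]
      exact hz
    · intro hx
      have hdec : x = ↑(Q x) + (x - ↑(Q x)) := by abel
      rw [hdec]
      exact Submodule.add_mem V (Submodule.mem_sup_left (SetLike.coe_mem _))
        (Submodule.mem_sup_right hx)
  have hVclosed : IsClosed (V : Set H) := by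
    have hset : (V : Set H) = (fun x : H => x - ((Q x : H))) ⁻¹' (S : Set H) := by
      ext x; exact hVmem x
    rw [hset]
    exact hSclosed.preimage (continuous_id.sub (continuous_subtype_val.comp Q.continuous))
  have hNV : LinearMap.ker (ContinuousLinearMap.adjoint B).toLinearMap ≤ V := by
    intro x hx
    rw [hVmem]
    refine ⟨⟨x - ((Q x : H)), hQK x⟩, ?_, rfl⟩
    simp only [SetLike.mem_coe, LinearMap.mem_ker]
    have hall : ∀ w : LinearMap.ker A.toLinearMap,
        ⟪ContinuousLinearMap.adjoint Z ⟨x - ↑(Q x), hQK x⟩, w⟫_ℂ = 0 := by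
      intro w
      rw [adjoint_inner_left, Submodule.coe_inner, hZ w, ← adjoint_inner_left]
      have hBQ : ContinuousLinearMap.adjoint B (x - ↑(Q x)) =
          -(↑(ContinuousLinearMap.adjoint B' (Q x)) : H) := by
        rw [map_sub, (show ContinuousLinearMap.adjoint B x = 0 from LinearMap.mem_ker.mp hx), hBadjM (Q x), zero_sub]
      rw [hBQ, inner_neg_left]
      have h0 : ⟪(↑(ContinuousLinearMap.adjoint B' (Q x)) : H), (↑w : H)⟫_ℂ = 0 :=
        (Submodule.mem_orthogonal' _ _).mp (SetLike.coe_mem _) _ w.2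
      rw [h0, neg_zero]
    exact inner_self_eq_zero.mp (hall _)
  haveI : CompleteSpace (LinearMap.ker (ContinuousLinearMap.adjoint B).toLinearMap) :=
    (ContinuousLinearMap.isClosed_ker _).completeSpace_coe
  set G := V ⊓ (LinearMap.ker (ContinuousLinearMap.adjoint B).toLinearMap)ᗮ with hGdef
  have hGclosed : IsClosed (G : Set H) := by
    rw [hGdef, Submodule.coe_inf]
    exact hVclosed.inter (Submodule.isClosed_orthogonal _)
  have himg : ContinuousLinearMap.adjoint B '' (((LinearMap.ker A.toLinearMap)ᗮ : Submodule ℂ H) : Set H) =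
      ContinuousLinearMap.adjoint B '' (G : Set H) := by
    apply Set.Subset.antisymm
    · rintro _ ⟨m, hm, rfl⟩
      set P := orthogonalProjection (LinearMap.ker (ContinuousLinearMap.adjoint B).toLinearMap) with hPdef
      refine ⟨m - ↑(P m), ?_, ?_⟩
      · refine Submodule.mem_inf.mpr ⟨?_, sub_starProjection_mem_orthogonal m⟩
        exact Submodule.sub_mem V (Submodule.mem_sup_left hm) (hNV (SetLike.coe_mem (P m)))
      · rw [map_sub, (show ContinuousLinearMap.adjoint B ↑(P m) = 0 from LinearMap.mem_ker.mp (SetLike.coe_mem (P m))), sub_zero]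
    · rintro _ ⟨g, hg, rfl⟩
      obtain ⟨hgV, _⟩ := Submodule.mem_inf.mp hg
      obtain ⟨m, hm, s, hs, rfl⟩ := Submodule.mem_sup.mp hgV
      exact ⟨m, hm, by rw [map_add, hBS s hs, add_zero]⟩
  have hImgG := isClosed_image_of_bdd_below (ContinuousLinearMap.adjoint B) G hGclosed c
    (fun x hx => hc x (Submodule.mem_inf.mp hx).2)
  have hImgM : IsClosed (ContinuousLinearMap.adjoint B ''
      (((LinearMap.ker A.toLinearMap)ᗮ : Submodule ℂ H) : Set H)) := by
    rw [himg]; exact hImgG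
  -- range of adjoint B' is closed
  have hB'adjRange : IsClosed (Set.range (ContinuousLinearMap.adjoint B')) := by
    have hpre : Set.range (ContinuousLinearMap.adjoint B') =
        Subtype.val ⁻¹' (ContinuousLinearMap.adjoint B ''
          (((LinearMap.ker A.toLinearMap)ᗮ : Submodule ℂ H) : Set H)) := by
      ext x
      constructor
      · rintro ⟨m, rfl⟩
        exact ⟨↑m, SetLike.coe_mem m, (hBadjM m)⟩
      · rintro ⟨m, hm, hx⟩
        refine ⟨⟨m, hm⟩, ?_⟩
        apply Subtype.ext
        rw [← hBadjM ⟨m, hm⟩]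
        exact hx
    rw [hpre]
    exact hImgM.preimage continuous_subtype_val
  have hB'range := range_adjoint_eq_of_isClosed (ContinuousLinearMap.adjoint B') hB'adjRange
  rw [adjoint_adjoint] at hB'range
  have hB'rc : IsClosed ((LinearMap.range B'.toLinearMap :
      Submodule ℂ (LinearMap.ker A.toLinearMap)ᗮ) : Set (LinearMap.ker A.toLinearMap)ᗮ) := by
    rw [hB'range]; exact Submodule.isClosed_orthogonal _
  -- closedness of range (A ∘L B)
  have hV₁closed : IsClosed (V₁ : Set H) := by
    rw [hV₁def, Submodule.map_coe]
    exact ((Submodule.isClosed_orthogonal _).isClosedEmbedding_subtypeVal.isClosedMap) _ hB'rc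
  obtain ⟨c₁, hc₁⟩ := bdd_below_of_isClosed_range A hAran
  have hV₁bdd : ∀ x ∈ V₁, ‖x‖ ≤ c₁ * ‖A x‖ := by
    rintro _ ⟨u, _, rfl⟩
    exact hc₁ _ (SetLike.coe_mem u)
  have goal1 : IsClosed (Set.range (A ∘L B)) := by
    rw [hrange]
    exact isClosed_image_of_bdd_below A V₁ hV₁closed c₁ hV₁bdd
  refine ⟨goal1, ?_⟩
  -- posinormality
  rw [range_adjoint_eq_of_isClosed (A ∘L B) goal1]
  rintro _ ⟨x, rfl⟩
  rw [Submodule.mem_orthogonal]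
  intro y hy
  have hy0 : A ↑(B' (Q y)) = 0 := by
    rw [← hABx y]
    exact LinearMap.mem_ker.mp hy
  have hB'Qy : B' (Q y) = 0 := by
    apply Subtype.ext
    rw [Submodule.coe_zero]
    have h2 : (↑(B' (Q y)) : H) ∈ ((LinearMap.ker A.toLinearMap)ᗮ)ᗮ := by
      rw [Submodule.orthogonal_orthogonal]
      exact LinearMap.mem_ker.mpr hy0
    exact mem_ker_inter_orthogonal_eq_zero (SetLike.coe_mem (B' (Q y))) h2
  have hB'adj0 : ContinuousLinearMap.adjoint B' (Q y) = 0 :=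
    ker_le_ker_adj B' hB'pos (Q y) hB'Qy
  have hBadjQy : ContinuousLinearMap.adjoint B ↑(Q y) = 0 := by
    rw [hBadjM (Q y), hB'adj0, Submodule.coe_zero]
  have hAy : ContinuousLinearMap.adjoint A y = ContinuousLinearMap.adjoint A ↑(Q y) := by
    conv_lhs => rw [show y = (y - ↑(Q y)) + ↑(Q y) by abel]
    rw [map_add, hAadjK _ (hQK y), zero_add]
  have hadjcomm : ContinuousLinearMap.adjoint B ∘L ContinuousLinearMap.adjoint A =
      ContinuousLinearMap.adjoint A ∘L ContinuousLinearMap.adjoint B := by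
    have := congrArg ContinuousLinearMap.adjoint hcomm
    rwa [adjoint_comp, adjoint_comp] at this
  have hadj0 : ContinuousLinearMap.adjoint (A ∘L B) y = 0 := by
    rw [adjoint_comp]
    calc (ContinuousLinearMap.adjoint B ∘L ContinuousLinearMap.adjoint A) y
        = (ContinuousLinearMap.adjoint B ∘L ContinuousLinearMap.adjoint A) ↑(Q y) := by
          rw [ContinuousLinearMap.comp_apply, ContinuousLinearMap.comp_apply, hAy]
      _ = (ContinuousLinearMap.adjoint A ∘L ContinuousLinearMap.adjoint B) ↑(Q y) := by
          rw [hadjcomm]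
      _ = 0 := by
          rw [ContinuousLinearMap.comp_apply, hBadjQy, map_zero]
  rw [ContinuousLinearMap.coe_coe, ← adjoint_inner_left, hadj0, inner_zero_left]
end

section
/- Let A and B be bounded linear operators on a complex Hilbert space H, both with closed range, satisfying R(A) ⊆ R(A*) and R(B) ⊆ R(B*). If N(A) = N(B), then the product AB has closed range and R(AB) ⊆ R((AB)*). -/
open ContinuousLinearMap

section Aux

variable {H : Type*} [NormedAddCommGroup H] [InnerProductSpace ℂ H] [CompleteSpace H]

local notation "⟪" x ", " y "⟫" => @inner ℂ _ _ x y

/-- For `T` with closed range: the restriction of `T` to `(ker T)ᗮ`, corestricted to its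
range, is a continuous linear equivalence. -/
noncomputable def closedRangeEquiv (T : H →L[ℂ] H) (hT : IsClosed (Set.range T)) :
    ((LinearMap.ker (T : H →ₗ[ℂ] H))ᗮ : Submodule ℂ H) ≃L[ℂ] (LinearMap.range (T : H →ₗ[ℂ] H) : Submodule ℂ H) := by
  haveI : CompleteSpace (LinearMap.range (T : H →ₗ[ℂ] H) : Submodule ℂ H) := by
    refine IsClosed.completeSpace_coe (hs := ?_)
    simpa [LinearMap.coe_range] using hT
  haveI : CompleteSpace ((LinearMap.ker (T : H →ₗ[ℂ] H))ᗮ : Submodule ℂ H) :=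
    (Submodule.isClosed_orthogonal _).completeSpace_coe
  refine ContinuousLinearEquiv.ofBijective
    ((T.comp (Submodule.subtypeL _)).codRestrict (LinearMap.range (T : H →ₗ[ℂ] H))
      (fun x => ⟨(x : H), rfl⟩)) ?_ ?_
  · rw [Submodule.eq_bot_iff]
    intro x hx
    have hx0 : T (x : H) = 0 := congrArg Subtype.val hx
    have hmem : (x : H) ∈ LinearMap.ker (T : H →ₗ[ℂ] H) := hx0
    have h0 := (Submodule.mem_orthogonal _ _).mp x.2 _ hmem
    have : (x : H) = 0 := by simpa [inner_self_eq_zero] using h0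
    exact Subtype.ext this
  · rw [LinearMap.range_eq_top]
    rintro ⟨y, x, rfl⟩
    haveI : Submodule.HasOrthogonalProjection (LinearMap.ker (T : H →ₗ[ℂ] H)) := by
      haveI : CompleteSpace (LinearMap.ker (T : H →ₗ[ℂ] H) : Submodule ℂ H) :=
        (ContinuousLinearMap.isClosed_ker T).completeSpace_coe
      infer_instance
    obtain ⟨u, hu, v, hv, rfl⟩ := (LinearMap.ker (T : H →ₗ[ℂ] H)).exists_add_mem_mem_orthogonal x
    refine ⟨⟨v, hv⟩, ?_⟩
    apply Subtype.ext
    have hu0 : T u = 0 := hu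
    simp [ContinuousLinearMap.coe_codRestrict_apply, map_add, hu0]
    rfl

/-- Bounded below on `(ker T)ᗮ`. -/
theorem exists_bound (T : H →L[ℂ] H) (hT : IsClosed (Set.range T)) :
    ∃ K : NNReal, ∀ x ∈ (LinearMap.ker (T : H →ₗ[ℂ] H))ᗮ, ‖x‖ ≤ K * ‖T x‖ := by
  set e := closedRangeEquiv T hT
  refine ⟨‖e.symm.toContinuousLinearMap‖₊, fun x hx => ?_⟩
  have h1 : e.symm (e ⟨x, hx⟩) = ⟨x, hx⟩ := e.symm_apply_apply _
  calc ‖x‖ = ‖((e.symm (e ⟨x, hx⟩) : ((LinearMap.ker (T : H →ₗ[ℂ] H))ᗮ : Submodule ℂ H)) : H)‖ := by rw [h1]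
    _ ≤ ‖e.symm.toContinuousLinearMap‖ * ‖e ⟨x, hx⟩‖ :=
        e.symm.toContinuousLinearMap.le_opNorm _
    _ = ‖e.symm.toContinuousLinearMap‖₊ * ‖T x‖ := by
        rw [show ‖e ⟨x, hx⟩‖ = ‖T x‖ from rfl, coe_nnnorm]

/-- The hard direction of the closed range theorem: if `R(T)` is closed then
`N(T)ᗮ ⊆ R(T*)`. -/
theorem orth_ker_le_range_adjoint (T : H →L[ℂ] H) (hT : IsClosed (Set.range T)) :
    ((LinearMap.ker (T : H →ₗ[ℂ] H))ᗮ : Submodule ℂ H) ≤ LinearMap.range ((ContinuousLinearMap.adjoint T : H →L[ℂ] H) : H →ₗ[ℂ] H) := by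
  haveI : CompleteSpace (LinearMap.range (T : H →ₗ[ℂ] H) : Submodule ℂ H) := by
    refine IsClosed.completeSpace_coe (hs := ?_)
    simpa [LinearMap.coe_range] using hT
  set e := closedRangeEquiv T hT with he
  intro y hy
  set φ : (LinearMap.range (T : H →ₗ[ℂ] H) : Submodule ℂ H) →L[ℂ] ℂ :=
    (innerSL ℂ y).comp ((Submodule.subtypeL _).comp
      e.symm.toContinuousLinearMap)
    with hφ
  set w₀ := (InnerProductSpace.toDual ℂ (LinearMap.range (T : H →ₗ[ℂ] H) : Submodule ℂ H)).symm φ with hw₀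
  refine ⟨(w₀ : H), ?_⟩
  apply ext_inner_right ℂ
  intro x
  rw [ContinuousLinearMap.coe_coe, ContinuousLinearMap.adjoint_inner_left]
  haveI : Submodule.HasOrthogonalProjection (LinearMap.ker (T : H →ₗ[ℂ] H)) := by
    haveI : CompleteSpace (LinearMap.ker (T : H →ₗ[ℂ] H) : Submodule ℂ H) :=
      (ContinuousLinearMap.isClosed_ker T).completeSpace_coe
    infer_instance
  obtain ⟨u, hu, v, hv, rfl⟩ := (LinearMap.ker (T : H →ₗ[ℂ] H)).exists_add_mem_mem_orthogonal x
  have hu0 : T u = 0 := hu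
  have hTx : T (u + v) = T v := by simp [map_add, hu0]
  set m : (LinearMap.range (T : H →ₗ[ℂ] H) : Submodule ℂ H) := ⟨T v, LinearMap.mem_range_self _ v⟩ with hm
  have hme : m = e ⟨v, hv⟩ := rfl
  have step1 : ⟪(w₀ : H), T (u + v)⟫ = ⟪w₀, m⟫ := by
    rw [hTx]; exact (Submodule.coe_inner _ w₀ m).symm
  have step2 : ⟪w₀, m⟫ = φ m := InnerProductSpace.toDual_symm_apply
  have step3 : φ m = ⟪y, v⟫ := by
    have hsm : e.symm.toContinuousLinearMap m = ⟨v, hv⟩ := by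
      rw [hme]
      simp only [ContinuousLinearEquiv.coe_coe]
      exact e.symm_apply_apply _
    rw [hφ]
    simp only [ContinuousLinearMap.comp_apply, Submodule.subtypeL_apply, hsm]
    rfl
  have step4 : ⟪y, u + v⟫ = ⟪y, v⟫ := by
    rw [inner_add_right, Submodule.inner_left_of_mem_orthogonal hu hy, zero_add]
  rw [step1, step2, step3, step4]

end Aux

/-- Proposition 4.5: If `A` and `B` are posinormal bounded operators with closed range
on a complex Hilbert space `H` (`R(A) ⊆ R(A*)`, `R(B) ⊆ R(B*)`) and `N(A) = N(B)`,
then `AB` has closed range and is posinormal (`R(AB) ⊆ R((AB)*)`). -/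
theorem stmt14 {H : Type*} [NormedAddCommGroup H] [InnerProductSpace ℂ H] [CompleteSpace H]
    (A B : H →L[ℂ] H)
    (hAran : IsClosed (Set.range A)) (hBran : IsClosed (Set.range B))
    (hA : LinearMap.range (A : H →ₗ[ℂ] H) ≤ LinearMap.range ((ContinuousLinearMap.adjoint A : H →L[ℂ] H) : H →ₗ[ℂ] H))
    (hB : LinearMap.range (B : H →ₗ[ℂ] H) ≤ LinearMap.range ((ContinuousLinearMap.adjoint B : H →L[ℂ] H) : H →ₗ[ℂ] H))
    (hker : LinearMap.ker (A : H →ₗ[ℂ] H) = LinearMap.ker (B : H →ₗ[ℂ] H)) :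
    IsClosed (Set.range (A ∘L B)) ∧
      LinearMap.range ((A ∘L B : H →L[ℂ] H) : H →ₗ[ℂ] H) ≤ LinearMap.range ((ContinuousLinearMap.adjoint (A ∘L B) : H →L[ℂ] H) : H →ₗ[ℂ] H) := by
  -- R(T*) ⊆ N(T)ᗮ always
  have hsub : ∀ T : H →L[ℂ] H,
      LinearMap.range ((ContinuousLinearMap.adjoint T : H →L[ℂ] H) : H →ₗ[ℂ] H) ≤ (LinearMap.ker (T : H →ₗ[ℂ] H))ᗮ := by
    rintro T y ⟨z, rfl⟩
    rw [Submodule.mem_orthogonal]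
    intro u hu
    rw [ContinuousLinearMap.coe_coe, ContinuousLinearMap.adjoint_inner_right]
    have : T u = 0 := hu
    simp [this]
  have hBorth : LinearMap.range (B : H →ₗ[ℂ] H) ≤ (LinearMap.ker (B : H →ₗ[ℂ] H))ᗮ := hB.trans (hsub B)
  have hAorth : LinearMap.range (A : H →ₗ[ℂ] H) ≤ (LinearMap.ker (A : H →ₗ[ℂ] H))ᗮ := hA.trans (hsub A)
  -- closedness of range (A ∘L B)
  obtain ⟨K, hK⟩ := exists_bound A hAran
  haveI : CompleteSpace (LinearMap.range (B : H →ₗ[ℂ] H) : Submodule ℂ H) := by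
    refine IsClosed.completeSpace_coe (hs := ?_)
    simpa [LinearMap.coe_range] using hBran
  set g : (LinearMap.range (B : H →ₗ[ℂ] H) : Submodule ℂ H) →L[ℂ] H :=
    A.comp (Submodule.subtypeL _) with hg
  have hanti : AntilipschitzWith K g := by
    apply g.antilipschitz_of_bound
    intro m
    refine hK (m : H) ?_
    rw [hker]
    exact hBorth m.2
  have hgrange : Set.range g = Set.range (A ∘L B) := by
    ext y
    constructor
    · rintro ⟨⟨_, x, rfl⟩, rfl⟩
      exact ⟨x, rfl⟩
    · rintro ⟨x, rfl⟩
      exact ⟨⟨B x, LinearMap.mem_range_self _ x⟩, rfl⟩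
  have hclosed : IsClosed (Set.range (A ∘L B)) := by
    rw [← hgrange]
    exact hanti.isClosed_range g.uniformContinuous
  refine ⟨hclosed, ?_⟩
  -- posinormality
  -- N(AB) = N(B)
  have hkerAB : LinearMap.ker ((A ∘L B : H →L[ℂ] H) : H →ₗ[ℂ] H) = LinearMap.ker (B : H →ₗ[ℂ] H) := by
    ext x
    simp only [LinearMap.mem_ker, ContinuousLinearMap.coe_coe, ContinuousLinearMap.coe_comp', Function.comp_apply]
    constructor
    · intro h
      have h1 : B x ∈ LinearMap.ker (B : H →ₗ[ℂ] H) := by rw [← hker]; exact h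
      have h2 : B x ∈ (LinearMap.ker (B : H →ₗ[ℂ] H))ᗮ := hBorth (LinearMap.mem_range_self _ x)
      have := (Submodule.mem_orthogonal _ _).mp h2 _ h1
      simpa [inner_self_eq_zero] using this
    · intro h
      rw [h, map_zero]
  rintro y ⟨x, rfl⟩
  apply orth_ker_le_range_adjoint (A ∘L B) hclosed
  rw [hkerAB, ← hker]
  exact hAorth ⟨B x, rfl⟩
end
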